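/- arXiv:2405.02836 — 4 statements merged into one kernel-verified Lean document; each statement's English description precedes it below -/
import Mathlib

section
/- Let R ∈ ℝ[[x_1,...,x_m]] be a formal power series with R(0)=0 and dR(0) ≠ 0, generating the principal ideal of a formal hypersurface Y ⊂ ℝ^m, and let A: (ℝ^s,0) → (ℝ^m,0) be any formal power series map. Then there exists a formal power series map Ã: (ℝ^s,0) → (ℝ^m,0) such that (1) R ∘ Ã = 0, and (2) each component of Ã − A belongs to the principal ideal of ℝ[[t_1,...,t_s]] generated by R ∘ A. -/
open MvPowerSeries Finsupp

/-- Formal partial derivative `∂_i` of a multivariate power series. -/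
noncomputable def psDeriv {σ K : Type*} [DecidableEq σ] [CommRing K]
    (i : σ) (f : MvPowerSeries σ K) : MvPowerSeries σ K :=
  fun α => ((α i + 1 : ℕ) : K) * MvPowerSeries.coeff (α + Finsupp.single i 1) f

/-- Application of a formal vector field `L = Σ L_j ∂_j` to a formal power series. -/
noncomputable def vfApply {m : ℕ} {K : Type*} [CommRing K]
    (L : Fin m → MvPowerSeries (Fin m) K) (f : MvPowerSeries (Fin m) K) :
    MvPowerSeries (Fin m) K :=
  ∑ j, L j * psDeriv j f

/-- A formal vector field is tangent to a formal submanifold given by an ideal `I`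
if it preserves `I`. -/
def VTangent {m : ℕ} {K : Type*} [CommRing K]
    (L : Fin m → MvPowerSeries (Fin m) K) (I : Ideal (MvPowerSeries (Fin m) K)) : Prop :=
  ∀ f ∈ I, vfApply L f ∈ I

/-- A manifold ideal of codimension `k`: generated by `k` series vanishing at `0`
with linearly independent differentials at `0`. -/
def IsManifoldIdeal {m : ℕ} {K : Type*} [Field K]
    (I : Ideal (MvPowerSeries (Fin m) K)) (k : ℕ) : Prop :=
  ∃ F : Fin k → MvPowerSeries (Fin m) K,
    I = Ideal.span (Set.range F) ∧
    (∀ j, MvPowerSeries.constantCoeff (F j) = 0) ∧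
    LinearIndependent K (fun j => fun i => MvPowerSeries.coeff (Finsupp.single i 1) (F j))

/-- Composition (substitution) `R ∘ A` of a formal power series `R` in `m` indeterminates
with an `m`-tuple `A` of formal power series (meaningful when each `A j` has zero constant
term, in which case only finitely many terms contribute to each coefficient). -/
noncomputable def psComp {m : ℕ} {τ : Type*} [Fintype τ] [DecidableEq τ] {K : Type*} [CommRing K]
    (A : Fin m → MvPowerSeries τ K) (R : MvPowerSeries (Fin m) K) : MvPowerSeries τ K :=
  fun β => ∑ α ∈ Finset.Iic (Finsupp.equivFunOnFinite.symm (fun _ : Fin m => β.sum fun _ k => k)),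
      MvPowerSeries.coeff α R * MvPowerSeries.coeff β (∏ j, (A j) ^ (α j))


open Finset
set_option linter.unusedSectionVars false
set_option linter.unusedVariables false

set_option linter.unusedSectionVars false
set_option linter.unusedVariables false


section
variable {σ : Type*} [Fintype σ] [DecidableEq σ] {K : Type*} [CommRing K]

def dg (β : σ →₀ ℕ) : ℕ := β.sum fun _ k => k

lemma dg_add (a b : σ →₀ ℕ) : dg (a + b) = dg a + dg b := by
  simp [dg, Finsupp.sum_add_index']

lemma dg_eq_sum (a : σ →₀ ℕ) : dg a = ∑ j, a j := by
  simp [dg, Finsupp.sum_fintype]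

lemma apply_le_dg (a : σ →₀ ℕ) (j : σ) : a j ≤ dg a := by
  rw [dg_eq_sum]
  exact Finset.single_le_sum (fun _ _ => Nat.zero_le _) (mem_univ j)

lemma dg_eq_zero {a : σ →₀ ℕ} (h : dg a = 0) : a = 0 := by
  ext j
  have := apply_le_dg a j
  simp only [Finsupp.coe_zero, Pi.zero_apply]
  omega

lemma dg_single (j : σ) (n : ℕ) : dg (Finsupp.single j n) = n := by
  simp [dg, Finsupp.sum_single_index]

/-- `En n f` : all coefficients of total degree `< n` vanish ("order at least n"). -/
def En (n : ℕ) (f : MvPowerSeries σ K) : Prop :=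
  ∀ β : σ →₀ ℕ, dg β < n → MvPowerSeries.coeff β f = 0

lemma En_mono {n n' : ℕ} {f : MvPowerSeries σ K} (h : n ≤ n') (hf : En n' f) : En n f :=
  fun β hβ => hf β (lt_of_lt_of_le hβ h)

lemma En_zero (n : ℕ) : En n (0 : MvPowerSeries σ K) := fun β _ => map_zero _

lemma En_zero' (f : MvPowerSeries σ K) : En 0 f := fun _ h => absurd h (Nat.not_lt_zero _)

lemma En_add {n : ℕ} {f g : MvPowerSeries σ K} (hf : En n f) (hg : En n g) : En n (f + g) :=
  fun β hβ => by rw [map_add, hf β hβ, hg β hβ, add_zero]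

lemma En_neg {n : ℕ} {f : MvPowerSeries σ K} (hf : En n f) : En n (-f) :=
  fun β hβ => by rw [map_neg, hf β hβ, neg_zero]

lemma En_sub {n : ℕ} {f g : MvPowerSeries σ K} (hf : En n f) (hg : En n g) : En n (f - g) := by
  rw [sub_eq_add_neg]; exact En_add hf (En_neg hg)

lemma En_mul {a b : ℕ} {f g : MvPowerSeries σ K} (hf : En a f) (hg : En b g) :
    En (a + b) (f * g) := by
  intro β hβ
  rw [MvPowerSeries.coeff_mul]
  apply Finset.sum_eq_zero
  rintro ⟨p1, p2⟩ hp
  rw [Finset.HasAntidiagonal.mem_antidiagonal] at hp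
  have hd : dg p1 + dg p2 = dg β := by rw [← dg_add, hp]
  rcases lt_or_ge (dg p1) a with h1 | h1
  · rw [hf p1 h1, zero_mul]
  · rw [hg p2 (by omega), mul_zero]

lemma En_mul_left {n : ℕ} {g : MvPowerSeries σ K} (f : MvPowerSeries σ K) (hg : En n g) :
    En n (f * g) := by
  simpa using En_mul (En_zero' f) hg

lemma En_mul_right {n : ℕ} {f : MvPowerSeries σ K} (g : MvPowerSeries σ K) (hf : En n f) :
    En n (f * g) := by
  simpa using En_mul hf (En_zero' g)

lemma En_pow {f : MvPowerSeries σ K} (hf : En 1 f) (k : ℕ) : En k (f ^ k) := by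
  induction k with
  | zero => exact En_zero' _
  | succ k ih => rw [pow_succ]; exact En_mul ih hf

lemma En_sum {n : ℕ} {ι : Type*} {t : Finset ι} {f : ι → MvPowerSeries σ K}
    (h : ∀ j ∈ t, En n (f j)) : En n (∑ j ∈ t, f j) := by
  intro β hβ
  rw [map_sum]
  exact Finset.sum_eq_zero fun j hj => h j hj β hβ

lemma En_prod {ι : Type*} {t : Finset ι} {w : ι → ℕ} {f : ι → MvPowerSeries σ K}
    (h : ∀ j ∈ t, En (w j) (f j)) : En (∑ j ∈ t, w j) (∏ j ∈ t, f j) := by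
  classical
  induction t using Finset.induction_on with
  | empty => simpa using En_zero' _
  | @insert a t' hj ih =>
      rw [Finset.sum_insert hj, Finset.prod_insert hj]
      exact En_mul (h a (mem_insert_self a t')) (ih fun j hjt => h j (mem_insert_of_mem hjt))

lemma En_one_iff {f : MvPowerSeries σ K} :
    En 1 f ↔ MvPowerSeries.constantCoeff f = 0 := by
  constructor
  · intro h
    rw [← MvPowerSeries.coeff_zero_eq_constantCoeff_apply]
    exact h 0 (by simp [dg])
  · intro h β hβ
    have : β = 0 := dg_eq_zero (by omega)
    rw [this, MvPowerSeries.coeff_zero_eq_constantCoeff_apply, h]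

lemma eq_zero_of_En {f : MvPowerSeries σ K} (h : ∀ n, En n f) : f = 0 := by
  ext β
  rw [map_zero]
  exact h (dg β + 1) β (Nat.lt_succ_self _)
end
noncomputable def cset (m : ℕ) (d : ℕ) : Finset (Fin m →₀ ℕ) :=
  Finset.Iic (Finsupp.equivFunOnFinite.symm (fun _ : Fin m => d))

lemma mem_cset {d : ℕ} {α : Fin m →₀ ℕ} (h : dg α ≤ d) : α ∈ cset m d := by
  simp only [cset, Finset.mem_Iic, Finsupp.le_def]
  intro j
  simpa using le_trans (apply_le_dg α j) h

lemma cset_mono {d d' : ℕ} (h : d ≤ d') : cset m d ⊆ cset m d' := by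
  apply Finset.Iic_subset_Iic.2
  rw [Finsupp.le_def]
  intro j
  simpa using h


section
variable {m s : ℕ}

lemma ord_prod (P : Fin m → MvPowerSeries (Fin s) ℝ)
    (hP : ∀ j, MvPowerSeries.constantCoeff (P j) = 0) (α : Fin m →₀ ℕ) :
    En (dg α) (∏ j, P j ^ α j) := by
  have := En_prod (t := univ) (w := fun j => α j) (f := fun j => P j ^ α j)
    (fun j _ => En_pow (En_one_iff.2 (hP j)) (α j))
  rwa [← dg_eq_sum] at this

lemma psComp_coeff (P : Fin m → MvPowerSeries (Fin s) ℝ) (R : MvPowerSeries (Fin m) ℝ)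
    (β : Fin s →₀ ℕ) :
    MvPowerSeries.coeff β (psComp P R) =
      ∑ α ∈ cset m (dg β), MvPowerSeries.coeff α R *
        MvPowerSeries.coeff β (∏ j, P j ^ α j) := rfl

lemma psComp_coeff_of_le (P : Fin m → MvPowerSeries (Fin s) ℝ) (R : MvPowerSeries (Fin m) ℝ)
    (hP : ∀ j, MvPowerSeries.constantCoeff (P j) = 0)
    {β : Fin s →₀ ℕ} {d : ℕ} (hd : dg β ≤ d) :
    MvPowerSeries.coeff β (psComp P R) =
      ∑ α ∈ cset m d, MvPowerSeries.coeff α R *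
        MvPowerSeries.coeff β (∏ j, P j ^ α j) := by
  rw [psComp_coeff]
  apply Finset.sum_subset (cset_mono hd)
  intro α _ hα
  have hdeg : dg β < dg α := by
    by_contra h
    exact hα (mem_cset (by omega))
  rw [ord_prod P hP α β hdeg, mul_zero]

lemma constantCoeff_psComp (P : Fin m → MvPowerSeries (Fin s) ℝ) (R : MvPowerSeries (Fin m) ℝ) :
    MvPowerSeries.constantCoeff (psComp P R) =
      MvPowerSeries.constantCoeff R := by
  rw [← MvPowerSeries.coeff_zero_eq_constantCoeff_apply, psComp_coeff]
  rw [Finset.sum_eq_single_of_mem 0 (mem_cset (by simp [dg]))]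
  · simp
  · intro α hα hne
    exfalso
    apply hne
    rw [cset, Finset.mem_Iic, Finsupp.le_def] at hα
    ext j
    have := hα j
    simpa [dg] using this

noncomputable def G (i : Fin m) (P Q : Fin m → MvPowerSeries (Fin s) ℝ) (α : Fin m →₀ ℕ) :
    MvPowerSeries (Fin s) ℝ :=
  (∑ k ∈ Finset.range (α i), (P i) ^ k * (Q i) ^ (α i - 1 - k)) *
    ∏ j ∈ Finset.univ.erase i, (P j) ^ (α j)

lemma ord_G (i : Fin m) (P Q : Fin m → MvPowerSeries (Fin s) ℝ)
    (hP : ∀ j, MvPowerSeries.constantCoeff (P j) = 0)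
    (hQ : MvPowerSeries.constantCoeff (Q i) = 0) (α : Fin m →₀ ℕ) :
    En (dg α - 1) (G i P Q α) := by
  by_cases h0 : α i = 0
  · rw [G, h0, Finset.range_zero, Finset.sum_empty, zero_mul]
    exact En_zero _
  · have h1 : 1 ≤ α i := Nat.one_le_iff_ne_zero.2 h0
    have hgeom : En (α i - 1) (∑ k ∈ Finset.range (α i), (P i) ^ k * (Q i) ^ (α i - 1 - k)) := by
      apply En_sum
      intro k hk
      have hk' : k < α i := Finset.mem_range.1 hk
      have h2 : En (k + (α i - 1 - k)) ((P i) ^ k * (Q i) ^ (α i - 1 - k)) :=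
        En_mul (En_pow (En_one_iff.2 (hP i)) k) (En_pow (En_one_iff.2 hQ) _)
      have h3 : k + (α i - 1 - k) = α i - 1 := by omega
      rwa [h3] at h2
    have hprod : En (∑ j ∈ Finset.univ.erase i, α j) (∏ j ∈ Finset.univ.erase i, (P j) ^ α j) :=
      En_prod (fun j _ => En_pow (En_one_iff.2 (hP j)) _)
    have hsum : α i + ∑ j ∈ Finset.univ.erase i, α j = dg α := by
      rw [dg_eq_sum]
      exact Finset.add_sum_erase Finset.univ (fun j => α j) (Finset.mem_univ i)
    have hle : α i ≤ dg α := apply_le_dg α i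
    have := En_mul hgeom hprod
    exact En_mono (by omega) this

lemma ord_G' (i : Fin m) (P Q : Fin m → MvPowerSeries (Fin s) ℝ)
    (hP : ∀ j, MvPowerSeries.constantCoeff (P j) = 0)
    (hQ : MvPowerSeries.constantCoeff (Q i) = 0) (α : Fin m →₀ ℕ)
    {β : Fin s →₀ ℕ} (h : dg β + 1 < dg α) :
    MvPowerSeries.coeff β (G i P Q α) = 0 :=
  ord_G i P Q hP hQ α β (by omega)

noncomputable def Dq (R : MvPowerSeries (Fin m) ℝ) (i : Fin m)
    (P Q : Fin m → MvPowerSeries (Fin s) ℝ) : MvPowerSeries (Fin s) ℝ :=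
  fun β => ∑ α ∈ cset m (dg β + 1),
    MvPowerSeries.coeff α R * MvPowerSeries.coeff β (G i P Q α)

lemma Dq_coeff (R : MvPowerSeries (Fin m) ℝ) (i : Fin m)
    (P Q : Fin m → MvPowerSeries (Fin s) ℝ) (β : Fin s →₀ ℕ) :
    MvPowerSeries.coeff β (Dq R i P Q) =
      ∑ α ∈ cset m (dg β + 1),
        MvPowerSeries.coeff α R * MvPowerSeries.coeff β (G i P Q α) := rfl

lemma prod_sub_prod (i : Fin m) (P Q : Fin m → MvPowerSeries (Fin s) ℝ)
    (hPQ : ∀ j, j ≠ i → P j = Q j) (α : Fin m →₀ ℕ) :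
    (∏ j, (P j) ^ α j) - ∏ j, (Q j) ^ α j = (P i - Q i) * G i P Q α := by
  rw [← Finset.mul_prod_erase Finset.univ (fun j => (P j) ^ α j) (Finset.mem_univ i),
      ← Finset.mul_prod_erase Finset.univ (fun j => (Q j) ^ α j) (Finset.mem_univ i)]
  have h : ∏ j ∈ Finset.univ.erase i, (Q j) ^ α j = ∏ j ∈ Finset.univ.erase i, (P j) ^ α j :=
    Finset.prod_congr rfl fun j hj => by rw [hPQ j (Finset.ne_of_mem_erase hj)]
  rw [h, ← sub_mul, ← geom_sum₂_mul (P i) (Q i) (α i), G]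
  ring

lemma key_lipschitz (R : MvPowerSeries (Fin m) ℝ) (i : Fin m)
    (P Q : Fin m → MvPowerSeries (Fin s) ℝ)
    (hP : ∀ j, MvPowerSeries.constantCoeff (P j) = 0)
    (hQ : ∀ j, MvPowerSeries.constantCoeff (Q j) = 0)
    (hPQ : ∀ j, j ≠ i → P j = Q j) :
    psComp P R - psComp Q R = (P i - Q i) * Dq R i P Q := by
  ext β
  rw [map_sub, psComp_coeff_of_le P R hP (Nat.le_succ (dg β)),
      psComp_coeff_of_le Q R hQ (Nat.le_succ (dg β)), ← Finset.sum_sub_distrib]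
  have lhs : ∀ α ∈ cset m (dg β + 1),
      MvPowerSeries.coeff α R * MvPowerSeries.coeff β (∏ j, (P j) ^ α j) -
        MvPowerSeries.coeff α R * MvPowerSeries.coeff β (∏ j, (Q j) ^ α j)
      = MvPowerSeries.coeff α R *
          MvPowerSeries.coeff β ((P i - Q i) * G i P Q α) := by
    intro α _
    rw [← mul_sub, ← map_sub, prod_sub_prod i P Q hPQ α]
  rw [Finset.sum_congr rfl lhs, MvPowerSeries.coeff_mul]
  have step : ∀ p ∈ Finset.HasAntidiagonal.antidiagonal β,
      MvPowerSeries.coeff p.1 (P i - Q i) * MvPowerSeries.coeff p.2 (Dq R i P Q)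
      = MvPowerSeries.coeff p.1 (P i - Q i) *
        ∑ α ∈ cset m (dg β + 1),
          MvPowerSeries.coeff α R * MvPowerSeries.coeff p.2 (G i P Q α) := by
    intro p hp
    rw [Finset.HasAntidiagonal.mem_antidiagonal] at hp
    by_cases h1 : p.1 = 0
    · have hc : MvPowerSeries.coeff p.1 (P i - Q i) = 0 := by
        rw [h1, MvPowerSeries.coeff_zero_eq_constantCoeff_apply, map_sub, hP i, hQ i, sub_zero]
      simp [hc]
    · congr 1
      rw [Dq_coeff]
      have hd : dg p.1 + dg p.2 = dg β := by rw [← dg_add, hp]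
      have hd1 : dg p.1 ≠ 0 := fun h => h1 (dg_eq_zero h)
      apply Finset.sum_subset (cset_mono (by omega))
      intro α _ hnot
      have hdeg : dg p.2 + 1 < dg α := by
        by_contra h
        exact hnot (mem_cset (by omega))
      rw [ord_G' i P Q hP (hQ i) α hdeg, mul_zero]
  rw [Finset.sum_congr rfl step]
  simp only [MvPowerSeries.coeff_mul, Finset.mul_sum, Finset.sum_mul]
  rw [Finset.sum_comm]
  apply Finset.sum_congr rfl
  intro α _
  apply Finset.sum_congr rfl
  intro p _
  ring

lemma constantCoeff_G (i : Fin m) (P Q : Fin m → MvPowerSeries (Fin s) ℝ)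
    (hP : ∀ j, MvPowerSeries.constantCoeff (P j) = 0)
    (hQ : MvPowerSeries.constantCoeff (Q i) = 0) (α : Fin m →₀ ℕ) :
    MvPowerSeries.constantCoeff (G i P Q α) =
      if α = Finsupp.single i 1 then 1 else 0 := by
  rw [G, map_mul, map_sum, map_prod]
  simp_rw [map_mul, map_pow, hP, hQ]
  by_cases hs : α = Finsupp.single i 1
  · rw [if_pos hs, hs]
    rw [Finsupp.single_eq_same]
    rw [Finset.range_one, Finset.sum_singleton]
    have hpr : ∏ j ∈ Finset.univ.erase i, (0 : ℝ) ^
        ((Finsupp.single i 1) j) = 1 := by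
      apply Finset.prod_eq_one
      intro j hj
      rw [Finsupp.single_eq_of_ne' (Ne.symm (Finset.ne_of_mem_erase hj)), pow_zero]
    rw [hpr]
    norm_num
  · rw [if_neg hs]
    by_cases hj : ∃ j ∈ Finset.univ.erase i, α j ≠ 0
    · obtain ⟨j, hj1, hj2⟩ := hj
      exact mul_eq_zero_of_right _ (Finset.prod_eq_zero hj1 (zero_pow hj2))
    · push_neg at hj
      apply mul_eq_zero_of_left
      apply Finset.sum_eq_zero
      intro k hk
      rw [Finset.mem_range] at hk
      by_cases hk0 : k = 0
      · subst hk0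
        rw [pow_zero, one_mul]
        apply zero_pow
        have hne1 : α i ≠ 1 := by
          intro h1
          apply hs
          ext j
          rcases eq_or_ne j i with rfl | hji
          · rw [h1, Finsupp.single_eq_same]
          · rw [Finsupp.single_eq_of_ne' (Ne.symm hji)]
            exact hj j (Finset.mem_erase.2 ⟨hji, Finset.mem_univ j⟩)
        omega
      · exact mul_eq_zero_of_left (zero_pow hk0) _

lemma constantCoeff_Dq (R : MvPowerSeries (Fin m) ℝ) (i : Fin m)
    (P Q : Fin m → MvPowerSeries (Fin s) ℝ)
    (hP : ∀ j, MvPowerSeries.constantCoeff (P j) = 0)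
    (hQ : MvPowerSeries.constantCoeff (Q i) = 0) :
    MvPowerSeries.constantCoeff (Dq R i P Q) =
      MvPowerSeries.coeff (Finsupp.single i 1) R := by
  rw [← MvPowerSeries.coeff_zero_eq_constantCoeff_apply, Dq_coeff]
  have hmem : (Finsupp.single i 1) ∈ cset m (dg (0 : Fin s →₀ ℕ) + 1) := by
    apply mem_cset
    simp [dg_single, dg]
  rw [Finset.sum_eq_single_of_mem _ hmem]
  · rw [MvPowerSeries.coeff_zero_eq_constantCoeff_apply, constantCoeff_G i P Q hP hQ,
      if_pos rfl, mul_one]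
  · intro α _ hne
    rw [MvPowerSeries.coeff_zero_eq_constantCoeff_apply, constantCoeff_G i P Q hP hQ,
      if_neg hne, mul_zero]

lemma G_sub (i : Fin m) (P P' Q : Fin m → MvPowerSeries (Fin s) ℝ)
    (hPP' : ∀ j, j ≠ i → P j = P' j) (α : Fin m →₀ ℕ) :
    ∃ W : MvPowerSeries (Fin s) ℝ, G i P Q α - G i P' Q α = W * (P i - P' i) := by
  refine ⟨(∑ k ∈ Finset.range (α i),
      (∑ l ∈ Finset.range k, (P i) ^ l * (P' i) ^ (k - 1 - l)) * (Q i) ^ (α i - 1 - k)) *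
      ∏ j ∈ Finset.univ.erase i, (P j) ^ (α j), ?_⟩
  rw [G, G]
  have h : ∏ j ∈ Finset.univ.erase i, (P' j) ^ α j = ∏ j ∈ Finset.univ.erase i, (P j) ^ α j :=
    Finset.prod_congr rfl fun j hj => by rw [hPP' j (Finset.ne_of_mem_erase hj)]
  rw [h, ← sub_mul, ← Finset.sum_sub_distrib]
  have hterm : ∀ k ∈ Finset.range (α i),
      (P i) ^ k * (Q i) ^ (α i - 1 - k) - (P' i) ^ k * (Q i) ^ (α i - 1 - k)
      = ((∑ l ∈ Finset.range k, (P i) ^ l * (P' i) ^ (k - 1 - l)) * (Q i) ^ (α i - 1 - k)) *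
          (P i - P' i) := by
    intro k _
    rw [← sub_mul, ← geom_sum₂_mul (P i) (P' i) k]
    ring
  rw [Finset.sum_congr rfl hterm, ← Finset.sum_mul]
  ring

lemma Dq_congr (R : MvPowerSeries (Fin m) ℝ) (i : Fin m)
    (P P' Q : Fin m → MvPowerSeries (Fin s) ℝ)
    (hPP' : ∀ j, j ≠ i → P j = P' j) {n : ℕ} (hE : En n (P i - P' i)) :
    En n (Dq R i P Q - Dq R i P' Q) := by
  intro β hβ
  rw [map_sub, Dq_coeff, Dq_coeff, ← Finset.sum_sub_distrib]
  apply Finset.sum_eq_zero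
  intro α _
  rw [← mul_sub, ← map_sub]
  obtain ⟨W, hW⟩ := G_sub i P P' Q hPP' α
  rw [hW, En_mul_left W hE β hβ, mul_zero]

noncomputable def shiftF (A : Fin m → MvPowerSeries (Fin s) ℝ) (i : Fin m)
    (D : MvPowerSeries (Fin s) ℝ) : Fin m → MvPowerSeries (Fin s) ℝ :=
  Function.update A i (A i + D)

lemma shiftF_same (A : Fin m → MvPowerSeries (Fin s) ℝ) (i : Fin m)
    (D : MvPowerSeries (Fin s) ℝ) : shiftF A i D i = A i + D :=
  Function.update_self i _ A

lemma shiftF_ne (A : Fin m → MvPowerSeries (Fin s) ℝ) (i : Fin m)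
    (D : MvPowerSeries (Fin s) ℝ) {j : Fin m} (hj : j ≠ i) : shiftF A i D j = A j :=
  Function.update_of_ne hj _ A

noncomputable def qq (R : MvPowerSeries (Fin m) ℝ) (A : Fin m → MvPowerSeries (Fin s) ℝ)
    (i : Fin m) (D : MvPowerSeries (Fin s) ℝ) : MvPowerSeries (Fin s) ℝ :=
  Dq R i (shiftF A i D) A

noncomputable def phi (R : MvPowerSeries (Fin m) ℝ) (A : Fin m → MvPowerSeries (Fin s) ℝ)
    (i : Fin m) (D : MvPowerSeries (Fin s) ℝ) : MvPowerSeries (Fin s) ℝ :=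
  -(psComp A R * (qq R A i D)⁻¹)

lemma phi_def (R : MvPowerSeries (Fin m) ℝ) (A : Fin m → MvPowerSeries (Fin s) ℝ)
    (i : Fin m) (D : MvPowerSeries (Fin s) ℝ) :
    phi R A i D = -(psComp A R * (qq R A i D)⁻¹) := rfl

noncomputable def seqD (R : MvPowerSeries (Fin m) ℝ) (A : Fin m → MvPowerSeries (Fin s) ℝ)
    (i : Fin m) : ℕ → MvPowerSeries (Fin s) ℝ
  | 0 => 0
  | n + 1 => phi R A i (seqD R A i n)

lemma seqD_zero (R : MvPowerSeries (Fin m) ℝ) (A : Fin m → MvPowerSeries (Fin s) ℝ)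
    (i : Fin m) : seqD R A i 0 = 0 := rfl

lemma seqD_succ (R : MvPowerSeries (Fin m) ℝ) (A : Fin m → MvPowerSeries (Fin s) ℝ)
    (i : Fin m) (n : ℕ) : seqD R A i (n + 1) = phi R A i (seqD R A i n) := rfl

noncomputable def Dinf (R : MvPowerSeries (Fin m) ℝ) (A : Fin m → MvPowerSeries (Fin s) ℝ)
    (i : Fin m) : MvPowerSeries (Fin s) ℝ :=
  fun β => seqD R A i (dg β) β

theorem stmt_3_aux {m s : ℕ} (R : MvPowerSeries (Fin m) ℝ)
    (hR0 : MvPowerSeries.constantCoeff R = 0)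
    (hdR : ∃ i, MvPowerSeries.coeff (Finsupp.single i 1) R ≠ 0)
    (A : Fin m → MvPowerSeries (Fin s) ℝ)
    (hA : ∀ j, MvPowerSeries.constantCoeff (A j) = 0) :
    ∃ At : Fin m → MvPowerSeries (Fin s) ℝ,
      (∀ j, MvPowerSeries.constantCoeff (At j) = 0) ∧
      psComp At R = 0 ∧
      ∀ j, At j - A j ∈ Ideal.span {psComp A R} := by
  classical
  obtain ⟨i, hc⟩ := hdR
  have hcce : MvPowerSeries.constantCoeff (psComp A R) = 0 := by
    rw [constantCoeff_psComp, hR0]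
  have hce1 : En 1 (psComp A R) := En_one_iff.2 hcce
  -- constant coefficients of shifted families
  have hccsh : ∀ D, MvPowerSeries.constantCoeff D = 0 →
      ∀ j, MvPowerSeries.constantCoeff (shiftF A i D j) = 0 := by
    intro D hD j
    rcases eq_or_ne j i with rfl | hj
    · rw [shiftF_same, map_add, hA, hD, add_zero]
    · rw [shiftF_ne A i D hj]; exact hA j
  -- constant coefficient of qq
  have hqcc : ∀ D, MvPowerSeries.constantCoeff D = 0 →
      MvPowerSeries.constantCoeff (qq R A i D) =
        MvPowerSeries.coeff (Finsupp.single i 1) R := fun D hD =>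
    constantCoeff_Dq R i _ A (hccsh D hD) (hA i)
  -- invertibility of qq
  have hqinv : ∀ D, MvPowerSeries.constantCoeff D = 0 →
      qq R A i D * (qq R A i D)⁻¹ = 1 := fun D hD =>
    MvPowerSeries.mul_inv_cancel _ (by rw [hqcc D hD]; exact hc)
  -- the key Taylor identity
  have hkeyD : ∀ D, MvPowerSeries.constantCoeff D = 0 →
      psComp (shiftF A i D) R = psComp A R + D * qq R A i D := by
    intro D hD
    have hk := key_lipschitz R i (shiftF A i D) A (hccsh D hD) hA
      (fun j hj => shiftF_ne A i D hj)
    rw [shiftF_same] at hk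
    have h5 : A i + D - A i = D := by ring
    rw [h5] at hk
    rw [sub_eq_iff_eq_add] at hk
    rw [hk, qq]
    ring
  -- phi keeps constant coefficient zero
  have hccphi : ∀ D, MvPowerSeries.constantCoeff (phi R A i D) = 0 := by
    intro D
    rw [phi_def, map_neg, map_mul, hcce, zero_mul, neg_zero]
  -- contraction
  have hcontr : ∀ D D', MvPowerSeries.constantCoeff D = 0 →
      MvPowerSeries.constantCoeff D' = 0 →
      ∀ n, En n (D - D') → En (n + 1) (phi R A i D - phi R A i D') := by
    intro D D' hD hD' n hE
    have hqd : En n (qq R A i D - qq R A i D') := by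
      apply Dq_congr R i (shiftF A i D) (shiftF A i D') A
        (fun j hj => by rw [shiftF_ne A i D hj, shiftF_ne A i D' hj])
      rw [shiftF_same, shiftF_same]
      have h5 : A i + D - (A i + D') = D - D' := by ring
      rwa [h5]
    have hid : phi R A i D - phi R A i D' =
        psComp A R * ((qq R A i D')⁻¹ * (qq R A i D - qq R A i D') * (qq R A i D)⁻¹) := by
      have h1' := hqinv D hD
      have h2' := hqinv D' hD'
      rw [phi_def, phi_def]
      linear_combination (- (psComp A R * (qq R A i D')⁻¹)) * h1' +
        (psComp A R * (qq R A i D)⁻¹) * h2'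
    rw [hid]
    have hinner : En n ((qq R A i D')⁻¹ * (qq R A i D - qq R A i D') * (qq R A i D)⁻¹) :=
      En_mul_right _ (En_mul_left _ hqd)
    exact En_mono (by omega) (En_mul hce1 hinner)
  -- Newton decrease
  have hnewton : ∀ D, MvPowerSeries.constantCoeff D = 0 →
      ∀ k, En k (psComp (shiftF A i D) R) →
        En (k + 1) (psComp (shiftF A i (phi R A i D)) R) := by
    intro D hD k hk
    have hkey2 : psComp (shiftF A i (phi R A i D)) R - psComp (shiftF A i D) R
        = (phi R A i D - D) * Dq R i (shiftF A i (phi R A i D)) (shiftF A i D) := by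
      have hk2 := key_lipschitz R i (shiftF A i (phi R A i D)) (shiftF A i D)
        (hccsh _ (hccphi D)) (hccsh D hD)
        (fun j hj => by rw [shiftF_ne A i _ hj, shiftF_ne A i _ hj])
      rw [shiftF_same, shiftF_same] at hk2
      have h5 : A i + phi R A i D - (A i + D) = phi R A i D - D := by ring
      rwa [h5] at hk2
    have hccq2 : MvPowerSeries.constantCoeff
        (Dq R i (shiftF A i (phi R A i D)) (shiftF A i D)) =
        MvPowerSeries.coeff (Finsupp.single i 1) R := by
      apply constantCoeff_Dq R i _ _ (hccsh _ (hccphi D))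
      rw [shiftF_same, map_add, hA, hD, add_zero]
    have hE1 : En 1 (qq R A i D - Dq R i (shiftF A i (phi R A i D)) (shiftF A i D)) :=
      En_one_iff.2 (by rw [map_sub, hqcc D hD, hccq2, sub_self])
    have hmain : psComp (shiftF A i (phi R A i D)) R
        = (psComp (shiftF A i D) R * (qq R A i D)⁻¹) *
          (qq R A i D - Dq R i (shiftF A i (phi R A i D)) (shiftF A i D)) := by
      have hrD := hkeyD D hD
      have hinv := hqinv D hD
      have hphi := phi_def R A i D
      linear_combination hkey2 +
        ((qq R A i D)⁻¹ * Dq R i (shiftF A i (phi R A i D)) (shiftF A i D)) * hrD +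
        (D * Dq R i (shiftF A i (phi R A i D)) (shiftF A i D) -
          psComp (shiftF A i D) R) * hinv +
        (Dq R i (shiftF A i (phi R A i D)) (shiftF A i D)) * hphi
    rw [hmain]
    exact En_mul (En_mul_right _ hk) hE1
  -- basic facts about the sequence
  have hccseq : ∀ n, MvPowerSeries.constantCoeff (seqD R A i n) = 0 := by
    intro n
    cases n with
    | zero => rw [seqD_zero]; exact map_zero _
    | succ n => rw [seqD_succ]; exact hccphi _
  have hshift0 : shiftF A i (seqD R A i 0) = A := by
    funext j
    rcases eq_or_ne j i with rfl | hj
    · rw [shiftF_same, seqD_zero, add_zero]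
    · rw [shiftF_ne A i _ hj]
  have hrseq : ∀ n, En (n + 1) (psComp (shiftF A i (seqD R A i n)) R) := by
    intro n
    induction n with
    | zero => rw [hshift0]; exact hce1
    | succ n ih =>
        rw [seqD_succ]
        exact hnewton _ (hccseq n) (n + 1) ih
  have hspan : ∀ n, seqD R A i n ∈ Ideal.span {psComp A R} := by
    intro n
    cases n with
    | zero => rw [seqD_zero]; exact Ideal.zero_mem _
    | succ n =>
        rw [seqD_succ]
        exact Ideal.mem_span_singleton.2 ⟨-((qq R A i (seqD R A i n))⁻¹), by rw [phi_def]; ring⟩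
  have hdiff : ∀ n, En (n + 1) (seqD R A i (n + 1) - seqD R A i n) := by
    intro n
    induction n with
    | zero =>
        rw [seqD_succ, seqD_zero, sub_zero, phi_def]
        exact En_neg (En_mul_right _ hce1)
    | succ n ih =>
        rw [seqD_succ, seqD_succ]
        exact hcontr _ _ (hccseq (n + 1)) (hccseq n) (n + 1) ih
  have hstab : ∀ n (β : Fin s →₀ ℕ), dg β ≤ n → seqD R A i n β = seqD R A i (dg β) β := by
    intro n
    induction n with
    | zero =>
        intro β hβ
        have h0 : dg β = 0 := Nat.le_antisymm hβ (Nat.zero_le _)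
        rw [h0]
    | succ n ih =>
        intro β hβ
        rcases Nat.lt_or_ge (dg β) (n + 1) with h | h
        · have heq : seqD R A i (n + 1) β = seqD R A i n β := by
            have hd := hdiff n β (by omega)
            rw [map_sub, sub_eq_zero] at hd
            simpa [MvPowerSeries.coeff_apply] using hd
          rw [heq]
          exact ih β (by omega)
        · have h0 : dg β = n + 1 := Nat.le_antisymm hβ h
          rw [h0]
  have hDsub : ∀ n, En (n + 1) (Dinf R A i - seqD R A i n) := by
    intro n β hβ
    rw [map_sub, MvPowerSeries.coeff_apply, MvPowerSeries.coeff_apply]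
    show Dinf R A i β - seqD R A i n β = 0
    rw [Dinf, hstab n β (by omega), sub_self]
  have hccD : MvPowerSeries.constantCoeff (Dinf R A i) = 0 := by
    rw [← MvPowerSeries.coeff_zero_eq_constantCoeff_apply, MvPowerSeries.coeff_apply]
    show seqD R A i (dg (0 : Fin s →₀ ℕ)) 0 = 0
    have h0 : dg (0 : Fin s →₀ ℕ) = 0 := by simp [dg]
    rw [h0, seqD_zero]
    rfl
  have hfix : phi R A i (Dinf R A i) = Dinf R A i := by
    have hEn : ∀ n, En (n + 1) (phi R A i (Dinf R A i) - Dinf R A i) := by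
      intro n
      have e1 : En (n + 1) (phi R A i (Dinf R A i) - phi R A i (seqD R A i n)) :=
        hcontr _ _ hccD (hccseq n) n (En_mono (Nat.le_succ n) (hDsub n))
      have e2 : En (n + 1) (seqD R A i (n + 1) - Dinf R A i) := by
        have := En_neg (En_mono (Nat.le_succ (n + 1)) (hDsub (n + 1)))
        rwa [neg_sub] at this
      have hsplit : phi R A i (Dinf R A i) - Dinf R A i =
          (phi R A i (Dinf R A i) - phi R A i (seqD R A i n)) +
            (seqD R A i (n + 1) - Dinf R A i) := by
        rw [seqD_succ]; ring
      rw [hsplit]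
      exact En_add e1 e2
    have h0 : phi R A i (Dinf R A i) - Dinf R A i = 0 :=
      eq_zero_of_En (fun n => En_mono (Nat.le_succ n) (hEn n))
    rwa [sub_eq_zero] at h0
  have hfinal0 : psComp (shiftF A i (Dinf R A i)) R = 0 := by
    apply eq_zero_of_En
    intro n
    apply En_mono (Nat.le_succ n)
    have hk := key_lipschitz R i (shiftF A i (Dinf R A i)) (shiftF A i (seqD R A i n))
      (hccsh _ hccD) (hccsh _ (hccseq n))
      (fun j hj => by rw [shiftF_ne A i _ hj, shiftF_ne A i _ hj])
    rw [shiftF_same, shiftF_same] at hk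
    have h5 : A i + Dinf R A i - (A i + seqD R A i n) = Dinf R A i - seqD R A i n := by ring
    rw [h5] at hk
    have e1 : En (n + 1) (psComp (shiftF A i (Dinf R A i)) R -
        psComp (shiftF A i (seqD R A i n)) R) := by
      rw [hk]
      exact En_mul_right _ (hDsub n)
    have := En_add e1 (hrseq n)
    rwa [sub_add_cancel] at this
  have hmem : Dinf R A i ∈ Ideal.span {psComp A R} := by
    rw [← hfix, phi_def]
    exact Ideal.mem_span_singleton.2 ⟨-((qq R A i (Dinf R A i))⁻¹), by ring⟩
  refine ⟨shiftF A i (Dinf R A i), hccsh _ hccD, hfinal0, ?_⟩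
  intro j
  rcases eq_or_ne j i with rfl | hj
  · rw [shiftF_same]
    have h5 : A j + Dinf R A j - A j = Dinf R A j := by ring
    rw [h5]
    exact hmem
  · rw [shiftF_ne A i _ hj, sub_self]
    exact Ideal.zero_mem _

end

/-- A formal map can be corrected to a formal map into the hypersurface `{R = 0}`,
with the correction controlled by the defect `R ∘ A`. -/
theorem stmt_3 {m s : ℕ} (R : MvPowerSeries (Fin m) ℝ)
    (hR0 : MvPowerSeries.constantCoeff R = 0)
    (hdR : ∃ i, MvPowerSeries.coeff (Finsupp.single i 1) R ≠ 0)
    (A : Fin m → MvPowerSeries (Fin s) ℝ)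
    (hA : ∀ j, MvPowerSeries.constantCoeff (A j) = 0) :
    ∃ At : Fin m → MvPowerSeries (Fin s) ℝ,
      (∀ j, MvPowerSeries.constantCoeff (At j) = 0) ∧
      psComp At R = 0 ∧
      ∀ j, At j - A j ∈ Ideal.span {psComp A R} :=
  stmt_3_aux R hR0 hdR A hA
end

section
/- Let X ⊂ Y ⊂ ℝ^m be real formal submanifolds given by manifold ideals I(Y) ⊂ I(X) ⊂ ℝ[[x]]. Fix integers 0 < k' ≤ k'' and F ∈ I(X)^{k''} + I(Y). Assume that for all real formal vector fields L^{k'},...,L^1 tangent to Y (i.e., preserving I(Y)), the iterated derivative L^{k'} ⋯ L^1 F lies in I(X)^{k''−k'+1} + I(Y). Then F ∈ I(X)^{k''+1} + I(Y). -/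
open MvPowerSeries Finsupp

lemma coeff_psDeriv {σ K : Type*} [DecidableEq σ] [CommRing K] (i : σ) (f : MvPowerSeries σ K) (α : σ →₀ ℕ) :
    MvPowerSeries.coeff α (psDeriv i f) =
      ((α i + 1 : ℕ) : K) * MvPowerSeries.coeff (α + Finsupp.single i 1) f := rfl

section A
variable {σ : Type*} [DecidableEq σ] {K : Type*} [CommRing K]

lemma antidiag_swap (n : σ →₀ ℕ) (F : (σ →₀ ℕ) → (σ →₀ ℕ) → K) :
    ∑ p ∈ Finset.HasAntidiagonal.antidiagonal n, F p.1 p.2 = ∑ p ∈ Finset.HasAntidiagonal.antidiagonal n, F p.2 p.1 := by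
  apply Finset.sum_nbij' (i := fun p => (p.2, p.1)) (j := fun p => (p.2, p.1)) <;>
    simp [Finset.mem_antidiagonal, add_comm]

lemma psDeriv_mul (i : σ) (f g : MvPowerSeries σ K) :
    psDeriv i (f * g) = psDeriv i f * g + f * psDeriv i g := by
  ext α
  set e := Finsupp.single i 1 with he_def
  have main : ∀ h : (σ →₀ ℕ) → (σ →₀ ℕ) → K,
      (∑ p ∈ Finset.HasAntidiagonal.antidiagonal (α + e), (p.1 i : K) * h p.1 p.2)
        = ∑ p ∈ Finset.HasAntidiagonal.antidiagonal α, ((p.1 i + 1 : ℕ) : K) * h (p.1 + e) p.2 := by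
    intro h
    rw [← Finset.sum_filter_add_sum_filter_not (Finset.HasAntidiagonal.antidiagonal (α+e)) (fun p => p.1 i ≠ 0)]
    have h2 : ∑ p ∈ (Finset.HasAntidiagonal.antidiagonal (α+e)).filter (fun p => ¬ p.1 i ≠ 0),
        (p.1 i : K) * h p.1 p.2 = 0 := by
      apply Finset.sum_eq_zero
      intro p hp
      simp only [Finset.mem_filter, ne_eq, not_not] at hp
      simp [hp.2]
    rw [h2, add_zero]
    apply Finset.sum_nbij' (i := fun p => (p.1 - e, p.2)) (j := fun q => (q.1 + e, q.2))
    · intro p hp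
      simp only [Finset.mem_filter, Finset.HasAntidiagonal.mem_antidiagonal, ne_eq, not_not] at hp ⊢
      obtain ⟨hsum, hne⟩ := hp
      have hle : e ≤ p.1 := by
        rw [he_def, Finsupp.single_le_iff]
        exact Nat.one_le_iff_ne_zero.mpr hne
      have hc : p.1 - e + e = p.1 := tsub_add_cancel_of_le hle
      have : (p.1 - e + p.2) + e = α + e := by
        rw [add_right_comm, hc, hsum]
      exact add_right_cancel this
    · intro q hq
      simp only [Finset.HasAntidiagonal.mem_antidiagonal] at hq
      simp only [Finset.mem_filter, Finset.HasAntidiagonal.mem_antidiagonal, ne_eq, not_not]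
      constructor
      · rw [add_right_comm, hq]
      · simp [he_def, Finsupp.add_apply]
    · intro p hp
      simp only [Finset.mem_filter, Finset.HasAntidiagonal.mem_antidiagonal, ne_eq, not_not] at hp
      obtain ⟨hsum, hne⟩ := hp
      have hle : e ≤ p.1 := by
        rw [he_def, Finsupp.single_le_iff]
        exact Nat.one_le_iff_ne_zero.mpr hne
      simp [tsub_add_cancel_of_le hle]
    · intro q hq
      simp
    · intro p hp
      simp only [Finset.mem_filter, Finset.HasAntidiagonal.mem_antidiagonal, ne_eq, not_not] at hp
      obtain ⟨hsum, hne⟩ := hp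
      have hle : e ≤ p.1 := by
        rw [he_def, Finsupp.single_le_iff]
        exact Nat.one_le_iff_ne_zero.mpr hne
      have h1 : ((p.1 - e) i + 1 : ℕ) = p.1 i := by
        rw [Finsupp.tsub_apply, he_def, Finsupp.single_eq_same]
        exact Nat.succ_pred_eq_of_pos (Nat.pos_of_ne_zero hne)
      rw [tsub_add_cancel_of_le hle, h1]
  rw [map_add, coeff_psDeriv, MvPowerSeries.coeff_mul, MvPowerSeries.coeff_mul,
    MvPowerSeries.coeff_mul, Finset.mul_sum]
  have step1 : ∀ p ∈ Finset.HasAntidiagonal.antidiagonal (α + e),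
      ((α i + 1 : ℕ) : K) * (MvPowerSeries.coeff p.1 f * MvPowerSeries.coeff p.2 g)
        = (p.1 i : K) * (MvPowerSeries.coeff p.1 f * MvPowerSeries.coeff p.2 g)
          + (p.2 i : K) * (MvPowerSeries.coeff p.1 f * MvPowerSeries.coeff p.2 g) := by
    intro p hp
    rw [Finset.HasAntidiagonal.mem_antidiagonal] at hp
    have : α i + 1 = p.1 i + p.2 i := by
      have := congrArg (fun β : σ →₀ ℕ => β i) hp
      simpa [Finsupp.add_apply, he_def, Finsupp.single_eq_same] using this.symm
    rw [this]
    push_cast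
    ring
  rw [Finset.sum_congr rfl step1, Finset.sum_add_distrib]
  congr 1
  · rw [main fun a b => MvPowerSeries.coeff a f * MvPowerSeries.coeff b g]
    apply Finset.sum_congr rfl
    intro p _
    rw [coeff_psDeriv]
    ring
  · rw [antidiag_swap (α + e) fun a b => (b i : K) * (MvPowerSeries.coeff a f * MvPowerSeries.coeff b g)]
    rw [main fun a b => MvPowerSeries.coeff b f * MvPowerSeries.coeff a g]
    rw [antidiag_swap α fun a b => ((a i + 1 : ℕ) : K) * (MvPowerSeries.coeff b f * MvPowerSeries.coeff (a + e) g)]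
    apply Finset.sum_congr rfl
    intro p _
    rw [coeff_psDeriv]
    ring
end A

section A
variable {σ : Type*} [DecidableEq σ] {K : Type*} [CommRing K]



lemma psDeriv_add (i : σ) (f g : MvPowerSeries σ K) :
    psDeriv i (f + g) = psDeriv i f + psDeriv i g := by
  ext α
  simp [coeff_psDeriv, map_add, mul_add]

lemma psDeriv_rsmul (i : σ) (r : K) (f : MvPowerSeries σ K) :
    psDeriv i (r • f) = r • psDeriv i f := by
  ext α
  simp only [coeff_psDeriv, MvPowerSeries.coeff_smul, smul_eq_mul]
  ring

lemma psDeriv_one (i : σ) : psDeriv i (1 : MvPowerSeries σ K) = 0 := by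
  ext α
  have h : α + Finsupp.single i 1 ≠ 0 := by
    intro h
    have := congrArg (fun β : σ →₀ ℕ => β i) h
    simp [Finsupp.add_apply] at this
  simp [coeff_psDeriv, MvPowerSeries.coeff_one, h]
end A

section B
variable {m : ℕ} {K : Type*} [CommRing K]

lemma psDeriv_zero {σ : Type*} [DecidableEq σ] (i : σ) : psDeriv i (0 : MvPowerSeries σ K) = 0 := by
  ext α
  show ((α i + 1 : ℕ) : K) * MvPowerSeries.coeff (α + Finsupp.single i 1) 0 = _
  simp

lemma vfApply_add (L : Fin m → MvPowerSeries (Fin m) K) (f g : MvPowerSeries (Fin m) K) :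
    vfApply L (f + g) = vfApply L f + vfApply L g := by
  unfold vfApply
  simp [psDeriv_add, mul_add, Finset.sum_add_distrib]

lemma vfApply_zero (L : Fin m → MvPowerSeries (Fin m) K) : vfApply L 0 = 0 := by
  unfold vfApply
  simp [psDeriv_zero]

lemma vfApply_mul (L : Fin m → MvPowerSeries (Fin m) K) (f g : MvPowerSeries (Fin m) K) :
    vfApply L (f * g) = f * vfApply L g + g * vfApply L f := by
  unfold vfApply
  simp only [psDeriv_mul, mul_add, Finset.sum_add_distrib]
  have h1 : ∑ j, L j * (psDeriv j f * g) = g * ∑ j, L j * psDeriv j f := by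
    rw [Finset.mul_sum]; exact Finset.sum_congr rfl (by intros; ring)
  have h2 : ∑ j, L j * (f * psDeriv j g) = f * ∑ j, L j * psDeriv j g := by
    rw [Finset.mul_sum]; exact Finset.sum_congr rfl (by intros; ring)
  rw [h1, h2, add_comm]

lemma vfApply_rsmul (L : Fin m → MvPowerSeries (Fin m) K) (r : K) (f : MvPowerSeries (Fin m) K) :
    vfApply L (r • f) = r • vfApply L f := by
  unfold vfApply
  rw [Finset.smul_sum]
  exact Finset.sum_congr rfl (by intros; rw [psDeriv_rsmul, mul_smul_comm])

lemma vfApply_one (L : Fin m → MvPowerSeries (Fin m) K) : vfApply L 1 = 0 := by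
  unfold vfApply
  simp [psDeriv_one]

lemma vfApply_sum {ι : Type*} (L : Fin m → MvPowerSeries (Fin m) K) (s : Finset ι)
    (F : ι → MvPowerSeries (Fin m) K) :
    vfApply L (∑ t ∈ s, F t) = ∑ t ∈ s, vfApply L (F t) := by
  classical
  induction s using Finset.induction_on with
  | empty => simp [vfApply_zero]
  | insert _ _ hx ih => rw [Finset.sum_insert hx, Finset.sum_insert hx, vfApply_add, ih]

lemma vfApply_comboL {ι : Type*} [Fintype ι] (b : ι → MvPowerSeries (Fin m) K)
    (w : ι → Fin m → MvPowerSeries (Fin m) K) (f : MvPowerSeries (Fin m) K) :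
    vfApply (fun j => ∑ s, b s * w s j) f = ∑ s, b s * vfApply (w s) f := by
  unfold vfApply
  simp only [Finset.sum_mul, Finset.mul_sum]
  rw [Finset.sum_comm]
  exact Finset.sum_congr rfl (by intros; exact Finset.sum_congr rfl (by intros; ring))

lemma vtangent_span {κ : Type*} (G : κ → MvPowerSeries (Fin m) K)
    (L : Fin m → MvPowerSeries (Fin m) K)
    (h : ∀ t, vfApply L (G t) ∈ Ideal.span (Set.range G)) :
    VTangent L (Ideal.span (Set.range G)) := by
  intro f hf
  induction hf using Submodule.span_induction with
  | mem x hx => obtain ⟨t, rfl⟩ := hx; exact h t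
  | zero => rw [vfApply_zero]; exact zero_mem _
  | add x y hx hy ihx ihy => rw [vfApply_add]; exact add_mem ihx ihy
  | smul r x hx ihx =>
      rw [smul_eq_mul, vfApply_mul]
      exact add_mem (Ideal.mul_mem_left _ _ ihx) (Ideal.mul_mem_right _ _ hx)

lemma vf_pow (IX : Ideal (MvPowerSeries (Fin m) K)) (L : Fin m → MvPowerSeries (Fin m) K) :
    ∀ n, ∀ f ∈ IX ^ (n + 1), vfApply L f ∈ IX ^ n := by
  intro n
  induction n with
  | zero => intro f _; rw [pow_zero, Ideal.one_eq_top]; trivial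
  | succ n ih =>
      intro f hf
      rw [pow_succ] at hf
      refine Submodule.mul_induction_on hf ?_ ?_
      · intro a ha b hb
        rw [vfApply_mul]
        refine add_mem (Ideal.mul_mem_right _ _ ha) ?_
        have : b * vfApply L a ∈ IX * IX ^ n := Ideal.mul_mem_mul hb (ih a ha)
        rwa [← pow_succ'] at this
      · intro x y hx hy
        rw [vfApply_add]; exact add_mem hx hy

lemma vf_drop (IX IY : Ideal (MvPowerSeries (Fin m) K)) (L : Fin m → MvPowerSeries (Fin m) K)
    (hT : VTangent L IY) (n : ℕ) (f : MvPowerSeries (Fin m) K)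
    (hf : f ∈ IX ^ (n + 1) + IY) : vfApply L f ∈ IX ^ n + IY := by
  rw [Submodule.add_eq_sup] at hf ⊢
  obtain ⟨a, ha, y, hy, rfl⟩ := Submodule.mem_sup.mp hf
  rw [vfApply_add]
  exact add_mem (Submodule.mem_sup_left (vf_pow IX L n a ha))
    (Submodule.mem_sup_right (hT y hy))
end B

section C
variable {m : ℕ}

/-- The differential at the origin. -/
noncomputable def Dlin (f : MvPowerSeries (Fin m) ℝ) : Fin m → ℝ :=
  fun i => MvPowerSeries.constantCoeff (psDeriv i f)

lemma Dlin_eq_coeff (f : MvPowerSeries (Fin m) ℝ) (i : Fin m) :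
    Dlin f i = MvPowerSeries.coeff (Finsupp.single i 1) f := by
  show MvPowerSeries.coeff 0 (psDeriv i f) = _
  show ((0 : ℕ) + 1 : ℕ) * MvPowerSeries.coeff (0 + Finsupp.single i 1) f = _
  simp

lemma constantCoeff_vfApply (w : Fin m → MvPowerSeries (Fin m) ℝ) (f : MvPowerSeries (Fin m) ℝ) :
    MvPowerSeries.constantCoeff (vfApply w f)
      = ∑ j, MvPowerSeries.constantCoeff (w j) * Dlin f j := by
  unfold vfApply
  rw [map_sum]
  exact Finset.sum_congr rfl (by intros; rw [map_mul]; rfl)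

/-- Dual vector fields to a family of series with independent differentials. -/
lemma exists_dual_fields {ι : Type*} [Fintype ι] [DecidableEq ι]
    (Fam : ι → MvPowerSeries (Fin m) ℝ)
    (hInd : LinearIndependent ℝ (fun s => Dlin (Fam s))) :
    ∃ L : ι → (Fin m → MvPowerSeries (Fin m) ℝ),
      ∀ s t, vfApply (L s) (Fam t) = if t = s then 1 else 0 := by
  classical
  set v : ι → (Fin m → ℝ) := fun s => Dlin (Fam s) with hv
  let B := Module.Basis.sumExtend hInd
  have hB : ∀ s, B (Sum.inl s) = v s := by
    intro s
    simp only [B, Module.Basis.sumExtend, Module.Basis.reindex_apply, Equiv.symm_symm, Trans.trans,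
      Equiv.trans_apply, Equiv.sumCongr_apply, Sum.map_inl, Module.Basis.coe_extend,
      Equiv.Set.sumDiffSubset_apply_inl, Equiv.ofInjective_apply, Set.inclusion_mk]
    exact rfl
  -- dual constant coefficients
  set w : ι → Fin m → ℝ := fun s j => B.coord (Sum.inl s) (fun j' => if j = j' then 1 else 0)
    with hw
  have key : ∀ s t, (∑ j, w s j * v t j) = if t = s then (1:ℝ) else 0 := by
    intro s t
    have hexp : v t = ∑ j, (v t j) • (fun j' => if j = j' then (1:ℝ) else 0) :=
      pi_eq_sum_univ (v t)
    have : B.coord (Sum.inl s) (v t) = ∑ j, v t j * w s j := by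
      conv_lhs => rw [hexp]
      rw [map_sum]
      exact Finset.sum_congr rfl (by
        intro j _
        rw [map_smul, smul_eq_mul])
    rw [Finset.sum_congr rfl fun j _ => mul_comm (w s j) (v t j), ← this, ← hB t,
      Module.Basis.coord_apply, Module.Basis.repr_self, Finsupp.single_apply]
    by_cases h : t = s <;> simp [h]
  -- the matrix of pairings of constant-coefficient fields
  set w' : ι → Fin m → MvPowerSeries (Fin m) ℝ :=
    fun s j => MvPowerSeries.C (w s j) with hw'
  set M : Matrix ι ι (MvPowerSeries (Fin m) ℝ) :=
    Matrix.of (fun s t => vfApply (w' s) (Fam t)) with hM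
  have hconst : ∀ s t, MvPowerSeries.constantCoeff (M s t)
      = if t = s then 1 else 0 := by
    intro s t
    rw [hM]
    show MvPowerSeries.constantCoeff (vfApply (w' s) (Fam t)) = _
    rw [constantCoeff_vfApply]
    rw [← key s t]
    exact Finset.sum_congr rfl (by intros; rw [MvPowerSeries.constantCoeff_C])
  have hdet : IsUnit M.det := by
    rw [MvPowerSeries.isUnit_iff_constantCoeff, RingHom.map_det]
    have : (MvPowerSeries.constantCoeff).mapMatrix M = 1 := by
      ext s t
      rw [RingHom.mapMatrix_apply, Matrix.map_apply, hconst, Matrix.one_apply]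
      by_cases h : s = t
      · subst h; simp
      · rw [if_neg (fun hh => h hh.symm), if_neg h]
    rw [this, Matrix.det_one]
    exact isUnit_one
  set N := M⁻¹ with hN
  have hNM : N * M = 1 := Matrix.nonsing_inv_mul M hdet
  refine ⟨fun s => fun j => ∑ t, N s t * w' t j, ?_⟩
  intro s u
  rw [vfApply_comboL (N s) w' (Fam u)]
  have : ∑ t, N s t * vfApply (w' t) (Fam u) = (N * M) s u := by
    rw [Matrix.mul_apply]
    rfl
  rw [this, hNM, Matrix.one_apply]
  by_cases h : u = s
  · subst h; simp
  · rw [if_neg (fun hh => h hh.symm), if_neg h]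
end C

section D
variable {m : ℕ}

/-- `Dlin` as a linear map. -/
noncomputable def DlinL : MvPowerSeries (Fin m) ℝ →ₗ[ℝ] (Fin m → ℝ) where
  toFun := Dlin
  map_add' f g := by
    funext i
    simp only [Dlin_eq_coeff, map_add, Pi.add_apply]
  map_smul' r f := by
    funext i
    simp only [Dlin_eq_coeff, map_smul, RingHom.id_apply, Pi.smul_apply, smul_eq_mul]

lemma Dlin_mul (c F : MvPowerSeries (Fin m) ℝ) :
    Dlin (c * F) = MvPowerSeries.constantCoeff c • Dlin F
      + MvPowerSeries.constantCoeff F • Dlin c := by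
  funext i
  show MvPowerSeries.constantCoeff (psDeriv i (c * F)) = _
  rw [psDeriv_mul, map_add, map_mul, map_mul]
  show _ = MvPowerSeries.constantCoeff c
      * MvPowerSeries.constantCoeff (psDeriv i F)
      + MvPowerSeries.constantCoeff F
      * MvPowerSeries.constantCoeff (psDeriv i c)
  ring

/-- Key normalization: complementary generators `H` of `IX` over `IY`, together with vector
fields tangent to `IY` and dual to the `H`'s. -/
lemma exists_normal_data (IX IY : Ideal (MvPowerSeries (Fin m) ℝ)) (cX cY : ℕ)
    (hX : IsManifoldIdeal IX cX) (hY : IsManifoldIdeal IY cY) (hXY : IY ≤ IX) :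
    ∃ (rr : ℕ) (H : Fin rr → MvPowerSeries (Fin m) ℝ)
      (L : Fin rr → (Fin m → MvPowerSeries (Fin m) ℝ)),
      (∀ j, H j ∈ IX) ∧ IX ≤ IY ⊔ Ideal.span (Set.range H) ∧
      (∀ i, VTangent (L i) IY) ∧
      (∀ i j, vfApply (L i) (H j) = if j = i then 1 else 0) := by
  classical
  obtain ⟨G, hIYspan, hG0, hGind⟩ := hY
  obtain ⟨FX, hIXspan, hFX0, hFXind⟩ := hX
  have hGind' : LinearIndependent ℝ (fun t => Dlin (G t)) := by
    convert hGind using 2 with t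
    funext i
    exact Dlin_eq_coeff (G t) i
    rfl
  have hFXind' : LinearIndependent ℝ (fun j => Dlin (FX j)) := by
    convert hFXind using 2 with j
    funext i
    exact Dlin_eq_coeff (FX j) i
    rfl
  set V := (Fin m → ℝ)
  set U : Submodule ℝ V := Submodule.span ℝ (Set.range fun t => Dlin (G t)) with hU
  set π := U.mkQ with hπ
  set T : Set (V ⧸ U) := π '' (Set.range fun j => Dlin (FX j)) with hT
  obtain ⟨b, hbT, hbspan, hbind⟩ := exists_linearIndependent ℝ T
  have hbfin : b.Finite := Set.Finite.subset ((Set.finite_range _).image _) hbT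
  haveI : Fintype b := hbfin.fintype
  set rr := Fintype.card b with hrr
  set eb := (Fintype.equivFin b) with heb
  have hpick : ∀ x : b, ∃ j : Fin cX, π (Dlin (FX j)) = ↑x := by
    intro x
    rcases hbT x.2 with ⟨v0, hv0, hpv⟩
    rcases hv0 with ⟨j, rfl⟩
    exact ⟨j, hpv⟩
  choose pick hpick' using hpick
  set H0 : b → MvPowerSeries (Fin m) ℝ := fun x => FX (pick x) with hH0
  set H : Fin rr → MvPowerSeries (Fin m) ℝ := H0 ∘ eb.symm with hH
  have hHmem : ∀ j, H j ∈ IX := by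
    intro j
    rw [hIXspan]
    exact Ideal.subset_span ⟨pick (eb.symm j), rfl⟩
  -- linear independence of the combined family
  have hbind' : LinearIndependent ℝ (fun i : Fin rr => (↑(eb.symm i) : V ⧸ U)) :=
    hbind.comp eb.symm (Equiv.injective _)
  have hπH : ∀ i : Fin rr, π (Dlin (H i)) = ↑(eb.symm i) := fun i => hpick' (eb.symm i)
  have hHind : LinearIndependent ℝ (fun i : Fin rr => Dlin (H i)) := by
    apply LinearIndependent.of_comp π
    have : (⇑π ∘ fun i : Fin rr => Dlin (H i)) = fun i : Fin rr => (↑(eb.symm i) : V ⧸ U) := by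
      funext i; exact hπH i
    rw [this]
    exact hbind'
  have hdisj : Disjoint U (Submodule.span ℝ (Set.range fun i : Fin rr => Dlin (H i))) := by
    rw [Submodule.disjoint_def]
    intro x hxU hxH
    obtain ⟨a, ha⟩ := (Submodule.mem_span_range_iff_exists_fun ℝ).1 hxH
    have hπx : π x = 0 := by
      rw [hπ, Submodule.mkQ_apply, Submodule.Quotient.mk_eq_zero]
      exact hxU
    have : ∑ i, a i • (↑(eb.symm i) : V ⧸ U) = 0 := by
      rw [← hπx, ← ha, map_sum]
      exact Finset.sum_congr rfl fun i _ => by rw [map_smul, hπH i]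
    have hz : ∀ i, a i = 0 := Fintype.linearIndependent_iff.1 hbind' a this
    rw [← ha]
    simp [hz]
  set Fam : (Fin cY ⊕ Fin rr) → MvPowerSeries (Fin m) ℝ := Sum.elim G H with hFam
  have hFamInd : LinearIndependent ℝ (fun s => Dlin (Fam s)) := by
    have : (fun s => Dlin (Fam s)) = Sum.elim (fun t => Dlin (G t)) (fun i => Dlin (H i)) := by
      funext s; cases s <;> rfl
    rw [this]
    exact linearIndependent_sum.2 ⟨hGind', hHind, by
      simpa [Set.range_comp] using hdisj⟩
  obtain ⟨LL, hLL⟩ := exists_dual_fields Fam hFamInd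
  set L : Fin rr → (Fin m → MvPowerSeries (Fin m) ℝ) := fun i => LL (Sum.inr i) with hL
  have hLtan : ∀ i, VTangent (L i) IY := by
    intro i
    rw [hIYspan]
    apply vtangent_span
    intro t
    have := hLL (Sum.inr i) (Sum.inl t)
    rw [hFam] at this
    simp only [Sum.elim_inl] at this
    rw [hL]
    rw [this, if_neg (by simp)]
    exact zero_mem _
  have hLH : ∀ i j, vfApply (L i) (H j) = if j = i then 1 else 0 := by
    intro i j
    have := hLL (Sum.inr i) (Sum.inr j)
    rw [hFam] at this
    simp only [Sum.elim_inr] at this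
    rw [hL, this]
    by_cases h : j = i
    · subst h; simp
    · rw [if_neg (by simpa using h), if_neg h]
  -- coverage via Nakayama
  set Kid : Ideal (MvPowerSeries (Fin m) ℝ) := IY ⊔ Ideal.span (Set.range H) with hKid
  set mI : Ideal (MvPowerSeries (Fin m) ℝ) :=
    RingHom.ker (MvPowerSeries.constantCoeff) with hmI
  have hmem_mIIX : ∀ f ∈ IX, Dlin f = 0 → f ∈ mI * IX := by
    intro f hf hDf
    rw [hIXspan] at hf
    obtain ⟨c, hc⟩ := (Submodule.mem_span_range_iff_exists_fun _).1 hf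
    have hD : ∑ j, MvPowerSeries.constantCoeff (c j) • Dlin (FX j) = 0 := by
      have : Dlin f = ∑ j, MvPowerSeries.constantCoeff (c j) • Dlin (FX j) := by
        rw [← hc]
        show DlinL (∑ j, c j • FX j) = _
        rw [map_sum]
        refine Finset.sum_congr rfl fun j _ => ?_
        show Dlin (c j • FX j) = _
        rw [smul_eq_mul, Dlin_mul, hFX0 j, zero_smul, add_zero]
      rw [← this, hDf]
    have hc0 : ∀ j, MvPowerSeries.constantCoeff (c j) = 0 :=
      Fintype.linearIndependent_iff.1 hFXind' _ hD
    rw [← hc]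
    apply Submodule.sum_mem
    intro j _
    rw [smul_eq_mul]
    exact Ideal.mul_mem_mul (by rw [hmI, RingHom.mem_ker]; exact hc0 j) (hIXspan ▸ Ideal.subset_span ⟨j, rfl⟩)
  have hcov : IX ≤ Kid ⊔ mI • IX := by
    rw [hIXspan, Ideal.span_le]
    rintro _ ⟨j, rfl⟩
    -- decompose the differential of FX j
    have h1 : π (Dlin (FX j)) ∈ Submodule.span ℝ (Set.range (fun x : b => (↑x : V ⧸ U))) := by
      rw [Subtype.range_coe, hbspan]
      exact Submodule.subset_span ⟨Dlin (FX j), ⟨j, rfl⟩, rfl⟩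
    obtain ⟨a, ha⟩ := (Submodule.mem_span_range_iff_exists_fun ℝ).1 h1
    have h2 : Dlin (FX j) - ∑ x : b, a x • Dlin (H0 x) ∈ U := by
      rw [← Submodule.Quotient.mk_eq_zero, ← Submodule.mkQ_apply, map_sub, map_sum]
      have : ∑ x : b, π (a x • Dlin (H0 x)) = ∑ x : b, a x • (↑x : V ⧸ U) := by
        refine Finset.sum_congr rfl fun x _ => ?_
        rw [map_smul, hpick' x]
      rw [this, ha, sub_self]
    obtain ⟨cc, hcc⟩ := (Submodule.mem_span_range_iff_exists_fun ℝ).1 h2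
    set ρ := FX j - (∑ t, cc t • G t + ∑ x : b, a x • H0 x) with hρ
    have hρIX : ρ ∈ IX := by
      refine sub_mem (hIXspan ▸ Ideal.subset_span ⟨j, rfl⟩) (add_mem ?_ ?_)
      · exact Submodule.sum_mem _ fun t _ => Submodule.smul_of_tower_mem _ _
          (hXY (hIYspan ▸ Ideal.subset_span ⟨t, rfl⟩))
      · exact Submodule.sum_mem _ fun x _ => Submodule.smul_of_tower_mem _ _
          (hIXspan ▸ Ideal.subset_span ⟨pick x, rfl⟩)
    have hρD : Dlin ρ = 0 := by
      have : Dlin ρ = Dlin (FX j) - (∑ t, cc t • Dlin (G t) + ∑ x : b, a x • Dlin (H0 x)) := by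
        rw [hρ]
        rw [show Dlin (FX j - (∑ t, cc t • G t + ∑ x : b, a x • H0 x))
          = DlinL (FX j - (∑ t, cc t • G t + ∑ x : b, a x • H0 x)) from rfl]
        rw [map_sub, map_add, map_sum, map_sum]
        simp only [map_smul]
        rfl
      rw [this, hcc]
      abel
    have hρmem : ρ ∈ mI * IX := hmem_mIIX ρ hρIX hρD
    have : FX j = ρ + (∑ t, cc t • G t + ∑ x : b, a x • H0 x) := by rw [hρ]; ring
    rw [this]
    refine add_mem (Submodule.mem_sup_right (by rw [Ideal.smul_eq_mul, ← hIXspan]; exact hρmem)) (Submodule.mem_sup_left ?_)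
    refine add_mem ?_ ?_
    · exact Submodule.sum_mem _ fun t _ => Submodule.smul_of_tower_mem _ _
        (Submodule.mem_sup_left (hIYspan ▸ Ideal.subset_span ⟨t, rfl⟩))
    · refine Submodule.sum_mem _ fun x _ => Submodule.smul_of_tower_mem _ _
        (Submodule.mem_sup_right (Ideal.subset_span ⟨eb x, ?_⟩))
      rw [hH]
      simp
  have hjac : mI ≤ Ideal.jacobson ⊥ := by
    intro x hx
    rw [Ideal.mem_jacobson_bot]
    intro y
    rw [MvPowerSeries.isUnit_iff_constantCoeff]
    rw [hmI, RingHom.mem_ker] at hx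
    rw [map_add, map_mul, hx, zero_mul, zero_add, map_one]
    exact isUnit_one
  have hIXK : IX ≤ Kid := by
    have hfg : Submodule.FG (Submodule.map Kid.mkQ IX) := by
      apply Submodule.FG.map
      rw [hIXspan]
      exact Submodule.fg_span (Set.finite_range FX)
    have hKbot : Submodule.map Kid.mkQ Kid = ⊥ := by
      rw [Submodule.eq_bot_iff]
      rintro _ ⟨x, hx, rfl⟩
      rw [Submodule.mkQ_apply, Submodule.Quotient.mk_eq_zero]
      exact hx
    have hle : Submodule.map Kid.mkQ IX ≤ mI • Submodule.map Kid.mkQ IX := by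
      calc Submodule.map Kid.mkQ IX ≤ Submodule.map Kid.mkQ (Kid ⊔ mI • IX) :=
            Submodule.map_mono hcov
        _ = Submodule.map Kid.mkQ Kid ⊔ Submodule.map Kid.mkQ (mI • IX) :=
            Submodule.map_sup _ _ _
        _ = mI • Submodule.map Kid.mkQ IX := by
            rw [hKbot, Submodule.map_smul'', bot_sup_eq]
    have hbot := Submodule.eq_bot_of_le_smul_of_le_jacobson_bot mI _ hfg hle hjac
    intro x hx
    have hmem : Kid.mkQ x ∈ Submodule.map Kid.mkQ IX := Submodule.mem_map_of_mem hx
    rw [hbot, Submodule.mem_bot, Submodule.mkQ_apply, Submodule.Quotient.mk_eq_zero] at hmem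
    exact hmem
  exact ⟨rr, H, L, hHmem, hIXK, hLtan, hLH⟩
end D

section E
variable {m rr : ℕ}

/-- Monomials in the family `H`. -/
noncomputable def MON (H : Fin rr → MvPowerSeries (Fin m) ℝ) (n : ℕ)
    (k : Fin n → Fin rr) : MvPowerSeries (Fin m) ℝ :=
  ∏ j, H (k j)

lemma MON_perm (H : Fin rr → MvPowerSeries (Fin m) ℝ) (n : ℕ) (σ : Equiv.Perm (Fin n))
    (k : Fin n → Fin rr) : MON H n (k ∘ σ) = MON H n k :=
  Equiv.prod_comp σ (fun j => H (k j))

lemma span_pow_eq (H : Fin rr → MvPowerSeries (Fin m) ℝ) (n : ℕ) :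
    (Ideal.span (Set.range H)) ^ n = Ideal.span (Set.range (MON H n)) := by
  induction n with
  | zero =>
      rw [pow_zero]
      have : Set.range (MON H 0) = {1} := by
        apply Set.eq_singleton_iff_unique_mem.2
        constructor
        · exact ⟨Fin.elim0, by simp [MON]⟩
        · rintro _ ⟨k, rfl⟩; simp [MON]
      rw [this, Ideal.span_singleton_one, Ideal.one_eq_top]
  | succ n ih =>
      rw [pow_succ, ih, Ideal.span_mul_span']
      congr 1
      ext x
      constructor
      · rintro ⟨a, ⟨k, rfl⟩, bb, ⟨j, rfl⟩, rfl⟩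
        refine ⟨Fin.snoc k j, ?_⟩
        rw [MON, Fin.prod_univ_castSucc]
        simp [MON, Fin.snoc_castSucc, Fin.snoc_last]
      · rintro ⟨k, rfl⟩
        refine ⟨MON H n (k ∘ Fin.castSucc), ⟨_, rfl⟩, H (k (Fin.last n)), ⟨_, rfl⟩, ?_⟩
        show MON H n (k ∘ Fin.castSucc) * H (k (Fin.last n)) = MON H (n + 1) k
        simp only [MON]
        rw [Fin.prod_univ_castSucc]
        rfl

lemma MON_mem_pow (H : Fin rr → MvPowerSeries (Fin m) ℝ) {IX : Ideal (MvPowerSeries (Fin m) ℝ)}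
    (hHX : ∀ j, H j ∈ IX) (n : ℕ) (k : Fin n → Fin rr) : MON H n k ∈ IX ^ n := by
  have h1 : Ideal.span (Set.range H) ≤ IX := by
    rw [Ideal.span_le]; rintro _ ⟨j, rfl⟩; exact hHX j
  have := Ideal.pow_right_mono h1 n
  apply this
  rw [span_pow_eq]
  exact Ideal.subset_span ⟨k, rfl⟩

lemma sup_pow_le (S IY : Ideal (MvPowerSeries (Fin m) ℝ)) (n : ℕ) :
    (IY ⊔ S) ^ (n + 1) ≤ IY ⊔ S ^ (n + 1) := by
  induction n with
  | zero => simp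
  | succ n ih =>
      rw [pow_succ]
      calc (IY ⊔ S) ^ (n + 1) * (IY ⊔ S) ≤ (IY ⊔ S ^ (n + 1)) * (IY ⊔ S) :=
            Ideal.mul_mono ih le_rfl
        _ ≤ IY ⊔ S ^ (n + 2) := by
            rw [Ideal.sup_mul, Ideal.mul_sup, Ideal.mul_sup]
            refine sup_le (sup_le ?_ ?_) (sup_le ?_ ?_)
            · exact le_trans Ideal.mul_le_left le_sup_left
            · exact le_trans Ideal.mul_le_left le_sup_left
            · exact le_trans Ideal.mul_le_right le_sup_left
            · rw [← pow_succ]; exact le_sup_right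

/-- Decomposition of elements of `IX^(n+1) + IY` into H-monomials. -/
lemma exists_mon_decomp (IX IY : Ideal (MvPowerSeries (Fin m) ℝ))
    (H : Fin rr → MvPowerSeries (Fin m) ℝ)
    (hcover : IX ≤ IY ⊔ Ideal.span (Set.range H)) (n : ℕ)
    (f : MvPowerSeries (Fin m) ℝ) (hf : f ∈ IX ^ (n + 1) + IY) :
    ∃ (c : (Fin (n + 1) → Fin rr) → MvPowerSeries (Fin m) ℝ)
      (y : MvPowerSeries (Fin m) ℝ), y ∈ IY ∧ f = (∑ k, c k * MON H (n + 1) k) + y := by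
  have h1 : IX ^ (n + 1) + IY ≤ IY ⊔ Ideal.span (Set.range (MON H (n + 1))) := by
    rw [Submodule.add_eq_sup, sup_comm]
    apply sup_le le_sup_left
    calc IX ^ (n+1) ≤ (IY ⊔ Ideal.span (Set.range H)) ^ (n+1) := Ideal.pow_right_mono hcover _
      _ ≤ IY ⊔ (Ideal.span (Set.range H)) ^ (n+1) := sup_pow_le _ _ _
      _ = IY ⊔ Ideal.span (Set.range (MON H (n+1))) := by rw [span_pow_eq]
  have h2 := h1 hf
  rw [sup_comm] at h2
  obtain ⟨s, hs, y, hy, rfl⟩ := Submodule.mem_sup.mp h2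
  obtain ⟨c, hc⟩ := (Submodule.mem_span_range_iff_exists_fun _).1 hs
  exact ⟨c, y, hy, by rw [← hc]; rfl⟩

lemma insertNth_eq_cons_comp {n : ℕ} (p : Fin (n + 1)) (i : Fin rr) (k' : Fin n → Fin rr) :
    Fin.insertNth p i k' = Fin.cons i k' ∘ (Fin.cycleRange p) := by
  funext j
  by_cases hj : j = p
  · subst hj
    simp [Fin.insertNth_apply_same, Fin.cycleRange_self]
  · obtain ⟨j', rfl⟩ := Fin.exists_succAbove_eq hj
    simp [Fin.insertNth_apply_succAbove, Fin.cycleRange_succAbove]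

lemma cons_comp_perm {n : ℕ} (i : Fin rr) (k' : Fin n → Fin rr) (τ : Equiv.Perm (Fin n)) :
    Fin.cons i (k' ∘ τ) = (Fin.cons i k') ∘ (Equiv.Perm.decomposeFin.symm (0, τ)) := by
  funext j
  induction j using Fin.cases with
  | zero => simp [Equiv.Perm.decomposeFin_symm_apply_zero]
  | succ j => simp [Equiv.Perm.decomposeFin_symm_apply_succ]

lemma vf_prod {m : ℕ} (L : Fin m → MvPowerSeries (Fin m) ℝ) :
    ∀ (n : ℕ) (g : Fin (n + 1) → MvPowerSeries (Fin m) ℝ),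
      vfApply L (∏ j, g j) = ∑ p, vfApply L (g p) * ∏ j : Fin n, g (p.succAbove j) := by
  intro n
  induction n with
  | zero =>
      intro g
      rw [Fin.prod_univ_one, Fin.sum_univ_one]
      simp
  | succ n ih =>
      intro g
      rw [Fin.prod_univ_succ, vfApply_mul, Fin.sum_univ_succ, ih (fun j => g j.succ)]
      have h1 : ∀ p : Fin (n + 1),
          vfApply L (g p.succ) * ∏ j : Fin (n + 1), g (p.succ.succAbove j)
            = g 0 * (vfApply L (g p.succ) * ∏ j : Fin n, g ((p.succAbove j).succ)) := by
        intro p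
        rw [Fin.prod_univ_succ, Fin.succ_succAbove_zero]
        simp only [Fin.succ_succAbove_succ]
        ring
      rw [Finset.sum_congr rfl (fun p _ => h1 p), ← Finset.mul_sum]
      have h2 : ∏ j : Fin (n + 1), g ((0 : Fin (n + 2)).succAbove j)
          = ∏ j : Fin (n + 1), g j.succ := by
        simp [Fin.zero_succAbove]
      rw [h2]
      ring

lemma vf_MON (H : Fin rr → MvPowerSeries (Fin m) ℝ)
    (L : Fin rr → (Fin m → MvPowerSeries (Fin m) ℝ))
    (hLH : ∀ i j, vfApply (L i) (H j) = if j = i then 1 else 0)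
    (n : ℕ) (i : Fin rr) (k : Fin (n + 1) → Fin rr) :
    vfApply (L i) (MON H (n + 1) k)
      = ∑ p, if k p = i then MON H n (k ∘ p.succAbove) else 0 := by
  rw [MON, vf_prod]
  refine Finset.sum_congr rfl fun p _ => ?_
  rw [hLH i (k p)]
  by_cases h : k p = i
  · rw [if_pos h, if_pos h, one_mul]; rfl
  · rw [if_neg h, if_neg h, zero_mul]

lemma core_identity (H : Fin rr → MvPowerSeries (Fin m) ℝ)
    (L : Fin rr → (Fin m → MvPowerSeries (Fin m) ℝ))
    (hLH : ∀ i j, vfApply (L i) (H j) = if j = i then 1 else 0)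
    (n : ℕ) (c : (Fin (n + 1) → Fin rr) → MvPowerSeries (Fin m) ℝ)
    (hsym : ∀ (σ : Equiv.Perm (Fin (n + 1))) k, c (k ∘ σ) = c k) (i : Fin rr) :
    vfApply (L i) (∑ k, c k * MON H (n + 1) k)
      = (n + 1) • (∑ k' : Fin n → Fin rr, c (Fin.cons i k') * MON H n k')
        + ∑ k, MON H (n + 1) k * vfApply (L i) (c k) := by
  classical
  rw [vfApply_sum]
  have hterm : ∀ k, vfApply (L i) (c k * MON H (n + 1) k)
      = (∑ p, if k p = i then c k * MON H n (k ∘ p.succAbove) else 0)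
        + MON H (n + 1) k * vfApply (L i) (c k) := by
    intro k
    rw [vfApply_mul, vf_MON H L hLH n i k, Finset.mul_sum]
    congr 1
    exact Finset.sum_congr rfl fun p _ => by rw [mul_ite, mul_zero]
  rw [Finset.sum_congr rfl (fun k _ => hterm k), Finset.sum_add_distrib]
  congr 1
  rw [Finset.sum_comm]
  have hp : ∀ p : Fin (n + 1),
      (∑ k : Fin (n + 1) → Fin rr, if k p = i then c k * MON H n (k ∘ p.succAbove) else 0)
        = ∑ k' : Fin n → Fin rr, c (Fin.cons i k') * MON H n k' := by
    intro p
    rw [← Equiv.sum_comp (Fin.insertNthEquiv (fun _ => Fin rr) p)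
      (fun k => if k p = i then c k * MON H n (k ∘ p.succAbove) else 0), Fintype.sum_prod_type]
    have hval : ∀ (a : Fin rr) (k' : Fin n → Fin rr),
        (if (Fin.insertNth p a k' : Fin (n + 1) → Fin rr) p = i
          then c (Fin.insertNth p a k')
            * MON H n ((Fin.insertNth p a k' : Fin (n + 1) → Fin rr) ∘ p.succAbove) else 0)
          = if a = i then c (Fin.cons i k') * MON H n k' else 0 := by
      intro a k'
      have h1 : (Fin.insertNth p a k' : Fin (n + 1) → Fin rr) p = a := by simp
      have h2 : (Fin.insertNth p a k' : Fin (n + 1) → Fin rr) ∘ p.succAbove = k' := by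
        funext j; simp
      rw [h1, h2]
      by_cases h : a = i
      · subst h
        rw [if_pos rfl, if_pos rfl]
        congr 1
        rw [insertNth_eq_cons_comp, hsym]
      · rw [if_neg h, if_neg h]
    have hfin : (∑ a : Fin rr, ∑ k' : Fin n → Fin rr,
        if a = i then c (Fin.cons i k') * MON H n k' else 0)
        = ∑ k' : Fin n → Fin rr, c (Fin.cons i k') * MON H n k' := by
      rw [Finset.sum_comm]
      refine Finset.sum_congr rfl fun k' _ => ?_
      simp
    rw [← hfin]
    exact Finset.sum_congr rfl fun a _ => Finset.sum_congr rfl fun k' _ => hval a k'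
  rw [Finset.sum_congr rfl (fun p _ => hp p), Finset.sum_const, Finset.card_univ, Fintype.card_fin]


noncomputable def symz (n : ℕ) (c : (Fin n → Fin rr) → MvPowerSeries (Fin m) ℝ) :
    (Fin n → Fin rr) → MvPowerSeries (Fin m) ℝ :=
  fun k => ((n.factorial : ℝ))⁻¹ • ∑ σ : Equiv.Perm (Fin n), c (k ∘ σ)

lemma symz_sym (n : ℕ) (c : (Fin n → Fin rr) → MvPowerSeries (Fin m) ℝ) :
    ∀ (σ : Equiv.Perm (Fin n)) (k : Fin n → Fin rr), symz n c (k ∘ σ) = symz n c k := by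
  intro σ k
  unfold symz
  congr 1
  calc ∑ τ : Equiv.Perm (Fin n), c ((k ∘ σ) ∘ τ)
      = ∑ τ : Equiv.Perm (Fin n), c (k ∘ ⇑(σ * τ)) := by
        refine Finset.sum_congr rfl fun τ _ => ?_
        congr 1
    _ = ∑ τ : Equiv.Perm (Fin n), c (k ∘ τ) := by
        simpa using Equiv.sum_comp (Equiv.mulLeft σ) (fun τ : Equiv.Perm (Fin n) => c (k ∘ τ))

lemma symz_spec (H : Fin rr → MvPowerSeries (Fin m) ℝ) (n : ℕ)
    (c : (Fin n → Fin rr) → MvPowerSeries (Fin m) ℝ) :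
    ∑ k, symz n c k * MON H n k = ∑ k, c k * MON H n k := by
  unfold symz
  have step1 : ∑ k, (((n.factorial : ℝ))⁻¹ • ∑ σ : Equiv.Perm (Fin n), c (k ∘ σ)) * MON H n k
      = ((n.factorial : ℝ))⁻¹ • ∑ k, ∑ σ : Equiv.Perm (Fin n), c (k ∘ σ) * MON H n k := by
    rw [Finset.smul_sum]
    refine Finset.sum_congr rfl fun k _ => ?_
    rw [smul_mul_assoc, Finset.sum_mul]
  rw [step1, Finset.sum_comm]
  have step2 : ∀ σ : Equiv.Perm (Fin n),
      ∑ k, c (k ∘ σ) * MON H n k = ∑ k, c k * MON H n k := by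
    intro σ
    have h1 : ∑ k, c (k ∘ σ) * MON H n k = ∑ k, c (k ∘ σ) * MON H n (k ∘ σ) :=
      Finset.sum_congr rfl fun k _ => by rw [MON_perm]
    rw [h1]
    have h2 := Equiv.sum_comp (Equiv.arrowCongr σ.symm (Equiv.refl (Fin rr)))
      (fun k => c k * MON H n k)
    simpa [Equiv.arrowCongr, Function.comp_def] using h2
  rw [Finset.sum_congr rfl (fun σ _ => step2 σ), Finset.sum_const, Finset.card_univ,
    Fintype.card_perm, Fintype.card_fin, ← Nat.cast_smul_eq_nsmul ℝ, smul_smul,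
    inv_mul_cancel₀ (by exact_mod_cast n.factorial_ne_zero), one_smul]

lemma nsmul_mem_ideal {x : MvPowerSeries (Fin m) ℝ} {I : Ideal (MvPowerSeries (Fin m) ℝ)}
    (n : ℕ) (h : (n + 1) • x ∈ I) : x ∈ I := by
  have h2 : (((n + 1 : ℕ) : ℝ)) • x ∈ I := by rw [Nat.cast_smul_eq_nsmul]; exact h
  have h3 := Submodule.smul_of_tower_mem I (((n + 1 : ℕ) : ℝ))⁻¹ h2
  rwa [smul_smul, inv_mul_cancel₀ (by exact_mod_cast Nat.succ_ne_zero n), one_smul] at h3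

lemma lemB (IX IY : Ideal (MvPowerSeries (Fin m) ℝ)) (H : Fin rr → MvPowerSeries (Fin m) ℝ)
    (L : Fin rr → (Fin m → MvPowerSeries (Fin m) ℝ))
    (hLH : ∀ i j, vfApply (L i) (H j) = if j = i then 1 else 0)
    (hLtan : ∀ i, VTangent (L i) IY) (hHX : ∀ j, H j ∈ IX) :
    ∀ (t : ℕ) (c : (Fin t → Fin rr) → MvPowerSeries (Fin m) ℝ),
      (∀ (σ : Equiv.Perm (Fin t)) k, c (k ∘ σ) = c k) →
      (∑ k, c k * MON H t k) ∈ IX ^ (t + 1) + IY → ∀ k, c k ∈ IX + IY := by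
  intro t
  induction t with
  | zero =>
      intro c _ hmem k
      haveI : Unique (Fin 0 → Fin rr) := ⟨⟨Fin.elim0⟩, fun f => funext fun j => j.elim0⟩
      rw [Fintype.sum_unique] at hmem
      have h1 : MON H 0 (default : Fin 0 → Fin rr) = 1 := by simp [MON]
      rw [h1, mul_one] at hmem
      have hk : c k = c default := congrArg c (Subsingleton.elim _ _)
      rw [hk]
      rwa [pow_one] at hmem
  | succ t ih =>
      intro c hsym hmem k
      have main : ∀ (i : Fin rr) (k' : Fin t → Fin rr), c (Fin.cons i k') ∈ IX + IY := by
        intro i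
        set c' : (Fin t → Fin rr) → MvPowerSeries (Fin m) ℝ :=
          fun k' => c (Fin.cons i k') with hc'
        have hsym' : ∀ (τ : Equiv.Perm (Fin t)) k', c' (k' ∘ τ) = c' k' := by
          intro τ k'
          show c (Fin.cons i (k' ∘ τ)) = c (Fin.cons i k')
          rw [cons_comp_perm, hsym]
        have hd : vfApply (L i) (∑ kk, c kk * MON H (t + 1) kk) ∈ IX ^ (t + 1) + IY :=
          vf_drop IX IY (L i) (hLtan i) (t + 1) _ hmem
        rw [core_identity H L hLH t c hsym i] at hd
        have hmon : (∑ kk, MON H (t + 1) kk * vfApply (L i) (c kk)) ∈ IX ^ (t + 1) + IY := by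
          rw [Submodule.add_eq_sup]
          refine Submodule.sum_mem _ fun kk _ => Submodule.mem_sup_left ?_
          exact Ideal.mul_mem_right _ _ (MON_mem_pow H hHX (t + 1) kk)
        have hsmul : ((t + 1) • (∑ k', c' k' * MON H t k')) ∈ IX ^ (t + 1) + IY := by
          have := sub_mem hd hmon
          simpa using this
        exact ih c' hsym' (nsmul_mem_ideal t hsmul)
      have hk : c k = c (Fin.cons (k 0) (Fin.tail k)) := by rw [Fin.cons_self_tail]
      rw [hk]
      exact main (k 0) (Fin.tail k)

lemma lemA (IX IY : Ideal (MvPowerSeries (Fin m) ℝ)) (H : Fin rr → MvPowerSeries (Fin m) ℝ)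
    (L : Fin rr → (Fin m → MvPowerSeries (Fin m) ℝ))
    (hLH : ∀ i j, vfApply (L i) (H j) = if j = i then 1 else 0)
    (hLtan : ∀ i, VTangent (L i) IY) (hHX : ∀ j, H j ∈ IX)
    (hcover : IX ≤ IY ⊔ Ideal.span (Set.range H)) (n : ℕ) (f : MvPowerSeries (Fin m) ℝ)
    (hf : f ∈ IX ^ (n + 1) + IY)
    (hder : ∀ i, vfApply (L i) f ∈ IX ^ (n + 1) + IY) :
    f ∈ IX ^ (n + 2) + IY := by
  obtain ⟨c0, y, hy, rfl⟩ := exists_mon_decomp IX IY H hcover n f hf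
  set c := symz (n + 1) c0 with hcdef
  have hsym : ∀ (σ : Equiv.Perm (Fin (n + 1))) (k : Fin (n + 1) → Fin rr),
      c (k ∘ σ) = c k := symz_sym (n + 1) c0
  have hfeq : (∑ k, c0 k * MON H (n + 1) k) = ∑ k, c k * MON H (n + 1) k :=
    (symz_spec H (n + 1) c0).symm
  have hcmem : ∀ k, c k ∈ IX + IY := by
    have main : ∀ (i : Fin rr) (k' : Fin n → Fin rr), c (Fin.cons i k') ∈ IX + IY := by
      intro i
      set c' : (Fin n → Fin rr) → MvPowerSeries (Fin m) ℝ :=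
        fun k' => c (Fin.cons i k') with hc'
      have hsym' : ∀ (τ : Equiv.Perm (Fin n)) k', c' (k' ∘ τ) = c' k' := by
        intro τ k'
        show c (Fin.cons i (k' ∘ τ)) = c (Fin.cons i k')
        rw [cons_comp_perm, hsym]
      have hd0 := hder i
      rw [vfApply_add] at hd0
      have hdy : vfApply (L i) y ∈ IY := hLtan i y hy
      have hd : vfApply (L i) (∑ k, c k * MON H (n + 1) k) ∈ IX ^ (n + 1) + IY := by
        rw [← hfeq]
        have := sub_mem hd0 (by rw [Submodule.add_eq_sup]; exact Submodule.mem_sup_right hdy)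
        simpa using this
      rw [core_identity H L hLH n c hsym i] at hd
      have hmon : (∑ kk, MON H (n + 1) kk * vfApply (L i) (c kk)) ∈ IX ^ (n + 1) + IY := by
        rw [Submodule.add_eq_sup]
        refine Submodule.sum_mem _ fun kk _ => Submodule.mem_sup_left ?_
        exact Ideal.mul_mem_right _ _ (MON_mem_pow H hHX (n + 1) kk)
      have hsmul : ((n + 1) • (∑ k', c' k' * MON H n k')) ∈ IX ^ (n + 1) + IY := by
        have := sub_mem hd hmon
        simpa using this
      exact lemB IX IY H L hLH hLtan hHX n c' hsym' (nsmul_mem_ideal n hsmul)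
    intro k
    have hk : c k = c (Fin.cons (k 0) (Fin.tail k)) := by rw [Fin.cons_self_tail]
    rw [hk]
    exact main (k 0) (Fin.tail k)
  rw [Submodule.add_eq_sup]
  refine add_mem ?_ (Submodule.mem_sup_right hy)
  rw [hfeq]
  refine Submodule.sum_mem _ fun k _ => ?_
  have hck := hcmem k
  rw [Submodule.add_eq_sup] at hck
  obtain ⟨a, ha, y2, hy2, heq⟩ := Submodule.mem_sup.mp hck
  rw [← heq, add_mul]
  refine add_mem (Submodule.mem_sup_left ?_) (Submodule.mem_sup_right ?_)
  · have : a * MON H (n + 1) k ∈ IX * IX ^ (n + 1) :=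
      Ideal.mul_mem_mul ha (MON_mem_pow H hHX (n + 1) k)
    rwa [← pow_succ'] at this
  · exact Ideal.mul_mem_right _ _ hy2



end E

/-- Testing vanishing of relative jets by derivatives along vector fields tangent to `Y`:
if `F ∈ I(X)^{k''} + I(Y)` and all iterated derivatives of `F` of length `k'` along vector
fields tangent to `Y` lie in `I(X)^{k''-k'+1} + I(Y)`, then `F ∈ I(X)^{k''+1} + I(Y)`. -/
theorem stmt_5 {m : ℕ} (IX IY : Ideal (MvPowerSeries (Fin m) ℝ)) (cX cY : ℕ)
    (hX : IsManifoldIdeal IX cX) (hY : IsManifoldIdeal IY cY) (hXY : IY ≤ IX)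
    (k' k'' : ℕ) (hk' : 0 < k') (hk'' : k' ≤ k'')
    (F : MvPowerSeries (Fin m) ℝ) (hF : F ∈ IX ^ k'' + IY)
    (hder : ∀ L : Fin k' → (Fin m → MvPowerSeries (Fin m) ℝ),
      (∀ j, VTangent (L j) IY) →
      (List.ofFn L).foldr vfApply F ∈ IX ^ (k'' - k' + 1) + IY) :
    F ∈ IX ^ (k'' + 1) + IY := by
  obtain ⟨rr, H, L, hHX, hcover, hLtan, hLH⟩ := exists_normal_data IX IY cX cY hX hY hXY
  have hfoldsucc : ∀ (t : ℕ) (g : Fin (t + 1) → (Fin m → MvPowerSeries (Fin m) ℝ))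
      (x : MvPowerSeries (Fin m) ℝ),
      (List.ofFn g).foldr vfApply x
        = vfApply (g 0) ((List.ofFn (fun j => g j.succ)).foldr vfApply x) := by
    intro t g x
    rw [List.ofFn_succ, List.foldr_cons]
  have hchain : ∀ (t : ℕ), t ≤ k'' → ∀ (K : Fin t → Fin rr),
      (List.ofFn fun j => L (K j)).foldr vfApply F ∈ IX ^ (k'' - t) + IY := by
    intro t
    induction t with
    | zero => intro _ K; simpa using hF
    | succ t iht =>
        intro ht K
        rw [hfoldsucc t (fun j => L (K j)) F]
        have e : k'' - t = (k'' - (t + 1)) + 1 := by omega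
        have inner := iht (by omega) (fun j => K j.succ)
        rw [e] at inner
        exact vf_drop IX IY (L (K 0)) (hLtan (K 0)) _ _ inner
  have main : ∀ (d t : ℕ), t ≤ k' → k' - t = d → ∀ (K : Fin t → Fin rr),
      (List.ofFn fun j => L (K j)).foldr vfApply F ∈ IX ^ (k'' - t + 1) + IY := by
    intro d
    induction d with
    | zero =>
        intro t htk' hd K
        obtain rfl : t = k' := by omega
        exact hder (fun j => L (K j)) (fun j => hLtan (K j))
    | succ d ihd =>
        intro t htk' hd K
        have ht1 : t + 1 ≤ k' := by omega
        have e1 : k'' - t + 1 = (k'' - (t + 1)) + 2 := by omega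
        have e2 : k'' - t = (k'' - (t + 1)) + 1 := by omega
        rw [e1]
        apply lemA IX IY H L hLH hLtan hHX hcover (k'' - (t + 1))
        · have := hchain t (by omega) K
          rwa [e2] at this
        · intro i
          have hcons := ihd (t + 1) ht1 (by omega) (Fin.cons i K)
          rw [hfoldsucc t (fun j => L ((Fin.cons i K : Fin (t+1) → Fin rr) j)) F] at hcons
          simp only [Fin.cons_zero, Fin.cons_succ] at hcons
          exact hcons
  have final := main k' 0 (Nat.zero_le _) (by omega) Fin.elim0
  have hempty : (List.ofFn fun j : Fin 0 => L (Fin.elim0 j)) = [] := by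
    simp
  rw [hempty, List.foldr_nil] at final
  simpa using final
end

section
/- Let O ⊂ 𝕂^m (𝕂 = ℝ or ℂ) be a formal submanifold and L^1,...,L^l formal vector fields tangent to O such that the values L^1_0,...,L^l_0 at 0 span the tangent space T_0 O. Then every formal vector field tangent to O can be written as a 𝕂[[x]]-linear combination of L^1,...,L^l plus a formal vector field with all coefficients in the ideal I(O). -/
open MvPowerSeries Finsupp
open Matrix

set_option maxRecDepth 8000
set_option maxHeartbeats 1000000

section Aux

variable {m : ℕ} {K : Type*} [Field K]

lemma coeff_single_mul (i : Fin m) (g f : MvPowerSeries (Fin m) K) :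
    MvPowerSeries.coeff (Finsupp.single i 1) (g * f) =
      constantCoeff g * MvPowerSeries.coeff (Finsupp.single i 1) f +
      MvPowerSeries.coeff (Finsupp.single i 1) g * constantCoeff f := by
  rw [MvPowerSeries.coeff_mul, Finsupp.antidiagonal_single, Finset.sum_map,
    show (1:ℕ) = 0 + 1 from rfl, Finset.Nat.antidiagonal_succ]
  rw [Finset.sum_cons]
  simp [MvPowerSeries.coeff_zero_eq_constantCoeff, add_comm]

lemma constCoeff_psDeriv (i : Fin m) (f : MvPowerSeries (Fin m) K) :
    constantCoeff (psDeriv i f) = MvPowerSeries.coeff (Finsupp.single i 1) f := by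
  show ((((0 : Fin m →₀ ℕ) i + 1 : ℕ)) : K) * MvPowerSeries.coeff (0 + Finsupp.single i 1) f = _
  simp

lemma ideal_coeffs {c : ℕ} (F : Fin c → MvPowerSeries (Fin m) K)
    (hF0 : ∀ j, constantCoeff (F j) = 0) :
    ∀ f ∈ Ideal.span (Set.range F),
      constantCoeff f = 0 ∧
      (fun i => MvPowerSeries.coeff (Finsupp.single i 1) f) ∈
        Submodule.span K
          (Set.range fun j => fun i => MvPowerSeries.coeff (Finsupp.single i 1) (F j)) := by
  intro f hf
  refine Submodule.span_induction ?_ ?_ ?_ ?_ hf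
  · rintro x ⟨j, rfl⟩
    exact ⟨hF0 j, Submodule.subset_span ⟨j, rfl⟩⟩
  · exact ⟨map_zero _, by
      have : (fun i => MvPowerSeries.coeff (Finsupp.single i 1) (0 : MvPowerSeries (Fin m) K))
          = 0 := by funext i; simp
      rw [this]; exact Submodule.zero_mem _⟩
  · rintro x y hx hy ⟨hx0, hxs⟩ ⟨hy0, hys⟩
    refine ⟨by rw [map_add, hx0, hy0, add_zero], ?_⟩
    have : (fun i => MvPowerSeries.coeff (Finsupp.single i 1) (x + y))
        = (fun i => MvPowerSeries.coeff (Finsupp.single i 1) x)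
          + fun i => MvPowerSeries.coeff (Finsupp.single i 1) y := by
      funext i; simp
    rw [this]; exact Submodule.add_mem _ hxs hys
  · rintro a x hx ⟨hx0, hxs⟩
    constructor
    · show constantCoeff (a * x) = 0
      rw [RingHom.map_mul, hx0, mul_zero]
    · have : (fun i => MvPowerSeries.coeff (Finsupp.single i 1) (a • x))
          = constantCoeff a • fun i => MvPowerSeries.coeff (Finsupp.single i 1) x := by
        funext i
        show MvPowerSeries.coeff (Finsupp.single i 1) (a * x) = _
        rw [coeff_single_mul, hx0, mul_zero, add_zero]; rfl
      rw [this]; exact Submodule.smul_mem _ _ hxs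

lemma isUnit_det_of_const {p : Type*} [Fintype p] [DecidableEq p]
    (N : Matrix p p (MvPowerSeries (Fin m) K))
    (h : IsUnit ((N.map (constantCoeff)).det)) : IsUnit N.det := by
  rw [MvPowerSeries.isUnit_iff_constantCoeff, RingHom.map_det]
  exact h

lemma sum_range_e {c : ℕ} {α : Type*} [AddCommMonoid α] (e : Fin c → Fin m)
    (he : Function.Injective e) (f : Fin m → α) (hf : ∀ i, i ∉ Set.range e → f i = 0) :
    ∑ i, f i = ∑ s, f (e s) := by
  classical
  have h1 : ∑ i ∈ Finset.univ.image e, f i = ∑ i, f i :=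
    Finset.sum_subset (Finset.subset_univ _)
      (fun i _ hi => hf i (fun ⟨s, hs⟩ => hi (Finset.mem_image.mpr ⟨s, Finset.mem_univ s, hs⟩)))
  rw [← h1, Finset.sum_image (fun s _ t _ hst => he hst)]

lemma exists_solution {p : Type*} [Fintype p] [DecidableEq p] {l : ℕ}
    (M : Matrix p (Fin l) (MvPowerSeries (Fin m) K))
    (hs : ∀ t0 : p → K, ∃ x0 : Fin l → K, (M.map (constantCoeff)) *ᵥ x0 = t0)
    (t : p → MvPowerSeries (Fin m) K) :
    ∃ x : Fin l → MvPowerSeries (Fin m) K, M *ᵥ x = t := by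
  classical
  choose x0 hx0 using hs
  set C : Matrix (Fin l) p (MvPowerSeries (Fin m) K) :=
    fun j i => MvPowerSeries.C (x0 (Pi.single i 1) j) with hC
  have hMC : (M * C).map (constantCoeff) = 1 := by
    ext i i'
    have h1 := congrFun (hx0 (Pi.single i' 1)) i
    simp only [Matrix.mulVec, dotProduct, Matrix.map_apply] at h1
    simp only [Matrix.map_apply, Matrix.mul_apply]
    simp only [map_sum, RingHom.map_mul, hC,
      MvPowerSeries.constantCoeff_C]
    rw [h1, Matrix.one_apply, Pi.single_apply]
  have hdet : IsUnit (M * C).det := by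
    apply isUnit_det_of_const
    rw [hMC]; simp
  refine ⟨C *ᵥ ((M * C)⁻¹ *ᵥ t), ?_⟩
  rw [Matrix.mulVec_mulVec, Matrix.mulVec_mulVec, Matrix.mul_nonsing_inv _ hdet,
    Matrix.one_mulVec]

lemma exists_good_cols {c : ℕ} (A : Matrix (Fin c) (Fin m) K)
    (h : LinearIndependent K fun j => A j) :
    ∃ e : Fin c → Fin m, Function.Injective e ∧ IsUnit ((A.submatrix id e).det) := by
  classical
  have hrank : A.rank = c := by simpa using h.rank_matrix
  have hspan : Submodule.span K (Set.range Aᵀ) = ⊤ := by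
    apply Submodule.eq_top_of_finrank_eq
    rw [show Set.range Aᵀ = Set.range A.col from rfl, ← Matrix.rank_eq_finrank_span_cols, hrank]
    simp [Module.finrank_pi]
  obtain ⟨b, hbsub, hbspan, hbind⟩ := exists_linearIndependent K (Set.range Aᵀ)
  rw [hspan] at hbspan
  have hbfin : b.Finite := hbind.setFinite
  haveI := hbfin.fintype
  have hbbasis : Module.Basis b K (Fin c → K) :=
    Module.Basis.mk hbind (by rw [Subtype.range_coe]; exact hbspan.ge)
  have hcard : Fintype.card b = c := by
    have := Module.finrank_eq_card_basis hbbasis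
    simp [Module.finrank_pi] at this
    rw [Set.ncard_eq_toFinset_card', Set.toFinset_card] at this
    omega
  let ε : b ≃ Fin c := Fintype.equivFinOfCardEq hcard
  have hmem : ∀ x : b, (x : Fin c → K) ∈ Set.range Aᵀ := fun x => hbsub x.2
  choose ix hix using hmem
  refine ⟨fun s => ix (ε.symm s), ?_, ?_⟩
  · intro s s' hss
    have hss' : ix (ε.symm s) = ix (ε.symm s') := hss
    have : (ε.symm s : Fin c → K) = (ε.symm s' : Fin c → K) := by
      rw [← hix (ε.symm s), ← hix (ε.symm s'), hss']
    exact ε.symm.injective (Subtype.ext this)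
  · rw [← Matrix.isUnit_iff_isUnit_det]
    rw [← Matrix.linearIndependent_cols_iff_isUnit]
    have heq : (fun s => (A.submatrix id (fun s => ix (ε.symm s)))ᵀ s)
        = fun s => ((ε.symm s : Fin c → K)) := by
      funext s
      exact hix (ε.symm s)
    rw [show (A.submatrix id fun s => ix (ε.symm s)).col = fun s => ((ε.symm s : Fin c → K)) from heq]
    exact hbind.comp ε.symm ε.symm.injective

end Aux

/-- If the values at `0` of tangent vector fields `L^1,…,L^l` span the tangent space `T₀O`,
then every vector field tangent to `O` is a `𝕂[[x]]`-combination of them modulo `I(O)`. -/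
theorem stmt_6 {m : ℕ} {𝕂 : Type} [RCLike 𝕂]
    (I : Ideal (MvPowerSeries (Fin m) 𝕂)) (c : ℕ) (hI : IsManifoldIdeal I c)
    (l : ℕ) (L : Fin l → (Fin m → MvPowerSeries (Fin m) 𝕂))
    (hLt : ∀ j, VTangent (L j) I)
    (hspan : ∀ ξ : Fin m → 𝕂,
      (∀ f ∈ I, ∑ i, ξ i * MvPowerSeries.coeff (Finsupp.single i 1) f = 0) →
      ξ ∈ Submodule.span 𝕂
        (Set.range fun j => fun i => MvPowerSeries.constantCoeff (L j i))) :
    ∀ L' : Fin m → MvPowerSeries (Fin m) 𝕂, VTangent L' I →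
      ∃ c' : Fin l → MvPowerSeries (Fin m) 𝕂, ∀ i, L' i - ∑ j, c' j * L j i ∈ I := by
  classical
  obtain ⟨F, hIF, hF0, hFind⟩ := hI
  intro L' hL'
  set J : Matrix (Fin c) (Fin m) (MvPowerSeries (Fin m) 𝕂) := fun s i => psDeriv i (F s) with hJ
  set J0 : Matrix (Fin c) (Fin m) 𝕂 :=
    fun s i => MvPowerSeries.coeff (Finsupp.single i 1) (F s) with hJ0
  have hFmem : ∀ s, F s ∈ I := fun s => hIF ▸ Ideal.subset_span ⟨s, rfl⟩
  have hJv : ∀ (X : Fin m → MvPowerSeries (Fin m) 𝕂), VTangent X I → ∀ s, (J *ᵥ X) s ∈ I := by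
    intro X hX s
    have h1 : vfApply X (F s) ∈ I := hX (F s) (hFmem s)
    have h2 : (J *ᵥ X) s = vfApply X (F s) := by
      simp only [Matrix.mulVec, dotProduct, vfApply, hJ]
      exact Finset.sum_congr rfl fun i _ => mul_comm _ _
    rwa [h2]
  obtain ⟨e, he, hBdet0⟩ := exists_good_cols J0 hFind
  set B : Matrix (Fin c) (Fin c) (MvPowerSeries (Fin m) 𝕂) := J.submatrix id e with hB
  have hBmap : B.map (constantCoeff) = J0.submatrix id e := by
    ext s t; exact constCoeff_psDeriv _ _
  have hBdet : IsUnit B.det := isUnit_det_of_const B (by rw [hBmap]; exact hBdet0)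
  set M : Matrix {i : Fin m // i ∉ Set.range e} (Fin l) (MvPowerSeries (Fin m) 𝕂) :=
    fun i j => L j i.1 with hM
  -- surjectivity of `M` at the origin
  have hbasis : ∀ i0 : {i : Fin m // i ∉ Set.range e}, ∃ x0 : Fin l → 𝕂,
      (M.map (constantCoeff)) *ᵥ x0 = (fun i' => if i' = i0 then 1 else 0) := by
    intro i0
    set B0 := J0.submatrix id e with hB0
    set g : Fin c → 𝕂 := fun s => J0 s i0.1 with hg
    set u : Fin c → 𝕂 := B0⁻¹ *ᵥ g with hu
    set v : Fin m → 𝕂 :=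
      fun i => (if i = i0.1 then 1 else 0) - (if h : ∃ s, e s = i then u h.choose else 0) with hv
    have hvsub : ∀ i' : {i : Fin m // i ∉ Set.range e},
        v i'.1 = if i' = i0 then 1 else 0 := by
      intro i'
      have hne : ¬ ∃ s, e s = i'.1 := fun hex => i'.2 hex
      rw [hv]
      simp only [dif_neg hne, sub_zero]
      by_cases h : i' = i0
      · rw [if_pos h, if_pos (by rw [h])]
      · rw [if_neg h, if_neg (fun hh => h (Subtype.ext hh))]
    have hvker : ∀ s, ∑ i, J0 s i * v i = 0 := by
      intro s
      simp only [hv, mul_sub]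
      rw [Finset.sum_sub_distrib]
      have h1 : ∑ i, J0 s i * (if i = i0.1 then 1 else 0) = J0 s i0.1 := by
        simp [mul_ite]
      have h2 : ∑ i, J0 s i * (if h : ∃ t, e t = i then u h.choose else 0)
          = ∑ t, J0 s (e t) * u t := by
        rw [sum_range_e e he _ (fun i hi => by
          rw [dif_neg (show ¬∃ t, e t = i from fun hex => hi hex), mul_zero])]
        refine Finset.sum_congr rfl fun t _ => ?_
        have hex : ∃ t', e t' = e t := ⟨t, rfl⟩
        rw [dif_pos hex, he hex.choose_spec]
      rw [h1, h2, sub_eq_zero]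
      have h3 : ∑ t, J0 s (e t) * u t = (B0 *ᵥ u) s := rfl
      rw [h3, hu, Matrix.mulVec_mulVec, Matrix.mul_nonsing_inv _ hBdet0, Matrix.one_mulVec]
    have hvT : ∀ f ∈ I, ∑ i, v i * MvPowerSeries.coeff (Finsupp.single i 1) f = 0 := by
      intro f hf
      have hcoeff := (ideal_coeffs F hF0 f (hIF ▸ hf)).2
      refine Submodule.span_induction (p := fun w _ => ∑ i, v i * w i = 0)
        ?_ ?_ ?_ ?_ hcoeff
      · rintro w ⟨j, rfl⟩
        rw [← hvker j]
        exact Finset.sum_congr rfl fun i _ => mul_comm _ _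
      · simp
      · intro x y hx hy hx' hy'
        simp only [Pi.add_apply, mul_add, Finset.sum_add_distrib, hx', hy', add_zero]
      · intro a x hx hx'
        simp only [Pi.smul_apply, smul_eq_mul, mul_left_comm, ← Finset.mul_sum, hx', mul_zero]
    have hvmem := hspan v hvT
    rw [Submodule.mem_span_range_iff_exists_fun] at hvmem
    obtain ⟨a, ha⟩ := hvmem
    refine ⟨a, funext fun i' => ?_⟩
    have h4 := congrFun ha i'.1
    rw [Finset.sum_apply] at h4
    simp only [Pi.smul_apply, smul_eq_mul] at h4
    have h5 : ((M.map (constantCoeff)) *ᵥ a) i'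
        = ∑ j, a j * constantCoeff (L j i'.1) := by
      simp only [Matrix.mulVec, dotProduct, Matrix.map_apply, hM]
      exact Finset.sum_congr rfl fun j _ => mul_comm _ _
    rw [h5, h4, hvsub i']
  have hsurj : ∀ t0 : {i : Fin m // i ∉ Set.range e} → 𝕂, ∃ x0 : Fin l → 𝕂,
      (M.map (constantCoeff)) *ᵥ x0 = t0 := by
    intro t0
    choose xb hxb using hbasis
    refine ⟨∑ i0, t0 i0 • xb i0, ?_⟩
    have h6 : (M.map (constantCoeff)) *ᵥ (∑ i0, t0 i0 • xb i0)
        = ∑ i0, t0 i0 • ((M.map (constantCoeff)) *ᵥ xb i0) := by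
      simp only [← Matrix.mulVecLin_apply, map_sum, _root_.map_smul]
    rw [h6]
    funext i'
    rw [Finset.sum_apply]
    simp only [hxb, Pi.smul_apply, smul_eq_mul, mul_ite, mul_one, mul_zero]
    simp
  obtain ⟨c', hc'⟩ := exists_solution M hsurj (fun i => L' i.1)
  refine ⟨c', ?_⟩
  have hρ0 : ∀ i0 : {i : Fin m // i ∉ Set.range e},
      L' i0.1 - ∑ j, c' j * L j i0.1 = 0 := by
    intro i0
    have h7 := congrFun hc' i0
    simp only [Matrix.mulVec, dotProduct, hM] at h7
    rw [sub_eq_zero, ← h7]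
    exact Finset.sum_congr rfl fun j _ => mul_comm _ _
  set ρ : Fin m → MvPowerSeries (Fin m) 𝕂 := fun i => L' i - ∑ j, c' j * L j i with hρ
  have hρ00 : ∀ i, i ∉ Set.range e → ρ i = 0 := fun i hi => hρ0 ⟨i, hi⟩
  have hρJ : ∀ s, (J *ᵥ ρ) s ∈ I := by
    intro s
    have expand : (J *ᵥ ρ) s = (J *ᵥ L') s - ∑ j, c' j * (J *ᵥ (L j)) s := by
      simp only [Matrix.mulVec, dotProduct, hρ, mul_sub, Finset.sum_sub_distrib,
        Finset.mul_sum]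
      congr 1
      rw [Finset.sum_comm]
      refine Finset.sum_congr rfl fun i _ => Finset.sum_congr rfl fun j _ => by ring
    rw [expand]
    exact Ideal.sub_mem _ (hJv L' hL' s)
      (Ideal.sum_mem _ fun j _ => Ideal.mul_mem_left _ _ (hJv (L j) (hLt j) s))
  have hw : ∀ t : Fin c, ρ (e t) ∈ I := by
    have hBw : ∀ s, (B *ᵥ fun t => ρ (e t)) s ∈ I := by
      intro s
      have h8 : (B *ᵥ fun t => ρ (e t)) s = (J *ᵥ ρ) s := by
        simp only [Matrix.mulVec, dotProduct, hB, Matrix.submatrix_apply, id_eq]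
        rw [sum_range_e e he (fun i => J s i * ρ i) (fun i hi => by
          show J s i * ρ i = 0
          rw [hρ00 i hi, mul_zero])]
      rw [h8]
      exact hρJ s
    intro t
    have h9 : (fun t => ρ (e t)) = B⁻¹ *ᵥ (B *ᵥ fun t => ρ (e t)) := by
      rw [Matrix.mulVec_mulVec, Matrix.nonsing_inv_mul _ hBdet, Matrix.one_mulVec]
    have h10 := congrFun h9 t
    rw [h10]
    simp only [Matrix.mulVec, dotProduct]
    exact Ideal.sum_mem _ fun s _ => Ideal.mul_mem_left _ _ (hBw s)
  intro i
  by_cases hi : i ∈ Set.range e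
  · obtain ⟨t, rfl⟩ := hi
    exact hw t
  · show ρ i ∈ I
    rw [hρ00 i hi]
    exact Ideal.zero_mem I
end

section
/- Let O ⊂ ℂ^n be a formal CR submanifold and V its intrinsic complexification. Then O is generic in V, i.e., T_0 O + J T_0 O = T_0 V, where J is the standard complex structure. -/
open MvPowerSeries Finsupp

/-- A manifold ideal of codimension `k`: generated by `k` series vanishing at `0` with
linearly independent differentials at `0`. -/
def IsManifoldIdealOn {σ : Type*} {K : Type*} [Field K]
    (I : Ideal (MvPowerSeries σ K)) (k : ℕ) : Prop :=
  ∃ F : Fin k → MvPowerSeries σ K,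
    I = Ideal.span (Set.range F) ∧
    (∀ j, MvPowerSeries.constantCoeff (F j) = 0) ∧
    LinearIndependent K (fun j => fun i => MvPowerSeries.coeff (Finsupp.single i 1) (F j))

/-- The conjugation `σ` on `ℂ[[z,ζ]]`: conjugate the coefficients and swap `z ↔ ζ`. -/
noncomputable def sigmaConj {n : ℕ} (f : MvPowerSeries (Fin n ⊕ Fin n) ℂ) :
    MvPowerSeries (Fin n ⊕ Fin n) ℂ :=
  fun α => (starRingEnd ℂ)
    (MvPowerSeries.coeff (Finsupp.equivMapDomain (Equiv.sumComm (Fin n) (Fin n)) α) f)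

/-- Application of a formal `(1,0)` vector field `Σ a_j ∂_{z_j}`. -/
noncomputable def apply10 {n : ℕ} (a : Fin n → MvPowerSeries (Fin n ⊕ Fin n) ℂ)
    (f : MvPowerSeries (Fin n ⊕ Fin n) ℂ) : MvPowerSeries (Fin n ⊕ Fin n) ℂ :=
  ∑ j, a j * psDeriv (Sum.inl j) f

/-- A power series in `ℂ[[z,ζ]]` depends only on the variables in `T`. -/
def DependsOnlyOn {n : ℕ} (f : MvPowerSeries (Fin n ⊕ Fin n) ℂ)
    (T : Set (Fin n ⊕ Fin n)) : Prop :=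
  ∀ α : (Fin n ⊕ Fin n) →₀ ℕ, (∃ i ∉ T, α i ≠ 0) → MvPowerSeries.coeff α f = 0

/-- The `(1,0)` tangent space at `0` of the formal submanifold with complexified ideal `I`. -/
def H10at0 {n : ℕ} (I : Ideal (MvPowerSeries (Fin n ⊕ Fin n) ℂ)) : Set (Fin n → ℂ) :=
  {v | ∀ f ∈ I, ∑ j, v j * MvPowerSeries.coeff (Finsupp.single (Sum.inl j) 1) f = 0}

/-- The formal submanifold with σ-invariant complexified ideal `I` is CR: every `(1,0)`
tangent vector at `0` extends to a formal `(1,0)` vector field preserving `I`. -/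
def IsCRIdeal {n : ℕ} (I : Ideal (MvPowerSeries (Fin n ⊕ Fin n) ℂ)) : Prop :=
  ∀ v ∈ H10at0 I, ∃ a : Fin n → MvPowerSeries (Fin n ⊕ Fin n) ℂ,
    (∀ f ∈ I, apply10 a f ∈ I) ∧ ∀ j, MvPowerSeries.constantCoeff (a j) = v j

/-- The real tangent space at `0` of the real formal submanifold with σ-invariant
complexified ideal `I` (real vectors `v` are complexified to `(v, v̄)`). -/
def T0Real {n : ℕ} (I : Ideal (MvPowerSeries (Fin n ⊕ Fin n) ℂ)) : Set (Fin n → ℂ) :=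
  {v | ∀ f ∈ I,
    (∑ j, v j * MvPowerSeries.coeff (Finsupp.single (Sum.inl j) 1) f) +
    (∑ j, (starRingEnd ℂ) (v j) * MvPowerSeries.coeff (Finsupp.single (Sum.inr j) 1) f) = 0}

/-- The tangent space at `0` of the intrinsic complexification, defined by the ideal
`I ∩ ℂ[[z]]`, viewed as a real subspace of `ℂ^n`. -/
def T0IntrCx {n : ℕ} (I : Ideal (MvPowerSeries (Fin n ⊕ Fin n) ℂ)) : Set (Fin n → ℂ) :=
  {v | ∀ f ∈ I, DependsOnlyOn f (Set.range Sum.inl) →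
    ∑ j, v j * MvPowerSeries.coeff (Finsupp.single (Sum.inl j) 1) f = 0}


namespace CRP


variable {n : ℕ}

abbrev V (n : ℕ) := Fin n ⊕ Fin n
abbrev Rn (n : ℕ) := MvPowerSeries (V n) ℂ

/-- `f` does not involve the variable `x`. -/
def NoVar (x : V n) (f : Rn n) : Prop :=
  ∀ β : V n →₀ ℕ, β x ≠ 0 → MvPowerSeries.coeff β f = 0

/-- total degree of a monomial -/
def dsum (β : V n →₀ ℕ) : ℕ := β.sum fun _ k => k

lemma dsum_add (a b : V n →₀ ℕ) : dsum (a + b) = dsum a + dsum b := by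
  unfold dsum
  exact Finsupp.sum_add_index' (fun _ => rfl) (fun _ _ _ => rfl)

lemma le_dsum (β : V n →₀ ℕ) (i : V n) : β i ≤ dsum β := by
  unfold dsum
  by_cases h : i ∈ β.support
  · exact Finset.single_le_sum (fun j _ => Nat.zero_le _) h
  · simp [Finsupp.notMem_support_iff.mp h]

lemma dsum_eq_zero_iff (β : V n →₀ ℕ) : dsum β = 0 ↔ β = 0 := by
  constructor
  · intro h
    ext i
    have := le_dsum β i
    simp only [Finsupp.coe_zero, Pi.zero_apply]
    omega
  · rintro rfl
    simp [dsum]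

lemma dsum_single (i : V n) (k : ℕ) : dsum (Finsupp.single i k) = k := by
  unfold dsum
  exact Finsupp.sum_single_index rfl

lemma dsum_erase (x : V n) (β : V n →₀ ℕ) : dsum (β.erase x) + β x = dsum β := by
  conv_rhs => rw [← Finsupp.erase_add_single x β]
  rw [dsum_add, dsum_single]

/-- weight: variable `x` counts once, all other variables count twice -/
noncomputable def wt (x : V n) (β : V n →₀ ℕ) : ℕ := dsum β + dsum (β.erase x)

lemma wt_def (x : V n) (β : V n →₀ ℕ) : wt x β = dsum β + dsum (β.erase x) := rfl

lemma wt_add (x : V n) (a b : V n →₀ ℕ) : wt x (a + b) = wt x a + wt x b := by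
  unfold wt
  rw [Finsupp.erase_add, dsum_add, dsum_add]
  ring

lemma wt_eq_zero_iff (x : V n) (β : V n →₀ ℕ) : wt x β = 0 ↔ β = 0 := by
  unfold wt
  constructor
  · intro h
    have h1 : dsum β = 0 := by omega
    exact (dsum_eq_zero_iff β).mp h1
  · rintro rfl
    simp [dsum]

lemma wt_single_one (x : V n) : wt x (Finsupp.single x 1) = 1 := by
  unfold wt
  rw [dsum_single, Finsupp.erase_single]
  simp [dsum]

lemma wt_le_of_le {x : V n} {γ β : V n →₀ ℕ} (h : γ ≤ β) : wt x γ ≤ wt x β := by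
  obtain ⟨δ, rfl⟩ := le_iff_exists_add.mp h
  rw [wt_add]; omega

lemma wt_eq_one_iff (x : V n) (β : V n →₀ ℕ) : wt x β = 1 ↔ β = Finsupp.single x 1 := by
  constructor
  · intro h
    have hd := dsum_erase x β
    have h2 : dsum (β.erase x) = 0 := by rw [wt_def] at h; omega
    have h3 : β.erase x = 0 := (dsum_eq_zero_iff _).mp h2
    have h4 : β = Finsupp.single x (β x) := by
      ext i
      by_cases hi : i = x
      · subst hi; simp
      · have := DFunLike.congr_fun h3 i
        rw [Finsupp.erase_ne hi] at this
        simp [Finsupp.single_apply, Ne.symm hi, this]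
    have h5 : dsum β = 1 := by
      rw [wt_def] at h; omega
    rw [h4] at h5 ⊢
    rw [dsum_single] at h5
    rw [h5]
  · rintro rfl
    exact wt_single_one x




/-- the cofactor of `x` : `pA x f = (f - (f with x := 0))/x` -/
noncomputable def pA (x : V n) (f : Rn n) : Rn n :=
  fun β => MvPowerSeries.coeff (β + Finsupp.single x 1) f

/-- the part of `f` not involving `x` -/
noncomputable def pB (x : V n) (f : Rn n) : Rn n :=
  fun β => if β x = 0 then MvPowerSeries.coeff β f else 0

lemma coeff_pA (x : V n) (f : Rn n) (β : V n →₀ ℕ) :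
    MvPowerSeries.coeff β (pA x f) = MvPowerSeries.coeff (β + Finsupp.single x 1) f := rfl

lemma coeff_pB (x : V n) (f : Rn n) (β : V n →₀ ℕ) :
    MvPowerSeries.coeff β (pB x f) =
      if β x = 0 then MvPowerSeries.coeff β f else 0 := rfl

lemma noVar_pB (x : V n) (f : Rn n) : NoVar x (pB x f) := by
  intro β hβ
  rw [coeff_pB, if_neg hβ]

lemma coeff_X_mul' (x : V n) (f : Rn n) (β : V n →₀ ℕ) :
    MvPowerSeries.coeff β (X x * f) =
      if β x = 0 then 0 else MvPowerSeries.coeff (β - Finsupp.single x 1) f := by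
  rw [MvPowerSeries.X, coeff_monomial_mul]
  by_cases h : β x = 0
  · rw [if_neg, if_pos h]
    rw [Finsupp.single_le_iff]
    omega
  · rw [if_pos, if_neg h, one_mul]
    rw [Finsupp.single_le_iff]
    omega

lemma pA_X_mul (x : V n) (f : Rn n) : pA x (X x * f) = f := by
  ext β
  rw [coeff_pA, coeff_X_mul']
  have h : (β + Finsupp.single x 1 : V n →₀ ℕ) x ≠ 0 := by simp
  rw [if_neg h, add_tsub_cancel_right]

lemma split_eq (x : V n) (f : Rn n) : f = pB x f + X x * pA x f := by
  ext β
  rw [map_add, coeff_pB, coeff_X_mul']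
  by_cases h : β x = 0
  · rw [if_pos h, if_pos h, add_zero]
  · rw [if_neg h, if_neg h, zero_add, coeff_pA, tsub_add_cancel_of_le]
    rw [Finsupp.single_le_iff]
    omega

lemma pA_add (x : V n) (f g : Rn n) : pA x (f + g) = pA x f + pA x g := by
  ext β; rw [coeff_pA, map_add, map_add, coeff_pA, coeff_pA]

lemma pA_sub (x : V n) (f g : Rn n) : pA x (f - g) = pA x f - pA x g := by
  ext β; rw [coeff_pA, map_sub, map_sub, coeff_pA, coeff_pA]

lemma pA_of_noVar {x : V n} {f : Rn n} (h : NoVar x f) : pA x f = 0 := by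
  ext β
  rw [coeff_pA, map_zero]
  apply h
  simp

lemma noVar_mul {x : V n} {f g : Rn n} (hf : NoVar x f) (hg : NoVar x g) :
    NoVar x (f * g) := by
  intro β hβ
  rw [MvPowerSeries.coeff_mul]
  apply Finset.sum_eq_zero
  rintro ⟨γ, δ⟩ hmem
  rw [Finset.HasAntidiagonal.mem_antidiagonal] at hmem
  have : γ x + δ x = β x := by
    rw [← hmem]; simp
  rcases Nat.eq_zero_or_pos (γ x) with h1 | h1
  · have : δ x ≠ 0 := by omega
    rw [hg δ this, mul_zero]
  · rw [hf γ (by omega), zero_mul]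

lemma pA_mul_noVar {x : V n} (u : Rn n) {w : Rn n} (hw : NoVar x w) :
    pA x (u * w) = pA x u * w := by
  conv_lhs => rw [show u * w = pB x u * w + X x * (pA x u * w) by
    conv_lhs => rw [split_eq x u]
    ring]
  rw [pA_add, pA_of_noVar (noVar_mul (noVar_pB x u) hw), zero_add, pA_X_mul]



-- chunk 3: weighted order, misc coefficient lemmas
def wOrd (x : V n) (N : ℕ) (f : Rn n) : Prop :=
  ∀ β : V n →₀ ℕ, wt x β < N → MvPowerSeries.coeff β f = 0

lemma wOrd_mono {x : V n} {N M : ℕ} (h : M ≤ N) {f : Rn n} (hf : wOrd x N f) :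
    wOrd x M f := fun β hβ => hf β (lt_of_lt_of_le hβ h)

lemma wOrd_zero (x : V n) (N : ℕ) : wOrd x N (0 : Rn n) := by
  intro β _; simp

lemma wOrd_any (x : V n) (f : Rn n) : wOrd x 0 f := fun β hβ => absurd hβ (by omega)

lemma wOrd_sub {x : V n} {N : ℕ} {f g : Rn n} (hf : wOrd x N f) (hg : wOrd x N g) :
    wOrd x N (f - g) := by
  intro β hβ
  rw [map_sub, hf β hβ, hg β hβ, sub_zero]

lemma wOrd_mul {x : V n} {N M : ℕ} {f g : Rn n} (hf : wOrd x N f) (hg : wOrd x M g) :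
    wOrd x (N + M) (f * g) := by
  intro β hβ
  rw [MvPowerSeries.coeff_mul]
  apply Finset.sum_eq_zero
  rintro ⟨γ, δ⟩ hmem
  rw [Finset.HasAntidiagonal.mem_antidiagonal] at hmem
  have hw : wt x γ + wt x δ = wt x β := by rw [← wt_add, hmem]
  rcases lt_or_ge (wt x γ) N with h1 | h1
  · rw [hf γ h1, zero_mul]
  · rw [hg δ (by omega), mul_zero]

lemma wOrd_pA {x : V n} {N : ℕ} {f : Rn n} (hf : wOrd x N f) :
    wOrd x (N - 1) (pA x f) := by
  intro β hβ
  rw [coeff_pA]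
  apply hf
  rw [wt_add, wt_single_one]
  omega

lemma noVar_pA {x y : V n} (hxy : y ≠ x) {f : Rn n} (hf : NoVar y f) :
    NoVar y (pA x f) := by
  intro β hβ
  rw [coeff_pA]
  apply hf
  rw [Finsupp.add_apply, Finsupp.single_apply, if_neg (Ne.symm hxy)]
  omega

lemma noVar_pB' {x y : V n} {f : Rn n} (hf : NoVar y f) : NoVar y (pB x f) := by
  intro β hβ
  rw [coeff_pB]
  split
  · exact hf β hβ
  · rfl

lemma noVar_one (y : V n) : NoVar y (1 : Rn n) := by
  intro β hβ
  classical
  rw [MvPowerSeries.coeff_one]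
  have : β ≠ 0 := by
    intro h; rw [h] at hβ; simp at hβ
  rw [if_neg this]

lemma noVar_sub {y : V n} {f g : Rn n} (hf : NoVar y f) (hg : NoVar y g) :
    NoVar y (f - g) := by
  intro β hβ
  rw [map_sub, hf β hβ, hg β hβ, sub_zero]

/-- coefficient of a product at a degree-one monomial -/
lemma coeff_mul_single (t : V n) (f g : Rn n) :
    MvPowerSeries.coeff (Finsupp.single t 1) (f * g) =
      MvPowerSeries.coeff 0 f * MvPowerSeries.coeff (Finsupp.single t 1) g +
      MvPowerSeries.coeff (Finsupp.single t 1) f * MvPowerSeries.coeff 0 g := by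
  rw [MvPowerSeries.coeff_mul, Finsupp.antidiagonal_single, Finset.sum_map]
  have h1 : Finset.HasAntidiagonal.antidiagonal (1 : ℕ) = {(0, 1), (1, 0)} := by decide
  rw [h1]
  simp [Finsupp.single_zero]

/-- the coefficient of `u * v` at `β` only depends on coefficients of `u` of index `≤ β` -/
lemma coeff_mul_congr {β : V n →₀ ℕ} {u u' v : Rn n}
    (h : ∀ γ, γ ≤ β → MvPowerSeries.coeff γ u = MvPowerSeries.coeff γ u') :
    MvPowerSeries.coeff β (u * v) = MvPowerSeries.coeff β (u' * v) := by
  rw [MvPowerSeries.coeff_mul, MvPowerSeries.coeff_mul]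
  apply Finset.sum_congr rfl
  rintro ⟨γ, δ⟩ hmem
  rw [Finset.HasAntidiagonal.mem_antidiagonal] at hmem
  rw [h γ (by rw [← hmem]; exact le_add_right le_rfl)]


-- chunk 4: one-variable elimination
section OneVar

variable (x : V n) (g f : Rn n)

noncomputable def Aseq : ℕ → Rn n
  | 0 => pA x f
  | (k+1) => Aseq k * (1 - pA x g) - pA x (Aseq k) * pB x g

lemma Aseq_zero : Aseq x g f 0 = pA x f := rfl

lemma Aseq_succ (N : ℕ) :
    Aseq x g f (N+1) = Aseq x g f N * (1 - pA x g) - pA x (Aseq x g f N) * pB x g := rfl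

noncomputable def Ssum (N : ℕ) : Rn n := ∑ k ∈ Finset.range N, Aseq x g f k

noncomputable def Sinf : Rn n :=
  fun β => MvPowerSeries.coeff β (Ssum x g f (wt x β + 1))

noncomputable def elim1 : Rn n := f - Sinf x g f * g

lemma coeff_Sinf (β : V n →₀ ℕ) :
    MvPowerSeries.coeff β (Sinf x g f) =
      MvPowerSeries.coeff β (Ssum x g f (wt x β + 1)) := rfl

lemma pA_f_sub_Ssum (N : ℕ) :
    pA x (f - Ssum x g f N * g) = Aseq x g f N := by
  induction N with
  | zero =>
      simp only [Ssum, Finset.range_zero, Finset.sum_empty, zero_mul, sub_zero]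
      rfl
  | succ N ih =>
      have hS : Ssum x g f (N + 1) = Ssum x g f N + Aseq x g f N := by
        unfold Ssum
        rw [Finset.sum_range_succ]
      have hsplit := split_eq x g
      have hg' : ∀ a : Rn n, a * g = a * pB x g + X x * (a * pA x g) := by
        set b := pB x g with hb
        set c := pA x g with hc
        intro a
        rw [hsplit]
        ring
      have key : f - Ssum x g f (N+1) * g
          = (f - Ssum x g f N * g) - (Aseq x g f N * pB x g + X x * (Aseq x g f N * pA x g)) := by
        rw [hS, ← hg']
        ring
      rw [key, pA_sub, ih, pA_add, pA_mul_noVar _ (noVar_pB x g), pA_X_mul, Aseq_succ]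
      ring

lemma wOrd_one_sub_pAg (hgx : MvPowerSeries.coeff (Finsupp.single x 1) g = 1) :
    wOrd x 1 ((1 : Rn n) - pA x g) := by
  intro β hβ
  have hβ0 : β = 0 := (wt_eq_zero_iff x β).mp (by omega)
  subst hβ0
  rw [map_sub, coeff_pA, zero_add, hgx]
  classical
  rw [MvPowerSeries.coeff_one, if_pos rfl, sub_self]

lemma wOrd_pBg (hg0 : MvPowerSeries.constantCoeff g = 0) :
    wOrd x 2 (pB x g) := by
  intro β hβ
  rcases (by omega : wt x β = 0 ∨ wt x β = 1) with h | h
  · have hβ0 : β = 0 := (wt_eq_zero_iff x β).mp h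
    subst hβ0
    rw [coeff_pB, if_pos (show (0 : V n →₀ ℕ) x = 0 by simp), MvPowerSeries.coeff_zero_eq_constantCoeff_apply, hg0]
  · have hβ1 : β = Finsupp.single x 1 := (wt_eq_one_iff x β).mp h
    subst hβ1
    rw [coeff_pB, if_neg (by simp)]

lemma wOrd_Aseq (hg0 : MvPowerSeries.constantCoeff g = 0)
    (hgx : MvPowerSeries.coeff (Finsupp.single x 1) g = 1) (N : ℕ) :
    wOrd x N (Aseq x g f N) := by
  induction N with
  | zero => exact wOrd_any x _
  | succ N ih =>
      show wOrd x (N+1) (Aseq x g f N * (1 - pA x g) - pA x (Aseq x g f N) * pB x g)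
      apply wOrd_sub
      · exact wOrd_mul ih (wOrd_one_sub_pAg x g hgx)
      · apply wOrd_mono (show N + 1 ≤ (N - 1) + 2 by omega)
        exact wOrd_mul (wOrd_pA ih) (wOrd_pBg x g hg0)

lemma coeff_Sinf_stable (hg0 : MvPowerSeries.constantCoeff g = 0)
    (hgx : MvPowerSeries.coeff (Finsupp.single x 1) g = 1)
    (β : V n →₀ ℕ) (N : ℕ) (hN : wt x β < N) :
    MvPowerSeries.coeff β (Sinf x g f) = MvPowerSeries.coeff β (Ssum x g f N) := by
  rw [coeff_Sinf]
  unfold Ssum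
  rw [map_sum, map_sum]
  apply Finset.sum_subset
  · exact Finset.range_subset_range.mpr (by omega)
  · intro k _ hk
    rw [Finset.mem_range, not_lt] at hk
    exact wOrd_Aseq x g f hg0 hgx k β (by omega)

lemma noVar_elim1 (hg0 : MvPowerSeries.constantCoeff g = 0)
    (hgx : MvPowerSeries.coeff (Finsupp.single x 1) g = 1) :
    NoVar x (elim1 x g f) := by
  intro β hβ
  set N := wt x β + 1 with hN
  have h1 : MvPowerSeries.coeff β (Sinf x g f * g)
      = MvPowerSeries.coeff β (Ssum x g f N * g) := by
    apply coeff_mul_congr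
    intro γ hγ
    have : wt x γ ≤ wt x β := wt_le_of_le hγ
    exact coeff_Sinf_stable x g f hg0 hgx γ N (by omega)
  have h2 : MvPowerSeries.coeff β (elim1 x g f)
      = MvPowerSeries.coeff β (f - Ssum x g f N * g) := by
    unfold elim1
    rw [map_sub, map_sub, h1]
  rw [h2]
  -- now use the split of F := f - Ssum N * g
  set F := f - Ssum x g f N * g with hF
  have hsplit := split_eq x F
  rw [hsplit, map_add, coeff_pB, if_neg hβ, zero_add, coeff_X_mul', if_neg hβ]
  have hle : Finsupp.single x 1 ≤ β := by
    rw [Finsupp.single_le_iff]; omega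
  have hwt : wt x (β - Finsupp.single x 1) + 1 = wt x β := by
    have : (β - Finsupp.single x 1) + Finsupp.single x 1 = β := tsub_add_cancel_of_le hle
    conv_rhs => rw [← this]
    rw [wt_add, wt_single_one]
  have hpa : pA x F = Aseq x g f N := pA_f_sub_Ssum x g f N
  rw [hpa]
  exact wOrd_Aseq x g f hg0 hgx N _ (by omega)

lemma coeff_single_elim1 (hg0 : MvPowerSeries.constantCoeff g = 0) (t : V n) :
    MvPowerSeries.coeff (Finsupp.single t 1) (elim1 x g f) =
      MvPowerSeries.coeff (Finsupp.single t 1) f -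
        MvPowerSeries.coeff (Finsupp.single x 1) f *
          MvPowerSeries.coeff (Finsupp.single t 1) g := by
  unfold elim1
  rw [map_sub, coeff_mul_single]
  have hz : MvPowerSeries.coeff 0 g = 0 := by
    rw [MvPowerSeries.coeff_zero_eq_constantCoeff_apply, hg0]
  have hS0 : MvPowerSeries.coeff 0 (Sinf x g f)
      = MvPowerSeries.coeff (Finsupp.single x 1) f := by
    rw [coeff_Sinf]
    have hw0 : wt x (0 : V n →₀ ℕ) = 0 := by
      rw [wt_eq_zero_iff]
    rw [hw0]
    unfold Ssum
    rw [Finset.sum_range_one]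
    show MvPowerSeries.coeff (0 + Finsupp.single x 1) f = _
    rw [zero_add]
  rw [hz, mul_zero, add_zero, hS0]

lemma noVar_Aseq {y : V n} (hxy : y ≠ x) (hf : NoVar y f) (hg : NoVar y g) (N : ℕ) :
    NoVar y (Aseq x g f N) := by
  induction N with
  | zero => exact noVar_pA hxy hf
  | succ N ih =>
      show NoVar y (Aseq x g f N * (1 - pA x g) - pA x (Aseq x g f N) * pB x g)
      apply noVar_sub
      · exact noVar_mul ih (noVar_sub (noVar_one y) (noVar_pA hxy hg))
      · exact noVar_mul (noVar_pA hxy ih) (noVar_pB' hg)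

lemma noVar_elim1_other {y : V n} (hxy : y ≠ x) (hf : NoVar y f) (hg : NoVar y g) :
    NoVar y (elim1 x g f) := by
  have hS : NoVar y (Sinf x g f) := by
    intro β hβ
    rw [coeff_Sinf]
    unfold Ssum
    rw [map_sum]
    apply Finset.sum_eq_zero
    intro k _
    exact noVar_Aseq x g f hxy hf hg k β hβ
  exact noVar_sub hf (noVar_mul hS hg)

/-- Main one-variable elimination lemma. -/
lemma oneVarElim {I : Ideal (Rn n)} (x : V n) {g f : Rn n} (hgI : g ∈ I) (hfI : f ∈ I)
    (hg0 : MvPowerSeries.constantCoeff g = 0)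
    (hgx : MvPowerSeries.coeff (Finsupp.single x 1) g = 1) :
    ∃ h : Rn n, h ∈ I ∧ NoVar x h ∧
      (∀ t, MvPowerSeries.coeff (Finsupp.single t 1) h =
        MvPowerSeries.coeff (Finsupp.single t 1) f -
          MvPowerSeries.coeff (Finsupp.single x 1) f *
            MvPowerSeries.coeff (Finsupp.single t 1) g) ∧
      (∀ y, y ≠ x → NoVar y f → NoVar y g → NoVar y h) := by
  refine ⟨elim1 x g f, ?_, noVar_elim1 x g f hg0 hgx, coeff_single_elim1 x g f hg0,
    fun y hxy hf hg => noVar_elim1_other x g f hxy hf hg⟩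
  exact Ideal.sub_mem I hfI (Ideal.mul_mem_left I _ hgI)

end OneVar

-- chunk 5: eliminating a set of ζ-variables using a delta-normalized family
lemma elim1_mem {I : Ideal (Rn n)} {g f : Rn n} (x : V n) (hgI : g ∈ I) (hfI : f ∈ I) :
    elim1 x g f ∈ I :=
  Ideal.sub_mem I hfI (Ideal.mul_mem_left I _ hgI)

lemma elimList {I : Ideal (Rn n)} (hI0 : ∀ u ∈ I, MvPowerSeries.constantCoeff u = 0) :
    ∀ (L : List (Fin n)), L.Nodup →
    ∀ (gs : Fin n → Rn n),
      (∀ l ∈ L, gs l ∈ I) →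
      (∀ l ∈ L, ∀ l' ∈ L, MvPowerSeries.coeff (Finsupp.single (Sum.inr l') 1) (gs l)
        = if l = l' then 1 else 0) →
    ∀ (f : Rn n), f ∈ I →
      (∀ l ∈ L, MvPowerSeries.coeff (Finsupp.single (Sum.inr l) 1) f = 0) →
    ∃ h, h ∈ I ∧ (∀ l ∈ L, NoVar (Sum.inr l) h) ∧
      (∀ t, MvPowerSeries.coeff (Finsupp.single t 1) h
        = MvPowerSeries.coeff (Finsupp.single t 1) f) ∧
      (∀ y, NoVar y f → (∀ l ∈ L, NoVar y (gs l)) → NoVar y h) := by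
  intro L
  induction L with
  | nil =>
      intro _ gs _ _ f hfI _
      exact ⟨f, hfI, by simp, fun t => rfl, fun y hy _ => hy⟩
  | cons l₀ L ih =>
      intro hnd gs hgI hdelta f hfI hflin
      have hndL : L.Nodup := (List.nodup_cons.mp hnd).2
      have hl₀L : l₀ ∉ L := (List.nodup_cons.mp hnd).1
      set x₀ : V n := Sum.inr l₀ with hx₀
      have hg₀I : gs l₀ ∈ I := hgI l₀ (by simp)
      have hg₀0 : MvPowerSeries.constantCoeff (gs l₀) = 0 := hI0 _ hg₀I
      have hg₀x : MvPowerSeries.coeff (Finsupp.single x₀ 1) (gs l₀) = 1 := by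
        have := hdelta l₀ (by simp) l₀ (by simp)
        simpa using this
      -- eliminate x₀ from f and from the own family
      set f₁ := elim1 x₀ (gs l₀) f with hf₁
      set gs₁ : Fin n → Rn n := fun l => elim1 x₀ (gs l₀) (gs l) with hgs₁
      have hf₁I : f₁ ∈ I := elim1_mem x₀ hg₀I hfI
      have hf₁x : NoVar x₀ f₁ := noVar_elim1 x₀ (gs l₀) f hg₀0 hg₀x
      have hf₁lin : ∀ t, MvPowerSeries.coeff (Finsupp.single t 1) f₁
          = MvPowerSeries.coeff (Finsupp.single t 1) f := by
        intro t
        rw [hf₁, coeff_single_elim1 x₀ (gs l₀) f hg₀0 t, hflin l₀ (by simp), zero_mul, sub_zero]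
      have hgs₁I : ∀ l ∈ L, gs₁ l ∈ I := fun l hl => elim1_mem x₀ hg₀I (hgI l (by simp [hl]))
      have hgs₁x : ∀ l ∈ L, NoVar x₀ (gs₁ l) :=
        fun l _ => noVar_elim1 x₀ (gs l₀) (gs l) hg₀0 hg₀x
      have hgs₁lin : ∀ l ∈ L, ∀ t, MvPowerSeries.coeff (Finsupp.single t 1) (gs₁ l)
          = MvPowerSeries.coeff (Finsupp.single t 1) (gs l) := by
        intro l hl t
        rw [hgs₁]
        rw [coeff_single_elim1 x₀ (gs l₀) (gs l) hg₀0 t]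
        have : MvPowerSeries.coeff (Finsupp.single x₀ 1) (gs l) = 0 := by
          have := hdelta l (by simp [hl]) l₀ (by simp)
          rwa [if_neg (by rintro rfl; exact hl₀L hl)] at this
        rw [this, zero_mul, sub_zero]
      have hdelta₁ : ∀ l ∈ L, ∀ l' ∈ L,
          MvPowerSeries.coeff (Finsupp.single (Sum.inr l') 1) (gs₁ l)
            = if l = l' then 1 else 0 := by
        intro l hl l' hl'
        rw [hgs₁lin l hl]
        exact hdelta l (by simp [hl]) l' (by simp [hl'])
      have hf₁lin' : ∀ l ∈ L, MvPowerSeries.coeff (Finsupp.single (Sum.inr l) 1) f₁ = 0 := by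
        intro l hl
        rw [hf₁lin]
        exact hflin l (by simp [hl])
      obtain ⟨h, hhI, hhL, hhlin, hhpres⟩ := ih hndL gs₁ hgs₁I hdelta₁ f₁ hf₁I hf₁lin'
      refine ⟨h, hhI, ?_, ?_, ?_⟩
      · intro l hl
        rcases List.mem_cons.mp hl with rfl | hl'
        · exact hhpres x₀ hf₁x (fun l' hl' => hgs₁x l' hl')
        · exact hhL l hl'
      · intro t
        rw [hhlin t, hf₁lin t]
      · intro y hyf hygs
        by_cases hy : y = x₀
        · subst hy
          exact hhpres x₀ hf₁x (fun l' hl' => hgs₁x l' hl')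
        · apply hhpres y
          · exact noVar_elim1_other x₀ (gs l₀) f hy hyf (hygs l₀ (by simp))
          · intro l hl
            exact noVar_elim1_other x₀ (gs l₀) (gs l) hy (hygs l (by simp [hl]))
              (hygs l₀ (by simp))

-- chunk 6: the conjugation σ and (0,1) vector fields
noncomputable def emap (β : V n →₀ ℕ) : V n →₀ ℕ :=
  Finsupp.equivMapDomain (Equiv.sumComm (Fin n) (Fin n)) β

lemma emap_apply (β : V n →₀ ℕ) (i : V n) : emap β i = β (Sum.swap i) := rfl

lemma coeff_sigmaConj (f : Rn n) (β : V n →₀ ℕ) :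
    MvPowerSeries.coeff β (sigmaConj f) =
      (starRingEnd ℂ) (MvPowerSeries.coeff (emap β) f) := rfl

lemma emap_add (a b : V n →₀ ℕ) : emap (a + b) = emap a + emap b := by
  ext i
  simp [emap_apply, Finsupp.add_apply]

lemma emap_emap (β : V n →₀ ℕ) : emap (emap β) = β := by
  ext i
  simp [emap_apply, Sum.swap_swap]

lemma emap_single (i : V n) (k : ℕ) :
    emap (Finsupp.single i k) = Finsupp.single (Sum.swap i) k := by
  unfold emap
  rw [Finsupp.equivMapDomain_single]
  rfl

lemma emap_zero : emap (0 : V n →₀ ℕ) = 0 := by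
  ext i; simp [emap_apply]

lemma emap_eq_zero_iff (β : V n →₀ ℕ) : emap β = 0 ↔ β = 0 := by
  constructor
  · intro h
    have := congrArg emap h
    rwa [emap_emap, emap_zero] at this
  · rintro rfl; exact emap_zero

lemma sigma_add (u v : Rn n) : sigmaConj (u + v) = sigmaConj u + sigmaConj v := by
  ext β
  rw [map_add, coeff_sigmaConj, coeff_sigmaConj, coeff_sigmaConj, map_add, map_add]

lemma sigma_mul (u v : Rn n) : sigmaConj (u * v) = sigmaConj u * sigmaConj v := by
  ext β
  rw [coeff_sigmaConj, MvPowerSeries.coeff_mul, MvPowerSeries.coeff_mul, map_sum]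
  apply Finset.sum_nbij' (i := fun p => (emap p.1, emap p.2)) (j := fun p => (emap p.1, emap p.2))
  · rintro ⟨γ, δ⟩ hm
    rw [Finset.HasAntidiagonal.mem_antidiagonal] at hm ⊢
    rw [← emap_add, hm, emap_emap]
  · rintro ⟨γ, δ⟩ hm
    rw [Finset.HasAntidiagonal.mem_antidiagonal] at hm ⊢
    rw [← emap_add, hm]
  · rintro ⟨γ, δ⟩ _
    simp [emap_emap]
  · rintro ⟨γ, δ⟩ _
    simp [emap_emap]
  · rintro ⟨γ, δ⟩ _
    rw [map_mul]
    simp only [coeff_sigmaConj, emap_emap]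

lemma sigma_sigma (u : Rn n) : sigmaConj (sigmaConj u) = u := by
  ext β
  rw [coeff_sigmaConj, coeff_sigmaConj, Complex.conj_conj, emap_emap]

lemma sigma_smul (c : ℂ) (u : Rn n) :
    sigmaConj (c • u) = (starRingEnd ℂ c) • sigmaConj u := by
  ext β
  rw [coeff_sigmaConj]
  rw [MvPowerSeries.coeff_smul, MvPowerSeries.coeff_smul, map_mul]
  rfl

lemma sigma_sum {s : Finset (Fin n)} (u : Fin n → Rn n) :
    sigmaConj (∑ j ∈ s, u j) = ∑ j ∈ s, sigmaConj (u j) := by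
  classical
  induction s using Finset.induction with
  | empty =>
      simp only [Finset.sum_empty]
      ext β
      rw [coeff_sigmaConj, map_zero, map_zero, map_zero]
  | insert _ _ hns ih =>
      rw [Finset.sum_insert hns, Finset.sum_insert hns, sigma_add, ih]

lemma coeff_psDeriv (i : V n) (u : Rn n) (β : V n →₀ ℕ) :
    MvPowerSeries.coeff β (psDeriv i u) =
      ((β i + 1 : ℕ) : ℂ) * MvPowerSeries.coeff (β + Finsupp.single i 1) u := rfl

lemma sigma_psDeriv (i : V n) (u : Rn n) :
    sigmaConj (psDeriv i u) = psDeriv (Sum.swap i) (sigmaConj u) := by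
  ext β
  rw [coeff_sigmaConj, coeff_psDeriv, coeff_psDeriv, map_mul, map_natCast, coeff_sigmaConj,
    emap_add, emap_single, emap_apply, Sum.swap_swap]

lemma constantCoeff_sigma (u : Rn n) :
    MvPowerSeries.constantCoeff (sigmaConj u) =
      (starRingEnd ℂ) (MvPowerSeries.constantCoeff u) := by
  rw [← MvPowerSeries.coeff_zero_eq_constantCoeff_apply,
    ← MvPowerSeries.coeff_zero_eq_constantCoeff_apply, coeff_sigmaConj, emap_zero]

lemma coeff_single_sigma (u : Rn n) (i : V n) :
    MvPowerSeries.coeff (Finsupp.single i 1) (sigmaConj u) =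
      (starRingEnd ℂ) (MvPowerSeries.coeff (Finsupp.single (Sum.swap i) 1) u) := by
  rw [coeff_sigmaConj, emap_single]

/-- the (0,1) vector field obtained by conjugating a (1,0) field -/
noncomputable def Bop (a : Fin n → Rn n) (u : Rn n) : Rn n :=
  ∑ l, sigmaConj (a l) * psDeriv (Sum.inr l) u

lemma Bop_eq (a : Fin n → Rn n) (u : Rn n) :
    Bop a u = sigmaConj (apply10 a (sigmaConj u)) := by
  unfold Bop apply10
  rw [sigma_sum]
  apply Finset.sum_congr rfl
  intro l _
  rw [sigma_mul, sigma_psDeriv, sigma_sigma]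
  rfl

lemma Bop_mem {I : Ideal (Rn n)} (hsig : ∀ f ∈ I, sigmaConj f ∈ I)
    {a : Fin n → Rn n} (hfield : ∀ f ∈ I, apply10 a f ∈ I) {u : Rn n} (hu : u ∈ I) :
    Bop a u ∈ I := by
  rw [Bop_eq]
  exact hsig _ (hfield _ (hsig _ hu))

lemma noVar_psDeriv {y : V n} {u : Rn n} (hu : NoVar y u) (i : V n) :
    NoVar y (psDeriv i u) := by
  intro β hβ
  rw [coeff_psDeriv]
  rw [hu (β + Finsupp.single i 1) (by
    rw [Finsupp.add_apply]
    omega), mul_zero]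

lemma psDeriv_eq_zero_of_noVar {i : V n} {u : Rn n} (hu : NoVar i u) :
    psDeriv i u = 0 := by
  ext β
  rw [coeff_psDeriv, map_zero, hu (β + Finsupp.single i 1) (by simp), mul_zero]

-- chunk 7: choice of the distinguished set K of ζ-variables
section Kchoice

variable (I : Ideal (Rn n))

/-- a family of elements of `I` whose `ζ`-linear parts restricted to `S` form a delta basis -/
def DeltaFam (S : Finset (Fin n)) (gf : Fin n → Rn n) : Prop :=
  ∀ x ∈ S, gf x ∈ I ∧ ∀ x' ∈ S,
    MvPowerSeries.coeff (Finsupp.single (Sum.inr x') 1) (gf x) = if x = x' then 1 else 0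

lemma exists_maximal_delta :
    ∃ (K : Finset (Fin n)) (gfam : Fin n → Rn n), DeltaFam I K gfam ∧
      ∀ j ∉ K, ¬ (∃ gf, DeltaFam I (insert j K) gf) := by
  classical
  set 𝒮 := Finset.univ.powerset.filter (fun S => ∃ gf, DeltaFam I S gf) with h𝒮
  have hne : 𝒮.Nonempty := by
    refine ⟨∅, ?_⟩
    rw [h𝒮, Finset.mem_filter]
    refine ⟨Finset.mem_powerset.mpr (Finset.empty_subset _), ⟨fun _ => 0, ?_⟩⟩
    intro x hx
    exact absurd hx (Finset.notMem_empty x)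
  obtain ⟨K, hKmem, hKmax⟩ := Finset.exists_max_image 𝒮 (fun S => S.card) hne
  rw [h𝒮, Finset.mem_filter] at hKmem
  obtain ⟨-, gfam, hgfam⟩ := hKmem
  refine ⟨K, gfam, hgfam, ?_⟩
  intro j hj ⟨gf, hgf⟩
  have hmem : insert j K ∈ 𝒮 := by
    rw [h𝒮, Finset.mem_filter]
    exact ⟨Finset.mem_powerset.mpr (Finset.subset_univ _), ⟨gf, hgf⟩⟩
  have := hKmax _ hmem
  rw [Finset.card_insert_of_notMem hj] at this
  omega

end Kchoice

section KFixed

variable {I : Ideal (Rn n)} {K : Finset (Fin n)} {gfam : Fin n → Rn n}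

/-- reduction of `f` by the delta family -/
noncomputable def redK (K : Finset (Fin n)) (gfam : Fin n → Rn n) (f : Rn n) : Rn n :=
  f - ∑ x ∈ K, MvPowerSeries.C
    (MvPowerSeries.coeff (Finsupp.single (Sum.inr x) 1) f) * gfam x

lemma redK_mem (hK : DeltaFam I K gfam) {f : Rn n} (hf : f ∈ I) : redK K gfam f ∈ I := by
  refine Ideal.sub_mem I hf (Ideal.sum_mem I ?_)
  intro x hx
  exact Ideal.mul_mem_left I _ (hK x hx).1

lemma coeff_single_redK (f : Rn n) (t : V n) :
    MvPowerSeries.coeff (Finsupp.single t 1) (redK K gfam f) =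
      MvPowerSeries.coeff (Finsupp.single t 1) f -
        ∑ x ∈ K, MvPowerSeries.coeff (Finsupp.single (Sum.inr x) 1) f *
          MvPowerSeries.coeff (Finsupp.single t 1) (gfam x) := by
  unfold redK
  rw [map_sub, map_sum]
  congr 1
  apply Finset.sum_congr rfl
  intro x hx
  rw [MvPowerSeries.coeff_C_mul]

lemma coeff_redK_inK (hK : DeltaFam I K gfam) (f : Rn n) {x' : Fin n} (hx' : x' ∈ K) :
    MvPowerSeries.coeff (Finsupp.single (Sum.inr x') 1) (redK K gfam f) = 0 := by
  rw [coeff_single_redK]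
  rw [Finset.sum_eq_single x']
  · rw [(hK x' hx').2 x' hx', if_pos rfl, mul_one, sub_self]
  · intro x hx hxx
    rw [(hK x hx).2 x' hx', if_neg hxx, mul_zero]
  · intro h
    exact absurd hx' h

/-- The key consequence of maximality: the `ζ`-differentials of all `f ∈ I` are
determined by their `K`-components. -/
lemma zeta_span (hK : DeltaFam I K gfam)
    (hmax : ∀ j ∉ K, ¬ (∃ gf, DeltaFam I (insert j K) gf))
    {f : Rn n} (hf : f ∈ I) {j : Fin n} (hj : j ∉ K) :
    MvPowerSeries.coeff (Finsupp.single (Sum.inr j) 1) (redK K gfam f) = 0 := by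
  classical
  by_contra hne
  set ε := MvPowerSeries.coeff (Finsupp.single (Sum.inr j) 1) (redK K gfam f) with hε
  set f2 := MvPowerSeries.C ε⁻¹ * redK K gfam f with hf2
  have hf2I : f2 ∈ I := Ideal.mul_mem_left I _ (redK_mem hK hf)
  have hf2j : MvPowerSeries.coeff (Finsupp.single (Sum.inr j) 1) f2 = 1 := by
    rw [hf2, MvPowerSeries.coeff_C_mul, ← hε, inv_mul_cancel₀ hne]
  have hf2K : ∀ x' ∈ K, MvPowerSeries.coeff (Finsupp.single (Sum.inr x') 1) f2 = 0 := by
    intro x' hx'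
    rw [hf2, MvPowerSeries.coeff_C_mul, coeff_redK_inK hK f hx', mul_zero]
  apply hmax j hj
  refine ⟨fun x => if x = j then f2 else
    gfam x - MvPowerSeries.C
      (MvPowerSeries.coeff (Finsupp.single (Sum.inr j) 1) (gfam x)) * f2, ?_⟩
  intro x hx
  dsimp only
  rcases Finset.mem_insert.mp hx with rfl | hxK
  · rw [if_pos rfl]
    refine ⟨hf2I, ?_⟩
    intro x' hx'
    rcases Finset.mem_insert.mp hx' with rfl | hx'K
    · rw [hf2j, if_pos rfl]
    · rw [hf2K x' hx'K, if_neg]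
      rintro rfl
      exact hj hx'K
  · have hxj : x ≠ j := by rintro rfl; exact hj hxK
    rw [if_neg hxj]
    refine ⟨Ideal.sub_mem I (hK x hxK).1 (Ideal.mul_mem_left I _ hf2I), ?_⟩
    intro x' hx'
    rw [map_sub, MvPowerSeries.coeff_C_mul]
    rcases Finset.mem_insert.mp hx' with rfl | hx'K
    · rw [hf2j, mul_one, sub_self, if_neg hxj]
    · rw [hf2K x' hx'K, mul_zero, sub_zero, (hK x hxK).2 x' hx'K]

end KFixed

-- chunk 8: CR vector fields give stability of I ∩ {good} under ζ'-derivatives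
section DStable

variable {I : Ideal (Rn n)} {K : Finset (Fin n)} {gfam : Fin n → Rn n}

/-- the value at `0` of a tangential `(0,1)` direction in the `j`-th good slot -/
noncomputable def uvec (K : Finset (Fin n)) (gfam : Fin n → Rn n) (j : Fin n) :
    Fin n → ℂ := fun l =>
  if l = j then 1
  else if l ∈ K then -(MvPowerSeries.coeff (Finsupp.single (Sum.inr j) 1) (gfam l)) else 0

lemma uvec_perp (hK : DeltaFam I K gfam)
    (hmax : ∀ j ∉ K, ¬ (∃ gf, DeltaFam I (insert j K) gf))
    {j : Fin n} (hj : j ∉ K) {f : Rn n} (hf : f ∈ I) :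
    ∑ l, uvec K gfam j l * MvPowerSeries.coeff (Finsupp.single (Sum.inr l) 1) f = 0 := by
  classical
  have hsplit : ∀ l, uvec K gfam j l * MvPowerSeries.coeff (Finsupp.single (Sum.inr l) 1) f
      = (if l = j then MvPowerSeries.coeff (Finsupp.single (Sum.inr l) 1) f else 0)
        + (if l ∈ K then
            -(MvPowerSeries.coeff (Finsupp.single (Sum.inr j) 1) (gfam l)) *
              MvPowerSeries.coeff (Finsupp.single (Sum.inr l) 1) f else 0) := by
    intro l
    unfold uvec
    by_cases h1 : l = j
    · subst h1
      rw [if_pos rfl, if_pos rfl, if_neg hj, one_mul, add_zero]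
    · rw [if_neg h1, if_neg h1, zero_add]
      by_cases h2 : l ∈ K
      · rw [if_pos h2, if_pos h2]
      · rw [if_neg h2, if_neg h2, zero_mul]
  rw [Finset.sum_congr rfl (fun l _ => hsplit l), Finset.sum_add_distrib]
  rw [Finset.sum_ite_eq' Finset.univ j
    (fun l => MvPowerSeries.coeff (Finsupp.single (Sum.inr l) 1) f), if_pos (Finset.mem_univ j)]
  have h2 : ∑ l, (if l ∈ K then
      -(MvPowerSeries.coeff (Finsupp.single (Sum.inr j) 1) (gfam l)) *
        MvPowerSeries.coeff (Finsupp.single (Sum.inr l) 1) f else 0)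
      = ∑ l ∈ K, -(MvPowerSeries.coeff (Finsupp.single (Sum.inr j) 1) (gfam l)) *
          MvPowerSeries.coeff (Finsupp.single (Sum.inr l) 1) f := by
    rw [← Finset.sum_filter]
    congr 1
    ext l
    simp
  rw [h2]
  have h3 := zeta_span hK hmax hf hj
  rw [coeff_single_redK] at h3
  have h4 : (∑ l ∈ K, -(MvPowerSeries.coeff (Finsupp.single (Sum.inr j) 1) (gfam l)) *
        MvPowerSeries.coeff (Finsupp.single (Sum.inr l) 1) f)
      = -(∑ x ∈ K, MvPowerSeries.coeff (Finsupp.single (Sum.inr x) 1) f *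
          MvPowerSeries.coeff (Finsupp.single (Sum.inr j) 1) (gfam x)) := by
    rw [← Finset.sum_neg_distrib]
    apply Finset.sum_congr rfl
    intro x _
    ring
  rw [h4]
  linear_combination h3

lemma uvecbar_H10 (hK : DeltaFam I K gfam)
    (hmax : ∀ j ∉ K, ¬ (∃ gf, DeltaFam I (insert j K) gf))
    (hsig : ∀ f ∈ I, sigmaConj f ∈ I)
    {j : Fin n} (hj : j ∉ K) :
    (fun l => (starRingEnd ℂ) (uvec K gfam j l)) ∈ H10at0 I := by
  intro f hf
  have h1 := uvec_perp hK hmax hj (hsig f hf)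
  have h2 : ∀ l, MvPowerSeries.coeff (Finsupp.single (Sum.inr l) 1) (sigmaConj f)
      = (starRingEnd ℂ) (MvPowerSeries.coeff (Finsupp.single (Sum.inl l) 1) f) := by
    intro l
    rw [coeff_single_sigma]
    rfl
  have h3 := congrArg (starRingEnd ℂ) h1
  rw [map_sum, map_zero] at h3
  rw [← h3]
  apply Finset.sum_congr rfl
  intro l _
  rw [map_mul, h2 l, Complex.conj_conj]

lemma deriv_stable (hK : DeltaFam I K gfam)
    (hmax : ∀ j ∉ K, ¬ (∃ gf, DeltaFam I (insert j K) gf))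
    (hsig : ∀ f ∈ I, sigmaConj f ∈ I) (hCR : IsCRIdeal I)
    {h : Rn n} (hh : h ∈ I) (hgood : ∀ x ∈ K, NoVar (Sum.inr x) h)
    {l₀ : Fin n} (hl₀ : l₀ ∉ K) :
    psDeriv (Sum.inr l₀) h ∈ I := by
  classical
  have hfields : ∀ j : {l : Fin n // l ∉ K}, ∃ a : Fin n → Rn n,
      (∀ f ∈ I, apply10 a f ∈ I) ∧
      ∀ l, MvPowerSeries.constantCoeff (a l)
        = (starRingEnd ℂ) (uvec K gfam (↑j) l) := by
    intro j
    exact hCR _ (uvecbar_H10 hK hmax hsig j.2)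
  choose a ha using hfields
  set M : Matrix {l : Fin n // l ∉ K} {l : Fin n // l ∉ K} (Rn n) :=
    fun j l => sigmaConj (a j ↑l) with hM
  set v : {l : Fin n // l ∉ K} → Rn n := fun l => psDeriv (Sum.inr ↑l) h with hv
  have hBv : ∀ j, M.mulVec v j = Bop (a j) h := by
    intro j
    rw [Matrix.mulVec, dotProduct]
    unfold Bop
    have e1 : ∑ l ∈ Finset.univ.filter (fun l => l ∉ K),
            sigmaConj (a j l) * psDeriv (Sum.inr l) h
        = ∑ i : {l : Fin n // l ∉ K}, sigmaConj (a j ↑i) * psDeriv (Sum.inr ↑i) h :=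
      Finset.sum_subtype (p := fun l => l ∉ K) _ (fun l => by simp)
        (fun l => sigmaConj (a j l) * psDeriv (Sum.inr l) h)
    rw [show (∑ i : {l : Fin n // l ∉ K}, M j i * v i)
        = ∑ i : {l : Fin n // l ∉ K}, sigmaConj (a j ↑i) * psDeriv (Sum.inr ↑i) h from rfl,
      ← e1]
    apply Finset.sum_subset (Finset.filter_subset _ _)
    intro l _ hl
    have hlK : l ∈ K := by simpa using hl
    rw [psDeriv_eq_zero_of_noVar (hgood l hlK), mul_zero]
  have hBI : ∀ j, M.mulVec v j ∈ I := by
    intro j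
    rw [hBv j]
    exact Bop_mem hsig (ha j).1 hh
  -- the constant term of M is the identity matrix
  have hdet : MvPowerSeries.constantCoeff M.det = 1 := by
    have hmap : (MvPowerSeries.constantCoeff (σ := V n) (R := ℂ)).mapMatrix M = 1 := by
      ext j l
      rw [RingHom.mapMatrix_apply, Matrix.map_apply, hM]
      rw [constantCoeff_sigma, (ha j).2, Complex.conj_conj]
      unfold uvec
      by_cases hjl : (l : Fin n) = (j : Fin n)
      · have : l = j := Subtype.ext hjl
        subst this
        rw [if_pos rfl, Matrix.one_apply_eq]
      · rw [if_neg hjl, if_neg l.2, Matrix.one_apply_ne]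
        intro hc
        exact hjl (by rw [hc])
    have := RingHom.map_det (MvPowerSeries.constantCoeff (σ := V n) (R := ℂ)) M
    rw [hmap, Matrix.det_one] at this
    exact this
  -- solve the linear system using the adjugate
  have hsolve : M.det • v = (M.adjugate).mulVec (M.mulVec v) := by
    rw [Matrix.mulVec_mulVec, Matrix.adjugate_mul, Matrix.smul_mulVec, Matrix.one_mulVec]
  have hmemdet : ∀ l, M.det * v l ∈ I := by
    intro l
    have h1 : M.det * v l = (M.adjugate).mulVec (M.mulVec v) l := by
      rw [← hsolve]
      rfl
    rw [h1, Matrix.mulVec, dotProduct]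
    exact Ideal.sum_mem I (fun j _ => Ideal.mul_mem_left I _ (hBI j))
  -- divide by the unit det
  have hunit : M.det * MvPowerSeries.invOfUnit M.det 1 = 1 :=
    MvPowerSeries.mul_invOfUnit M.det 1 (by rw [hdet]; rfl)
  have : psDeriv (Sum.inr l₀) h = MvPowerSeries.invOfUnit M.det 1 *
      (M.det * v ⟨l₀, hl₀⟩) := by
    rw [hv]
    dsimp only
    rw [← mul_assoc, mul_comm _ M.det, hunit, one_mul]
  rw [this]
  exact Ideal.mul_mem_left I _ (hmemdet ⟨l₀, hl₀⟩)

end DStable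

-- chunk 9: one-variable Taylor extraction
lemma prod_asc (m k : ℕ) : (∏ t ∈ Finset.range k, (m + t + 1)) = Nat.factorial k * (m + k).choose k := by
  have h : (∏ t ∈ Finset.range k, (m + t + 1)) = (m+1).ascFactorial k := by
    induction k with
    | zero => simp
    | succ k ih =>
        rw [Finset.prod_range_succ, ih, Nat.ascFactorial_succ, Nat.mul_comm]
        congr 1
        omega
  rw [h, Nat.ascFactorial_eq_factorial_mul_choose]


lemma alt_sum_choose_complex (N : ℕ) :
    (∑ k ∈ Finset.range (N + 1), ((-1 : ℂ))^k * (N.choose k : ℂ))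
      = if N = 0 then 1 else 0 := by
  have h := Int.alternating_sum_range_choose (n := N)
  calc (∑ k ∈ Finset.range (N + 1), ((-1 : ℂ))^k * (N.choose k : ℂ))
      = ((∑ k ∈ Finset.range (N + 1), ((-1 : ℤ))^k * (N.choose k : ℤ) : ℤ) : ℂ) := by
        push_cast
        rfl
    _ = ((if N = 0 then 1 else 0 : ℤ) : ℂ) := by rw [h]
    _ = if N = 0 then 1 else 0 := by split <;> simp

lemma coeff_iter_psDeriv (y : V n) (h : Rn n) (k : ℕ) (δ : V n →₀ ℕ) :
    MvPowerSeries.coeff δ ((psDeriv y)^[k] h) =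
      (∏ t ∈ Finset.range k, ((δ y + t + 1 : ℕ) : ℂ)) *
        MvPowerSeries.coeff (δ + Finsupp.single y k) h := by
  induction k generalizing δ with
  | zero => simp
  | succ k ih =>
      rw [Function.iterate_succ_apply', coeff_psDeriv, ih]
      have e1 : ((δ + Finsupp.single y 1 : V n →₀ ℕ)) y = δ y + 1 := by simp
      have e2 : δ + Finsupp.single y 1 + Finsupp.single y k = δ + Finsupp.single y (k+1) := by
        rw [add_assoc, ← Finsupp.single_add, show 1 + k = k + 1 by omega]
      rw [e1, e2, ← mul_assoc]
      congr 1
      rw [Finset.prod_range_succ']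
      rw [mul_comm]
      congr 1
      apply Finset.prod_congr rfl
      intro t _
      congr 1
      omega

lemma taylor_one_var {I : Ideal (Rn n)} {d : ℕ} {F : Fin d → Rn n}
    (hspan : I = Ideal.span (Set.range F))
    (y : V n) {h : Rn n} (hh : h ∈ I)
    (hD : ∀ k : ℕ, (psDeriv y)^[k] h ∈ I) :
    ∃ h', h' ∈ I ∧ ∀ β : V n →₀ ℕ,
      MvPowerSeries.coeff β h' =
        if β y = 0 then MvPowerSeries.coeff β h else 0 := by
  classical
  have hdecomp : ∀ k : ℕ, ∃ u : Fin d → Rn n, ∑ j, u j * F j = (psDeriv y)^[k] h := by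
    intro k
    have := hD k
    rw [hspan] at this
    exact (Ideal.mem_span_range_iff_exists_fun).mp this
  choose u hu using hdecomp
  set c : ℕ → ℂ := fun k => (-1 : ℂ)^k / (Nat.factorial k : ℂ) with hc
  set G : Fin d → Rn n := fun j => (fun β =>
    ∑ k ∈ Finset.range (β y + 1),
      c k * MvPowerSeries.coeff (β - Finsupp.single y k) (u k j)) with hG
  have coeff_G : ∀ j β, MvPowerSeries.coeff β (G j)
      = ∑ k ∈ Finset.range (β y + 1),
          c k * MvPowerSeries.coeff (β - Finsupp.single y k) (u k j) := fun j β => rfl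
  refine ⟨∑ j, G j * F j, ?_, ?_⟩
  · rw [hspan]
    apply Ideal.sum_mem
    intro j _
    exact Ideal.mul_mem_left _ _ (Ideal.subset_span ⟨j, rfl⟩)
  intro β
  set N := β y with hN
  -- the auxiliary polynomial truncation
  set P : Fin d → Rn n := fun j =>
    ∑ k ∈ Finset.range (N + 1), MvPowerSeries.monomial (Finsupp.single y k) (c k) * u k j
    with hP
  have coeff_P : ∀ j γ, MvPowerSeries.coeff γ (P j)
      = ∑ k ∈ Finset.range (N + 1),
          (if k ≤ γ y then c k * MvPowerSeries.coeff (γ - Finsupp.single y k) (u k j) else 0) := by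
    intro j γ
    rw [hP]
    simp only [map_sum]
    apply Finset.sum_congr rfl
    intro k _
    rw [MvPowerSeries.coeff_monomial_mul]
    congr 1
    rw [Finsupp.single_le_iff]
  have hGP : ∀ j, ∀ γ ≤ β, MvPowerSeries.coeff γ (G j) = MvPowerSeries.coeff γ (P j) := by
    intro j γ hγ
    rw [coeff_G, coeff_P]
    have hyle : γ y ≤ N := by
      rw [hN]
      exact hγ y
    rw [← Finset.sum_subset (Finset.range_subset_range.mpr (show γ y + 1 ≤ N + 1 by omega))
      (fun k _ hk2 => by
        rw [Finset.mem_range, not_lt] at hk2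
        rw [if_neg (by omega)])]
    apply Finset.sum_congr rfl
    intro k hk
    rw [Finset.mem_range] at hk
    rw [if_pos (by omega)]
  have step1 : MvPowerSeries.coeff β (∑ j, G j * F j)
      = ∑ j, MvPowerSeries.coeff β (P j * F j) := by
    rw [map_sum]
    apply Finset.sum_congr rfl
    intro j _
    exact coeff_mul_congr (hGP j)
  have step2 : ∀ j, MvPowerSeries.coeff β (P j * F j)
      = ∑ k ∈ Finset.range (N + 1),
          MvPowerSeries.coeff β
            (MvPowerSeries.monomial (Finsupp.single y k) (c k) * (u k j * F j)) := by
    intro j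
    rw [hP, Finset.sum_mul, map_sum]
    apply Finset.sum_congr rfl
    intro k _
    rw [mul_assoc]
  have step3 : MvPowerSeries.coeff β (∑ j, G j * F j)
      = ∑ k ∈ Finset.range (N + 1),
          MvPowerSeries.coeff β
            (MvPowerSeries.monomial (Finsupp.single y k) (c k) * ((psDeriv y)^[k] h)) := by
    rw [step1, Finset.sum_congr rfl (fun j _ => step2 j), Finset.sum_comm]
    apply Finset.sum_congr rfl
    intro k _
    rw [← hu k, Finset.mul_sum, map_sum]
  rw [step3]
  have step4 : ∀ k ∈ Finset.range (N + 1),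
      MvPowerSeries.coeff β
        (MvPowerSeries.monomial (Finsupp.single y k) (c k) * ((psDeriv y)^[k] h))
      = ((-1 : ℂ))^k * (N.choose k : ℂ) * MvPowerSeries.coeff β h := by
    intro k hk
    rw [Finset.mem_range] at hk
    have hkN : k ≤ N := by omega
    rw [MvPowerSeries.coeff_monomial_mul,
      if_pos (Finsupp.single_le_iff.mpr (by rw [← hN]; omega))]
    rw [coeff_iter_psDeriv]
    have e1 : ((β - Finsupp.single y k : V n →₀ ℕ)) y = N - k := by
      rw [Finsupp.tsub_apply, Finsupp.single_eq_same, ← hN]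
    have e2 : (β - Finsupp.single y k) + Finsupp.single y k = β :=
      tsub_add_cancel_of_le (Finsupp.single_le_iff.mpr (by rw [← hN]; omega))
    rw [e1, e2]
    have e3 : (∏ t ∈ Finset.range k, ((N - k + t + 1 : ℕ) : ℂ))
        = ((Nat.factorial k : ℕ) : ℂ) * ((N.choose k : ℕ) : ℂ) := by
      rw [← Nat.cast_prod, prod_asc]
      have e4 : N - k + k = N := by omega
      rw [e4]
      push_cast
      ring
    rw [e3, hc]
    have hfac : ((Nat.factorial k : ℕ) : ℂ) ≠ 0 := by
      exact_mod_cast Nat.factorial_ne_zero k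
    push_cast
    field_simp
  rw [Finset.sum_congr rfl step4, ← Finset.sum_mul, alt_sum_choose_complex]
  by_cases hN0 : N = 0
  · rw [if_pos hN0, if_pos hN0, one_mul]
  · rw [if_neg hN0, if_neg hN0, zero_mul]

-- chunk 10: killing all good ζ-variables, and the key Step B
lemma taylor_kill {I : Ideal (Rn n)} {d : ℕ} {F : Fin d → Rn n}
    (hspan : I = Ideal.span (Set.range F))
    {K : Finset (Fin n)} {gfam : Fin n → Rn n}
    (hK : DeltaFam I K gfam)
    (hmax : ∀ j ∉ K, ¬ (∃ gf, DeltaFam I (insert j K) gf))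
    (hsig : ∀ f ∈ I, sigmaConj f ∈ I) (hCR : IsCRIdeal I) :
    ∀ (L : List (Fin n)), (∀ l ∈ L, l ∉ K) →
    ∀ h, h ∈ I → (∀ x ∈ K, NoVar (Sum.inr x) h) →
    ∃ h', h' ∈ I ∧ (∀ x ∈ K, NoVar (Sum.inr x) h') ∧ (∀ l ∈ L, NoVar (Sum.inr l) h') ∧
      (∀ x, NoVar x h → NoVar x h') ∧
      (∀ t : V n, (∀ l ∈ L, t ≠ Sum.inr l) →
        MvPowerSeries.coeff (Finsupp.single t 1) h' =
          MvPowerSeries.coeff (Finsupp.single t 1) h) := by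
  intro L
  induction L with
  | nil =>
      intro _ h hh hgood
      exact ⟨h, hh, hgood, by simp, fun x hx => hx, fun t _ => rfl⟩
  | cons y L ih =>
      intro hLK h hh hgood
      have hyK : y ∉ K := hLK y (by simp)
      have hDk : ∀ k : ℕ, (psDeriv (Sum.inr y))^[k] h ∈ I ∧
          (∀ x ∈ K, NoVar (Sum.inr x) ((psDeriv (Sum.inr y))^[k] h)) := by
        intro k
        induction k with
        | zero => exact ⟨hh, hgood⟩
        | succ k ihk =>
            rw [Function.iterate_succ_apply']
            exact ⟨deriv_stable hK hmax hsig hCR ihk.1 ihk.2 hyK,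
              fun x hx => noVar_psDeriv (ihk.2 x hx) _⟩
      obtain ⟨h₁, hm₁, hcoeff₁⟩ :=
        taylor_one_var hspan (Sum.inr y) hh (fun k => (hDk k).1)
      have hy₁ : NoVar (Sum.inr y) h₁ := by
        intro β hβ
        rw [hcoeff₁ β, if_neg hβ]
      have hgood₁ : ∀ x ∈ K, NoVar (Sum.inr x) h₁ := by
        intro x hx β hβ
        rw [hcoeff₁ β]
        split
        · exact hgood x hx β hβ
        · rfl
      have hpres₁ : ∀ x, NoVar x h → NoVar x h₁ := by
        intro x hx β hβ
        rw [hcoeff₁ β]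
        split
        · exact hx β hβ
        · rfl
      have hlin₁ : ∀ t : V n, t ≠ Sum.inr y →
          MvPowerSeries.coeff (Finsupp.single t 1) h₁ =
            MvPowerSeries.coeff (Finsupp.single t 1) h := by
        intro t ht
        rw [hcoeff₁, if_pos]
        rw [Finsupp.single_apply, if_neg ht]
      obtain ⟨h', hm', hgood', hL', hpres', hlin'⟩ :=
        ih (fun l hl => hLK l (by simp [hl])) h₁ hm₁ hgood₁
      refine ⟨h', hm', hgood', ?_, ?_, ?_⟩
      · intro l hl
        rcases List.mem_cons.mp hl with rfl | hl'
        · exact hpres' _ hy₁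
        · exact hL' l hl'
      · intro x hx
        exact hpres' x (hpres₁ x hx)
      · intro t ht
        rw [hlin' t (fun l hl => ht l (by simp [hl])), hlin₁ t (ht y (by simp))]

/-- Step B : any element of `I` with vanishing `ζ`-differential has `z`-differential
appearing among differentials of elements of `I ∩ ℂ[[z]]`; hence it is annihilated
by every `w ∈ T0IntrCx I`. -/
lemma stepB {I : Ideal (Rn n)} {d : ℕ} {F : Fin d → Rn n}
    (hspan : I = Ideal.span (Set.range F))
    (hF0 : ∀ j, MvPowerSeries.constantCoeff (F j) = 0)
    (hsig : ∀ f ∈ I, sigmaConj f ∈ I) (hCR : IsCRIdeal I)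
    {K : Finset (Fin n)} {gfam : Fin n → Rn n}
    (hK : DeltaFam I K gfam)
    (hmax : ∀ j ∉ K, ¬ (∃ gf, DeltaFam I (insert j K) gf))
    {w : Fin n → ℂ} (hw : w ∈ T0IntrCx I)
    {f : Rn n} (hf : f ∈ I)
    (hfz : ∀ l : Fin n, MvPowerSeries.coeff (Finsupp.single (Sum.inr l) 1) f = 0) :
    ∑ j, w j * MvPowerSeries.coeff (Finsupp.single (Sum.inl j) 1) f = 0 := by
  classical
  have hI0 : ∀ u ∈ I, MvPowerSeries.constantCoeff u = 0 := by
    intro u hu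
    rw [hspan] at hu
    have hle : Ideal.span (Set.range F) ≤ RingHom.ker (MvPowerSeries.constantCoeff) := by
      rw [Ideal.span_le]
      rintro _ ⟨j, rfl⟩
      exact hF0 j
    exact hle hu
  -- step 1: eliminate the K-variables
  obtain ⟨h₁, hm₁, hKkill₁, hlin₁, -⟩ := elimList hI0 K.toList K.nodup_toList gfam
    (fun l hl => (hK l (Finset.mem_toList.mp hl)).1)
    (fun l hl l' hl' => (hK l (Finset.mem_toList.mp hl)).2 l' (Finset.mem_toList.mp hl'))
    f hf (fun l _ => hfz l)
  have hgood₁ : ∀ x ∈ K, NoVar (Sum.inr x) h₁ :=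
    fun x hx => hKkill₁ x (Finset.mem_toList.mpr hx)
  -- step 2: kill the remaining ζ-variables via CR vector fields and Taylor expansion
  set L : List (Fin n) := (Finset.univ.filter (fun l => l ∉ K)).toList with hL
  have hLprop : ∀ l ∈ L, l ∉ K := by
    intro l hl
    rw [hL, Finset.mem_toList, Finset.mem_filter] at hl
    exact hl.2
  obtain ⟨h₀, hm₀, hgood₀, hLkill₀, -, hlin₀⟩ :=
    taylor_kill hspan hK hmax hsig hCR L hLprop h₁ hm₁ hgood₁
  -- h₀ depends only on z
  have hdep : DependsOnlyOn h₀ (Set.range Sum.inl) := by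
    intro α ⟨i, hi, hαi⟩
    rcases i with jz | l
    · exact absurd ⟨jz, rfl⟩ hi
    · by_cases hlK : l ∈ K
      · exact hgood₀ l hlK α hαi
      · refine hLkill₀ l ?_ α hαi
        rw [hL, Finset.mem_toList, Finset.mem_filter]
        exact ⟨Finset.mem_univ l, hlK⟩
  -- its z-linear part agrees with that of f
  have hlin : ∀ j : Fin n,
      MvPowerSeries.coeff (Finsupp.single (Sum.inl j) 1) h₀ =
        MvPowerSeries.coeff (Finsupp.single (Sum.inl j) 1) f := by
    intro j
    rw [hlin₀ (Sum.inl j) (fun l _ => by simp), hlin₁ (Sum.inl j)]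
  have := hw h₀ hm₀ hdep
  rw [← this]
  apply Finset.sum_congr rfl
  intro j _
  rw [hlin j]

-- chunk 11: assembling the tangential relations
noncomputable def qvec (K : Finset (Fin n)) (gfam : Fin n → Rn n) (w : Fin n → ℂ) :
    Fin n → ℂ := fun j =>
  if j ∈ K then -(∑ l, w l * MvPowerSeries.coeff (Finsupp.single (Sum.inl l) 1) (gfam j))
  else 0

lemma part2_star {I : Ideal (Rn n)} {d : ℕ} {F : Fin d → Rn n}
    (hspan : I = Ideal.span (Set.range F))
    (hF0 : ∀ j, MvPowerSeries.constantCoeff (F j) = 0)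
    (hsig : ∀ f ∈ I, sigmaConj f ∈ I) (hCR : IsCRIdeal I)
    {K : Finset (Fin n)} {gfam : Fin n → Rn n}
    (hK : DeltaFam I K gfam)
    (hmax : ∀ j ∉ K, ¬ (∃ gf, DeltaFam I (insert j K) gf))
    {w : Fin n → ℂ} (hw : w ∈ T0IntrCx I) :
    ∀ f ∈ I, (∑ j, w j * MvPowerSeries.coeff (Finsupp.single (Sum.inl j) 1) f)
      + (∑ j, qvec K gfam w j * MvPowerSeries.coeff (Finsupp.single (Sum.inr j) 1) f)
        = 0 := by
  classical
  intro f hf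
  have hred : ∀ l : Fin n,
      MvPowerSeries.coeff (Finsupp.single (Sum.inr l) 1) (redK K gfam f) = 0 := by
    intro l
    by_cases hl : l ∈ K
    · exact coeff_redK_inK hK f hl
    · exact zeta_span hK hmax hf hl
  have hB := stepB hspan hF0 hsig hCR hK hmax hw (redK_mem hK hf) hred
  have e1 : ∀ j : Fin n, w j * MvPowerSeries.coeff (Finsupp.single (Sum.inl j) 1) (redK K gfam f)
      = w j * MvPowerSeries.coeff (Finsupp.single (Sum.inl j) 1) f
        - ∑ x ∈ K, w j * (MvPowerSeries.coeff (Finsupp.single (Sum.inr x) 1) f *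
            MvPowerSeries.coeff (Finsupp.single (Sum.inl j) 1) (gfam x)) := by
    intro j
    rw [coeff_single_redK, mul_sub, Finset.mul_sum]
  rw [Finset.sum_congr rfl (fun j _ => e1 j), Finset.sum_sub_distrib, Finset.sum_comm] at hB
  have e2 : (∑ j, qvec K gfam w j * MvPowerSeries.coeff (Finsupp.single (Sum.inr j) 1) f)
      = -(∑ x ∈ K, ∑ j, w j * (MvPowerSeries.coeff (Finsupp.single (Sum.inr x) 1) f *
          MvPowerSeries.coeff (Finsupp.single (Sum.inl j) 1) (gfam x))) := by
    have e3 : ∀ j : Fin n, qvec K gfam w j *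
        MvPowerSeries.coeff (Finsupp.single (Sum.inr j) 1) f
        = if j ∈ K then -(∑ l, w l * (MvPowerSeries.coeff (Finsupp.single (Sum.inr j) 1) f *
            MvPowerSeries.coeff (Finsupp.single (Sum.inl l) 1) (gfam j))) else 0 := by
      intro j
      unfold qvec
      by_cases hj : j ∈ K
      · rw [if_pos hj, if_pos hj, neg_mul, Finset.sum_mul, ← Finset.sum_neg_distrib,
          ← Finset.sum_neg_distrib]
        apply Finset.sum_congr rfl
        intro l _
        ring
      · rw [if_neg hj, if_neg hj, zero_mul]
    rw [Finset.sum_congr rfl (fun j _ => e3 j), ← Finset.sum_filter]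
    rw [← Finset.sum_neg_distrib]
    have : Finset.univ.filter (fun j => j ∈ K) = K := by
      ext j; simp
    rw [this]
  rw [e2]
  linear_combination hB

lemma part2_star_conj {I : Ideal (Rn n)} {d : ℕ} {F : Fin d → Rn n}
    (hspan : I = Ideal.span (Set.range F))
    (hF0 : ∀ j, MvPowerSeries.constantCoeff (F j) = 0)
    (hsig : ∀ f ∈ I, sigmaConj f ∈ I) (hCR : IsCRIdeal I)
    {K : Finset (Fin n)} {gfam : Fin n → Rn n}
    (hK : DeltaFam I K gfam)
    (hmax : ∀ j ∉ K, ¬ (∃ gf, DeltaFam I (insert j K) gf))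
    {w : Fin n → ℂ} (hw : w ∈ T0IntrCx I) :
    ∀ f ∈ I,
      (∑ j, (starRingEnd ℂ) (qvec K gfam w j) *
        MvPowerSeries.coeff (Finsupp.single (Sum.inl j) 1) f)
      + (∑ j, (starRingEnd ℂ) (w j) *
          MvPowerSeries.coeff (Finsupp.single (Sum.inr j) 1) f) = 0 := by
  intro f hf
  have h1 := part2_star hspan hF0 hsig hCR hK hmax hw (sigmaConj f) (hsig f hf)
  have hil : ∀ j : Fin n, MvPowerSeries.coeff (Finsupp.single (Sum.inl j) 1) (sigmaConj f)
      = (starRingEnd ℂ) (MvPowerSeries.coeff (Finsupp.single (Sum.inr j) 1) f) := by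
    intro j
    rw [coeff_single_sigma]
    rfl
  have hir : ∀ j : Fin n, MvPowerSeries.coeff (Finsupp.single (Sum.inr j) 1) (sigmaConj f)
      = (starRingEnd ℂ) (MvPowerSeries.coeff (Finsupp.single (Sum.inl j) 1) f) := by
    intro j
    rw [coeff_single_sigma]
    rfl
  have h2 := congrArg (starRingEnd ℂ) h1
  rw [map_add, map_sum, map_sum, map_zero] at h2
  rw [← h2]
  rw [add_comm]
  congr 1
  · apply Finset.sum_congr rfl
    intro j _
    rw [map_mul, hil j, Complex.conj_conj]
  · apply Finset.sum_congr rfl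
    intro j _
    rw [map_mul, hir j, Complex.conj_conj]


end CRP


/-- A formal CR submanifold `O` is generic in its intrinsic complexification `V`:
`T₀O + J T₀O = T₀V`. -/
theorem stmt_14 {n : ℕ} (I : Ideal (MvPowerSeries (Fin n ⊕ Fin n) ℂ)) (d : ℕ)
    (hman : IsManifoldIdealOn I d) (hsig : ∀ f ∈ I, sigmaConj f ∈ I)
    (hCR : IsCRIdeal I) :
    (∀ v ∈ T0Real I, v ∈ T0IntrCx I ∧ (Complex.I • v) ∈ T0IntrCx I) ∧
    (∀ w ∈ T0IntrCx I, ∃ u v, u ∈ T0Real I ∧ v ∈ T0Real I ∧ w = u + Complex.I • v) := by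
  classical
  obtain ⟨F, hspan, hF0, -⟩ := hman
  constructor
  · -- Part 1: T₀O and J T₀O are contained in T₀V.
    intro v hv
    have key : ∀ c : ℂ, (c • v) ∈ T0IntrCx I := by
      intro c
      simp only [T0IntrCx, Set.mem_setOf_eq]
      intro f hf hdep
      have hz : ∀ j : Fin n, MvPowerSeries.coeff (Finsupp.single (Sum.inr j) 1) f = 0 := by
        intro j
        apply hdep
        exact ⟨Sum.inr j, by simp, by simp⟩
      have h1 := hv f hf
      have h2 : (∑ j, (starRingEnd ℂ) (v j) *
          MvPowerSeries.coeff (Finsupp.single (Sum.inr j) 1) f) = 0 := by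
        apply Finset.sum_eq_zero
        intro j _
        rw [hz j, mul_zero]
      rw [h2, add_zero] at h1
      have h3 : ∑ j, (c • v) j * MvPowerSeries.coeff (Finsupp.single (Sum.inl j) 1) f
          = c * ∑ j, v j * MvPowerSeries.coeff (Finsupp.single (Sum.inl j) 1) f := by
        rw [Finset.mul_sum]
        apply Finset.sum_congr rfl
        intro j _
        simp only [Pi.smul_apply, smul_eq_mul]
        ring
      rw [h3, h1, mul_zero]
    constructor
    · have := key 1
      rwa [one_smul] at this
    · exact key Complex.I
  · -- Part 2: T₀V ⊆ T₀O + J T₀O.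
    intro w hw
    obtain ⟨K, gfam, hK, hmax⟩ := CRP.exists_maximal_delta I
    set q : Fin n → ℂ := CRP.qvec K gfam w with hq
    have hstar := CRP.part2_star hspan hF0 hsig hCR hK hmax hw
    have hstar2 := CRP.part2_star_conj hspan hF0 hsig hCR hK hmax hw
    refine ⟨fun j => (w j + (starRingEnd ℂ) (q j))/2,
      fun j => (-(Complex.I)/2) * (w j - (starRingEnd ℂ) (q j)), ?_, ?_, ?_⟩
    · simp only [T0Real, Set.mem_setOf_eq]
      intro f hf
      have e1 : (∑ j, ((w j + (starRingEnd ℂ) (q j))/2) *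
            MvPowerSeries.coeff (Finsupp.single (Sum.inl j) 1) f)
          = (1/2) * (∑ j, w j * MvPowerSeries.coeff (Finsupp.single (Sum.inl j) 1) f)
            + (1/2) * (∑ j, (starRingEnd ℂ) (q j) *
                MvPowerSeries.coeff (Finsupp.single (Sum.inl j) 1) f) := by
        rw [Finset.mul_sum, Finset.mul_sum, ← Finset.sum_add_distrib]
        apply Finset.sum_congr rfl
        intro j _
        ring
      have e2 : (∑ j, (starRingEnd ℂ) ((w j + (starRingEnd ℂ) (q j))/2) *
            MvPowerSeries.coeff (Finsupp.single (Sum.inr j) 1) f)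
          = (1/2) * (∑ j, (starRingEnd ℂ) (w j) *
              MvPowerSeries.coeff (Finsupp.single (Sum.inr j) 1) f)
            + (1/2) * (∑ j, q j *
                MvPowerSeries.coeff (Finsupp.single (Sum.inr j) 1) f) := by
        rw [Finset.mul_sum, Finset.mul_sum, ← Finset.sum_add_distrib]
        apply Finset.sum_congr rfl
        intro j _
        have : (starRingEnd ℂ) ((w j + (starRingEnd ℂ) (q j))/2)
            = ((starRingEnd ℂ) (w j) + q j)/2 := by
          rw [map_div₀, map_add, Complex.conj_conj, map_ofNat]
        rw [this]
        ring
      rw [e1, e2]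
      linear_combination (hstar f hf)/2 + (hstar2 f hf)/2
    · simp only [T0Real, Set.mem_setOf_eq]
      intro f hf
      have e1 : (∑ j, ((-(Complex.I)/2) * (w j - (starRingEnd ℂ) (q j))) *
            MvPowerSeries.coeff (Finsupp.single (Sum.inl j) 1) f)
          = (-(Complex.I)/2) * (∑ j, w j *
              MvPowerSeries.coeff (Finsupp.single (Sum.inl j) 1) f)
            + (Complex.I/2) * (∑ j, (starRingEnd ℂ) (q j) *
                MvPowerSeries.coeff (Finsupp.single (Sum.inl j) 1) f) := by
        rw [Finset.mul_sum, Finset.mul_sum, ← Finset.sum_add_distrib]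
        apply Finset.sum_congr rfl
        intro j _
        ring
      have e2 : (∑ j, (starRingEnd ℂ) ((-(Complex.I)/2) * (w j - (starRingEnd ℂ) (q j))) *
            MvPowerSeries.coeff (Finsupp.single (Sum.inr j) 1) f)
          = (Complex.I/2) * (∑ j, (starRingEnd ℂ) (w j) *
              MvPowerSeries.coeff (Finsupp.single (Sum.inr j) 1) f)
            + (-(Complex.I)/2) * (∑ j, q j *
                MvPowerSeries.coeff (Finsupp.single (Sum.inr j) 1) f) := by
        rw [Finset.mul_sum, Finset.mul_sum, ← Finset.sum_add_distrib]
        apply Finset.sum_congr rfl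
        intro j _
        have : (starRingEnd ℂ) ((-(Complex.I)/2) * (w j - (starRingEnd ℂ) (q j)))
            = (Complex.I/2) * ((starRingEnd ℂ) (w j) - q j) := by
          rw [map_mul, map_sub, Complex.conj_conj, map_div₀, map_neg, Complex.conj_I, map_ofNat]
          ring
        rw [this]
        ring
      rw [e1, e2]
      linear_combination (-(Complex.I)/2) * (hstar f hf) + (Complex.I/2) * (hstar2 f hf)
    · funext j
      simp only [Pi.add_apply, Pi.smul_apply, smul_eq_mul]
      linear_combination ((w j - (starRingEnd ℂ) (q j))/2) * Complex.I_sq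
end
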